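/- arXiv:2312.17152 — 7 statements merged into one kernel-verified Lean document; each statement's English description precedes it below -/
import Mathlib

section
/- Let A be an n×n Hermitian complex matrix whose entries all have absolute value at most 1, with zero diagonal, and such that A is the adjacency matrix of a complex unit gain graph on a connected graph G with at least one edge. Then for every vertex index i, the vertex energy E_A(v_i) := ((A A*)^{1/2})_{ii} satisfies E_A(v_i) ≥ d(v_i)/ρ(G), where d(v_i) is the degree of v_i in G and ρ(G) is the spectral radius of the (0,1)-adjacency matrix of G. -/
open Matrix BigOperators
open scoped ComplexOrder

/-- `A` is the (Hermitian) adjacency matrix of a complex unit gain graph on `G`: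
unit-modulus entries on edges, zero elsewhere (in particular zero diagonal and
all entries of absolute value at most 1). -/
def IsGainMatrix {n : ℕ} (G : SimpleGraph (Fin n)) (A : Matrix (Fin n) (Fin n) ℂ) : Prop :=
  A.IsHermitian ∧ (∀ i j, G.Adj i j → ‖A i j‖ = 1) ∧
    ∀ i j, ¬ G.Adj i j → A i j = 0

theorem adjMatrix_isHermitian {n : ℕ} (G : SimpleGraph (Fin n)) [DecidableRel G.Adj] :
    (G.adjMatrix ℝ).IsHermitian := by
  ext i j
  simp [Matrix.conjTranspose_apply, SimpleGraph.adj_comm]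

/-- The spectral radius of the underlying graph `G`, i.e. the largest eigenvalue of
its 0-1 adjacency matrix. -/
noncomputable def specRad {n : ℕ} (G : SimpleGraph (Fin n)) [DecidableRel G.Adj] : ℝ :=
  ⨆ i, (adjMatrix_isHermitian G).eigenvalues i

/-- The energy of the vertex `i`: the `(i,i)` entry of `(A Aᴴ)^(1/2)`. -/
noncomputable def vertexEnergy {n : ℕ} (A : Matrix (Fin n) (Fin n) ℂ) (i : Fin n) : ℝ :=
  (((Matrix.posSemidef_self_mul_conjTranspose A).1.eigenvectorUnitary.1 *
    diagonal (((↑) : ℝ → ℂ) ∘ Real.sqrt ∘ (Matrix.posSemidef_self_mul_conjTranspose A).1.eigenvalues) *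
    (star (Matrix.posSemidef_self_mul_conjTranspose A).1.eigenvectorUnitary :
      Matrix (Fin n) (Fin n) ℂ)) i i).re

section Aux
variable {𝕜 : Type*} [RCLike 𝕜] {n : ℕ}

/-- Quadratic form decomposition along the eigenbasis. -/
lemma quad_decomp (M : Matrix (Fin n) (Fin n) 𝕜) (hM : M.IsHermitian) (x : Fin n → 𝕜) :
    ∃ c : Fin n → ℝ, (∀ k, 0 ≤ c k) ∧
      RCLike.re (star x ⬝ᵥ (M *ᵥ x)) = ∑ k, hM.eigenvalues k * c k ∧
      RCLike.re (star x ⬝ᵥ x) = ∑ k, c k := by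
  set U : Matrix (Fin n) (Fin n) 𝕜 := (Matrix.IsHermitian.eigenvectorUnitary hM : Matrix (Fin n) (Fin n) 𝕜) with hU
  set z : Fin n → 𝕜 := Uᴴ *ᵥ x with hz
  have hsz : star z = star x ᵥ* U := by
    rw [hz, star_mulVec, conjTranspose_conjTranspose]
  have hUU : U * Uᴴ = 1 := by
    rw [← Matrix.star_eq_conjTranspose]
    exact (Matrix.mem_unitaryGroup_iff).mp (Matrix.IsHermitian.eigenvectorUnitary hM).2
  refine ⟨fun k => ‖z k‖ ^ 2, fun k => by positivity, ?_, ?_⟩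
  · have h1 : star x ⬝ᵥ (M *ᵥ x)
        = star z ⬝ᵥ (diagonal (RCLike.ofReal ∘ hM.eigenvalues) *ᵥ z) := by
      conv_lhs => rw [hM.spectral_theorem, Unitary.conjStarAlgAut_apply, Matrix.star_eq_conjTranspose, ← hU,
        ← mulVec_mulVec, ← mulVec_mulVec, dotProduct_mulVec]
      rw [hsz, hz]
    rw [h1, dotProduct]
    rw [map_sum]
    apply Finset.sum_congr rfl
    intro k _
    rw [mulVec_diagonal]
    simp only [Pi.star_apply, Function.comp_apply]
    rw [show star (z k) * ((RCLike.ofReal (hM.eigenvalues k) : 𝕜) * z k)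
        = (RCLike.ofReal (hM.eigenvalues k) : 𝕜) * (star (z k) * z k) by ring,
      RCLike.star_def, RCLike.conj_mul, ← RCLike.ofReal_pow, ← RCLike.ofReal_mul,
      RCLike.ofReal_re]
  · have h3 : star x ⬝ᵥ x = star z ⬝ᵥ z := by
      rw [hsz, hz, ← dotProduct_mulVec, mulVec_mulVec, hUU, one_mulVec]
    rw [h3, dotProduct, map_sum]
    apply Finset.sum_congr rfl
    intro k _
    simp only [Pi.star_apply]
    rw [RCLike.star_def, RCLike.conj_mul, ← RCLike.ofReal_pow, RCLike.ofReal_re]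

lemma quad_le (M : Matrix (Fin n) (Fin n) 𝕜) (hM : M.IsHermitian) (ρ : ℝ)
    (hρ : ∀ k, hM.eigenvalues k ≤ ρ) (x : Fin n → 𝕜) :
    RCLike.re (star x ⬝ᵥ (M *ᵥ x)) ≤ ρ * RCLike.re (star x ⬝ᵥ x) := by
  obtain ⟨c, hc, h1, h2⟩ := quad_decomp M hM x
  rw [h1, h2, Finset.mul_sum]
  exact Finset.sum_le_sum fun k _ => mul_le_mul_of_nonneg_right (hρ k) (hc k)

end Aux

section Real

variable {n : ℕ} (G : SimpleGraph (Fin n)) [DecidableRel G.Adj]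

lemma eigen_le_specRad (k : Fin n) : (adjMatrix_isHermitian G).eigenvalues k ≤ specRad G :=
  le_ciSup (Set.Finite.bddAbove (Set.finite_range _)) k

lemma adj_quad_le (y : Fin n → ℝ) :
    y ⬝ᵥ (G.adjMatrix ℝ *ᵥ y) ≤ specRad G * (y ⬝ᵥ y) := by
  have := quad_le (𝕜 := ℝ) (G.adjMatrix ℝ) (adjMatrix_isHermitian G) (specRad G)
    (eigen_le_specRad G) y
  simpa using this

lemma one_le_specRad (hedge : ∃ u v, G.Adj u v) : 1 ≤ specRad G := by
  obtain ⟨u, v, huv⟩ := hedge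
  have hne : u ≠ v := G.ne_of_adj huv
  set y : Fin n → ℝ := Pi.single u 1 + Pi.single v 1 with hy
  have hyy : y ⬝ᵥ y = 2 := by
    simp [hy, dotProduct_add, add_dotProduct, single_dotProduct, dotProduct_single,
      Pi.single_apply, hne, hne.symm]
    norm_num
  have hNy : y ⬝ᵥ (G.adjMatrix ℝ *ᵥ y) = 2 := by
    have : G.adjMatrix ℝ *ᵥ y = (fun p => G.adjMatrix ℝ p u) + fun p => G.adjMatrix ℝ p v := by
      simp [hy, mulVec_add, mulVec_single]
      ext p; simp [SimpleGraph.adjMatrix_apply]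
    rw [this]
    simp [hy, add_dotProduct, single_dotProduct, SimpleGraph.adjMatrix_apply, huv,
      G.adj_comm u v, hne, hne.symm, G.irrefl]
    norm_num [if_pos huv, if_pos huv.symm]
  have h := adj_quad_le G y
  rw [hyy, hNy] at h
  linarith

end Real

section Main

variable {n : ℕ}

lemma entry_re (U : Matrix (Fin n) (Fin n) ℂ) (f : Fin n → ℝ) (i : Fin n) :
    ((U * diagonal (Complex.ofReal ∘ f) * Uᴴ) i i).re = ∑ k, f k * Complex.normSq (U i k) := by
  rw [mul_apply, Complex.re_sum]
  apply Finset.sum_congr rfl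
  intro k _
  rw [mul_diagonal, conjTranspose_apply]
  simp only [Function.comp_apply, RingHom.id_apply]
  rw [show U i k * (f k : ℂ) * star (U i k) = (f k : ℂ) * (U i k * star (U i k)) by ring]
  rw [RCLike.star_def, Complex.mul_conj, ← Complex.ofReal_mul, Complex.ofReal_re]

theorem vertexEnergy_ge_degree_div_specRad {n : ℕ} (G : SimpleGraph (Fin n))
    [DecidableRel G.Adj] (A : Matrix (Fin n) (Fin n) ℂ) (hA : IsGainMatrix G A)
    (habs : ∀ i j, ‖A i j‖ ≤ 1) (hdiag : ∀ i, A i i = 0)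
    (hconn : G.Connected) (hedge : ∃ u v, G.Adj u v) :
    ∀ i : Fin n, (G.degree i : ℝ) / specRad G ≤ vertexEnergy A i := by
  intro i
  set ρ := specRad G with hρdef
  have hρ1 : 1 ≤ ρ := one_le_specRad G hedge
  have hρ0 : 0 < ρ := lt_of_lt_of_le one_pos hρ1
  have hH : A.IsHermitian := hA.1
  -- eigenvalue bound
  have habs_eq : ∀ p q, ‖A p q‖ = G.adjMatrix ℝ p q := by
    intro p q
    by_cases h : G.Adj p q
    · simp [SimpleGraph.adjMatrix_apply, h, hA.2.1 p q h]
    · simp [SimpleGraph.adjMatrix_apply, h, hA.2.2 p q h]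
  have heig : ∀ k, |hH.eigenvalues k| ≤ ρ := by
    intro k
    set x : Fin n → ℂ := ⇑(hH.eigenvectorBasis k) with hx
    set y : Fin n → ℝ := fun p => ‖x p‖ with hy
    have hnorm : ∑ p, y p * y p = 1 := by
      have h1 : ‖hH.eigenvectorBasis k‖ = 1 := hH.eigenvectorBasis.orthonormal.1 k
      have h2 : ‖hH.eigenvectorBasis k‖ ^ 2 = ∑ p, ‖x p‖ ^ 2 := by
        rw [EuclideanSpace.norm_eq, Real.sq_sqrt (by positivity)]
      have : ∑ p, ‖x p‖ ^ 2 = 1 := by rw [← h2, h1, one_pow]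
      simpa [hy, pow_two] using this
    have h1 : hH.eigenvalues k = (star x ⬝ᵥ (A *ᵥ x)).re := by
      have := hH.eigenvalues_eq k
      simpa using this
    have h2 : ‖star x ⬝ᵥ (A *ᵥ x)‖ ≤ y ⬝ᵥ (G.adjMatrix ℝ *ᵥ y) := by
      rw [dotProduct]
      calc ‖∑ p, star x p * (A *ᵥ x) p‖
          ≤ ∑ p, ‖star x p * (A *ᵥ x) p‖ := norm_sum_le _ _
        _ ≤ ∑ p, y p * ((G.adjMatrix ℝ *ᵥ y) p) := ?_
        _ = y ⬝ᵥ (G.adjMatrix ℝ *ᵥ y) := rfl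
      apply Finset.sum_le_sum
      intro p _
      rw [norm_mul]
      simp only [Pi.star_apply, RCLike.star_def, Complex.norm_conj]
      apply mul_le_mul_of_nonneg_left _ (norm_nonneg _)
      rw [mulVec, dotProduct, mulVec, dotProduct]
      calc ‖∑ q, A p q * x q‖
          ≤ ∑ q, ‖A p q * x q‖ := norm_sum_le _ _
        _ = ∑ q, G.adjMatrix ℝ p q * y q := by
            apply Finset.sum_congr rfl; intro q _
            rw [norm_mul, habs_eq]
    have h3 := adj_quad_le G y
    have h4 : y ⬝ᵥ y = 1 := hnorm
    rw [h4, mul_one] at h3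
    calc |hH.eigenvalues k| = |(star x ⬝ᵥ (A *ᵥ x)).re| := by rw [h1]
      _ ≤ ‖star x ⬝ᵥ (A *ᵥ x)‖ := Complex.abs_re_le_norm _
      _ ≤ y ⬝ᵥ (G.adjMatrix ℝ *ᵥ y) := h2
      _ ≤ ρ := h3
  -- spectral data
  set U : Matrix (Fin n) (Fin n) ℂ := (Matrix.IsHermitian.eigenvectorUnitary hH : Matrix (Fin n) (Fin n) ℂ) with hU
  set μ : Fin n → ℝ := hH.eigenvalues with hμ
  have hUU' : Uᴴ * U = 1 := by
    rw [← Matrix.star_eq_conjTranspose]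
    exact (Matrix.mem_unitaryGroup_iff').mp (Matrix.IsHermitian.eigenvectorUnitary hH).2
  have hspec : A = U * diagonal (Complex.ofReal ∘ μ) * Uᴴ := by
    have := hH.spectral_theorem
    rw [Unitary.conjStarAlgAut_apply, Matrix.star_eq_conjTranspose] at this
    exact this
  set B : Matrix (Fin n) (Fin n) ℂ := U * diagonal (Complex.ofReal ∘ fun k => |μ k|) * Uᴴ with hB
  have hBpsd : B.PosSemidef := by
    apply Matrix.PosSemidef.mul_mul_conjTranspose_same
    refine Matrix.posSemidef_diagonal_iff.mpr fun k => ?_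
    simp only [Function.comp_apply]
    exact_mod_cast Complex.zero_le_real.mpr (abs_nonneg _)
  have habsmul : (fun k => (Complex.ofReal ∘ fun k => |μ k|) k * (Complex.ofReal ∘ fun k => |μ k|) k)
      = Complex.ofReal ∘ fun k => μ k * μ k := by
    funext k
    simp only [Function.comp_apply, ← Complex.ofReal_mul, abs_mul_abs_self]
  have hmumul : (fun k => (Complex.ofReal ∘ μ) k * (Complex.ofReal ∘ μ) k)
      = Complex.ofReal ∘ fun k => μ k * μ k := by
    funext k
    simp only [Function.comp_apply, ← Complex.ofReal_mul]
  have hBB : B * B = A * Aᴴ := by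
    rw [hH.eq]  -- Aᴴ = A
    rw [hB, hspec]
    rw [show ∀ (M N P Q R S : Matrix (Fin n) (Fin n) ℂ), (M * N * P) * (Q * R * S)
        = M * (N * ((P * Q) * R)) * S by intros; noncomm_ring,
      show ∀ (M N P Q R S : Matrix (Fin n) (Fin n) ℂ), (M * N * P) * (Q * R * S)
        = M * (N * ((P * Q) * R)) * S by intros; noncomm_ring]
    rw [hUU', one_mul, one_mul, diagonal_mul_diagonal, diagonal_mul_diagonal,
      habsmul, hmumul]
  have hsqrt : B = (Matrix.posSemidef_self_mul_conjTranspose A).1.eigenvectorUnitary.1 *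
      diagonal (((↑) : ℝ → ℂ) ∘ Real.sqrt ∘ (Matrix.posSemidef_self_mul_conjTranspose A).1.eigenvalues) *
      (star (Matrix.posSemidef_self_mul_conjTranspose A).1.eigenvectorUnitary :
        Matrix (Fin n) (Fin n) ℂ) := by
    have hP := Matrix.posSemidef_self_mul_conjTranspose A
    open scoped MatrixOrder in
    have h1 : CFC.sqrt (A * Aᴴ) = B :=
      CFC.sqrt_unique hBB (Matrix.nonneg_iff_posSemidef.mpr hBpsd)
    open scoped MatrixOrder in
    rw [← h1, CFC.sqrt_eq_cfc, cfc_nnreal_eq_real _ _ (Matrix.nonneg_iff_posSemidef.mpr hP),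
      hP.1.cfc_eq, IsHermitian.cfc, Unitary.conjStarAlgAut_apply]
    congr 3
    funext k
    simp [hP.eigenvalues_nonneg k]
  have hE : vertexEnergy A i = ∑ k, |μ k| * Complex.normSq (U i k) := by
    rw [vertexEnergy, ← hsqrt, hB, entry_re]
  have hAA : A * Aᴴ = U * diagonal (Complex.ofReal ∘ fun k => μ k * μ k) * Uᴴ := by
    rw [← hBB, hB]
    rw [show ∀ (M N P Q R S : Matrix (Fin n) (Fin n) ℂ), (M * N * P) * (Q * R * S)
        = M * (N * ((P * Q) * R)) * S by intros; noncomm_ring]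
    rw [hUU', one_mul, diagonal_mul_diagonal, habsmul]
  have hdeg : (G.degree i : ℝ) = ∑ k, (μ k * μ k) * Complex.normSq (U i k) := by
    have hd1 : ((A * Aᴴ) i i).re = ∑ k, (μ k * μ k) * Complex.normSq (U i k) := by
      rw [hAA, entry_re]
    have hd2 : ((A * Aᴴ) i i).re = (G.degree i : ℝ) := by
      rw [mul_apply, Complex.re_sum]
      have : ∀ j, (A i j * Aᴴ j i).re = G.adjMatrix ℝ i j := by
        intro j
        rw [conjTranspose_apply, RCLike.star_def, Complex.mul_conj, Complex.ofReal_re]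
        rw [← habs_eq i j]
        rcases eq_or_ne (‖A i j‖) 0 with h | h
        · simp [Complex.normSq_eq_norm_sq, h]
        · rw [Complex.normSq_eq_norm_sq, habs_eq]
          by_cases hadj : G.Adj i j
          · simp [SimpleGraph.adjMatrix_apply, hadj]
          · simp [SimpleGraph.adjMatrix_apply, hadj]
      rw [Finset.sum_congr rfl fun j _ => this j]
      have h := SimpleGraph.adjMatrix_mulVec_const_apply (G := G) (α := ℝ) (a := 1) (v := i)
      simpa only [mulVec, dotProduct, Function.const_apply, mul_one] using h
    rw [← hd1, hd2]
  -- final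
  rw [div_le_iff₀ hρ0, hE, Finset.sum_mul, hdeg]
  apply Finset.sum_le_sum
  intro k _
  rw [show |μ k| * Complex.normSq (U i k) * ρ = (|μ k| * ρ) * Complex.normSq (U i k) by ring]
  apply mul_le_mul_of_nonneg_right _ (Complex.normSq_nonneg _)
  calc μ k * μ k = |μ k| * |μ k| := (abs_mul_abs_self _).symm
    _ ≤ |μ k| * ρ := mul_le_mul_of_nonneg_left (heig k) (abs_nonneg _)

end Main
end

section
/- Let Φ = (G, φ) be a complex unit gain graph on a connected simple graph G with m edges. Then the energy of Φ (the sum of absolute values of the eigenvalues of the Hermitian matrix A(Φ)) satisfies E(Φ) ≥ 2m/ρ(G), where ρ(G) is the spectral radius of the adjacency matrix of G. -/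
open Matrix BigOperators

/-- The energy of a Hermitian matrix: the sum of the absolute values of its eigenvalues. -/
noncomputable def energy {n : ℕ} {A : Matrix (Fin n) (Fin n) ℂ} (hA : A.IsHermitian) : ℝ :=
  ∑ i, |hA.eigenvalues i|


lemma rayleigh_aux {n : ℕ} (lam : Fin n → ℝ) (U : Matrix (Fin n) (Fin n) ℝ)
    (hUU : U * Uᵀ = 1) (x : Fin n → ℝ) :
    x ⬝ᵥ ((U * diagonal lam * Uᵀ) *ᵥ x) ≤ (⨆ i, lam i) * (x ⬝ᵥ x) := by
  classical
  set y : Fin n → ℝ := Uᵀ *ᵥ x with hy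
  have hxy : x ⬝ᵥ ((U * diagonal lam * Uᵀ) *ᵥ x) = ∑ i, lam i * (y i)^2 := by
    rw [← mulVec_mulVec, ← mulVec_mulVec, dotProduct_mulVec x U _, ← Matrix.mulVec_transpose,
      ← hy]
    simp [dotProduct, mulVec_diagonal]
    exact Finset.sum_congr rfl fun i _ => by ring
  have hxx : x ⬝ᵥ x = ∑ i, (y i)^2 := by
    have : y ⬝ᵥ y = x ⬝ᵥ x := by
      rw [hy, dotProduct_mulVec, ← Matrix.mulVec_transpose, Matrix.transpose_transpose,
        mulVec_mulVec, hUU, one_mulVec]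
    rw [← this]
    simp [dotProduct, sq]
  rw [hxy, hxx, Finset.mul_sum]
  rcases isEmpty_or_nonempty (Fin n) with h | h
  · simp
  · refine Finset.sum_le_sum fun i _ => ?_
    exact mul_le_mul_of_nonneg_right (le_ciSup (Set.Finite.bddAbove (Set.finite_range lam)) i)
      (sq_nonneg _)

lemma rayleigh_le {n : ℕ} {B : Matrix (Fin n) (Fin n) ℝ} (hB : B.IsHermitian) (x : Fin n → ℝ) :
    x ⬝ᵥ (B *ᵥ x) ≤ (⨆ i, hB.eigenvalues i) * (x ⬝ᵥ x) := by
  set U : Matrix (Fin n) (Fin n) ℝ := (hB.eigenvectorUnitary : Matrix (Fin n) (Fin n) ℝ) with hU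
  have hUU : U * Uᵀ = 1 := by
    have := (Matrix.mem_unitaryGroup_iff).mp hB.eigenvectorUnitary.2
    rwa [show star U = Uᵀ from Matrix.conjTranspose_eq_transpose_of_trivial U] at this
  have hspec : B = U * diagonal hB.eigenvalues * Uᵀ := by
    have h := hB.spectral_theorem
    rw [Unitary.conjStarAlgAut_apply, ← hU,
      show star U = Uᵀ from Matrix.conjTranspose_eq_transpose_of_trivial U] at h
    simpa using h
  have key : x ⬝ᵥ (B *ᵥ x) = x ⬝ᵥ ((U * diagonal hB.eigenvalues * Uᵀ) *ᵥ x) := by rw [← hspec]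
  rw [key]
  exact rayleigh_aux _ U hUU x

lemma sumsq_aux {n : ℕ} (lam : Fin n → ℝ) (U A : Matrix (Fin n) (Fin n) ℂ)
    (hUU : Uᴴ * U = 1)
    (hspec : A = U * diagonal (fun i => (lam i : ℂ)) * Uᴴ) :
    ∑ i, lam i ^ 2 = ∑ p, ∑ q, ‖A p q‖ ^ 2 := by
  set D : Matrix (Fin n) (Fin n) ℂ := diagonal (fun i => (lam i : ℂ)) with hD
  have cancel : ∀ X : Matrix (Fin n) (Fin n) ℂ, Uᴴ * (U * X) = X := fun X => by
    rw [← Matrix.mul_assoc, hUU, Matrix.one_mul]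
  have hfun : (star fun i => ((lam i : ℝ) : ℂ)) = (fun i => ((lam i : ℝ) : ℂ)) := by
    funext i
    simp [Pi.star_apply, Complex.conj_ofReal]
  have hDstar : Dᴴ = D := by rw [hD, diagonal_conjTranspose, hfun]
  have hDD : D * D = diagonal (fun i => ((lam i : ℂ))^2) := by
    rw [hD, diagonal_mul_diagonal]
    congr 1
    funext i
    ring
  have hAA : Aᴴ * A = U * (diagonal (fun i => ((lam i : ℂ))^2) * Uᴴ) := by
    rw [hspec, conjTranspose_mul, conjTranspose_mul, conjTranspose_conjTranspose, hDstar]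
    calc U * (D * Uᴴ) * (U * D * Uᴴ)
        = U * (D * (Uᴴ * (U * (D * Uᴴ)))) := by simp only [Matrix.mul_assoc]
      _ = U * (D * (D * Uᴴ)) := by rw [cancel]
      _ = U * (diagonal (fun i => ((lam i : ℂ))^2) * Uᴴ) := by
          rw [← Matrix.mul_assoc D, hDD]
  have h1 : (Aᴴ * A).trace = ∑ i, ((lam i : ℂ))^2 := by
    rw [hAA, Matrix.trace_mul_comm, Matrix.mul_assoc, hUU, Matrix.mul_one,
      Matrix.trace_diagonal]
  have h2 : (Aᴴ * A).trace = ((∑ p, ∑ q, ‖A q p‖ ^ 2 : ℝ) : ℂ) := by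
    rw [Matrix.trace]
    push_cast
    refine Finset.sum_congr rfl fun p _ => ?_
    rw [Matrix.diag, Matrix.mul_apply]
    refine Finset.sum_congr rfl fun q _ => ?_
    rw [Matrix.conjTranspose_apply, Complex.star_def, mul_comm, Complex.mul_conj,
      ← Complex.sq_norm]
    push_cast
    ring
  have h3 : ∑ i, lam i ^ 2 = ∑ p, ∑ q, ‖A q p‖ ^ 2 := by
    exact_mod_cast h1.symm.trans h2
  rw [h3]
  exact Finset.sum_comm

lemma sum_sq_eigenvalues {n : ℕ} {A : Matrix (Fin n) (Fin n) ℂ} (hA : A.IsHermitian) :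
    ∑ i, hA.eigenvalues i ^ 2 = ∑ p, ∑ q, ‖A p q‖ ^ 2 := by
  refine sumsq_aux hA.eigenvalues _ A ((Matrix.mem_unitaryGroup_iff').mp hA.eigenvectorUnitary.2) ?_
  simpa [Function.comp_def, Matrix.star_eq_conjTranspose] using hA.spectral_theorem




lemma gain_abs {n : ℕ} {G : SimpleGraph (Fin n)} [DecidableRel G.Adj]
    {A : Matrix (Fin n) (Fin n) ℂ} (hA : IsGainMatrix G A) (p q : Fin n) :
    ‖A p q‖ = G.adjMatrix ℝ p q := by
  by_cases h : G.Adj p q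
  · simp [hA.2.1 p q h, h]
  · simp [hA.2.2 p q h, h]

lemma abs_eigenvalue_le {n : ℕ} (G : SimpleGraph (Fin n)) [DecidableRel G.Adj]
    {A : Matrix (Fin n) (Fin n) ℂ} (hA : IsGainMatrix G A) (i : Fin n) :
    |hA.1.eigenvalues i| ≤ specRad G := by
  classical
  set lam := hA.1.eigenvalues i with hlam
  set v : Fin n → ℂ := ⇑(hA.1.eigenvectorBasis i) with hv
  have hAv : A *ᵥ v = lam • v := hA.1.mulVec_eigenvectorBasis i
  set w : Fin n → ℝ := fun p => ‖v p‖ with hw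
  have hwnn : ∀ p, 0 ≤ w p := fun p => norm_nonneg _
  have hnorm : ∑ p, w p ^ 2 = 1 := by
    have h1 : ‖hA.1.eigenvectorBasis i‖ = 1 := hA.1.eigenvectorBasis.orthonormal.1 i
    have h2 : ‖hA.1.eigenvectorBasis i‖ = Real.sqrt (∑ p, ‖v p‖ ^ 2) :=
      EuclideanSpace.norm_eq _
    rw [h1] at h2
    have h3 : ∑ p, ‖v p‖ ^ 2 = 1 := by
      have := congrArg (· ^ 2) h2.symm
      simpa [Real.sq_sqrt (Finset.sum_nonneg fun p _ => sq_nonneg _)] using this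
    simpa [hw] using h3
  have hentry : ∀ p, |lam| * w p ≤ (G.adjMatrix ℝ *ᵥ w) p := by
    intro p
    have h1 : |lam| * w p = ‖(A *ᵥ v) p‖ := by
      rw [hAv]
      simp only [hw, Pi.smul_apply, Complex.real_smul, norm_mul, Complex.norm_real, Real.norm_eq_abs]
    rw [h1]
    show ‖∑ q, A p q * v q‖ ≤ ∑ q, G.adjMatrix ℝ p q * w q
    refine le_trans (norm_sum_le _ _) ?_
    refine le_of_eq (Finset.sum_congr rfl fun q _ => ?_)
    rw [norm_mul, gain_abs hA p q]
  have hsum : |lam| ≤ w ⬝ᵥ (G.adjMatrix ℝ *ᵥ w) := by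
    calc |lam| = ∑ p, (|lam| * w p) * w p := by
          rw [show ∑ p, (|lam| * w p) * w p = |lam| * ∑ p, w p ^ 2 by
            rw [Finset.mul_sum]; exact Finset.sum_congr rfl fun p _ => by ring, hnorm, mul_one]
      _ ≤ ∑ p, (G.adjMatrix ℝ *ᵥ w) p * w p :=
          Finset.sum_le_sum fun p _ => mul_le_mul_of_nonneg_right (hentry p) (hwnn p)
      _ = w ⬝ᵥ (G.adjMatrix ℝ *ᵥ w) := by
          rw [dotProduct]
          exact Finset.sum_congr rfl fun p _ => by ring
  have hray := rayleigh_le (adjMatrix_isHermitian G) w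
  have hww : w ⬝ᵥ w = 1 := by
    rw [dotProduct, ← hnorm]
    exact Finset.sum_congr rfl fun p _ => by ring
  rw [hww, mul_one] at hray
  exact le_trans hsum hray

theorem main_aux {n : ℕ} (G : SimpleGraph (Fin n)) [DecidableRel G.Adj]
    (A : Matrix (Fin n) (Fin n) ℂ) (hA : IsGainMatrix G A) (hconn : G.Connected) :
    (2 * G.edgeFinset.card : ℝ) / specRad G ≤ ∑ i, |hA.1.eigenvalues i| := by
  classical
  haveI : Nonempty (Fin n) := hconn.nonempty
  have hρ0 : 0 ≤ specRad G :=
    le_trans (abs_nonneg _) (abs_eigenvalue_le G hA (Classical.arbitrary _))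
  have hm : (2 * G.edgeFinset.card : ℝ) = ∑ p, ∑ q, ‖A p q‖ ^ 2 := by
    have habs : ∀ p q, ‖A p q‖ ^ 2 = G.adjMatrix ℝ p q := by
      intro p q; rw [gain_abs hA]; by_cases h : G.Adj p q <;> simp [h]
    simp only [habs]
    have hdeg : ∀ p : Fin n, ∑ q, G.adjMatrix ℝ p q = (G.degree p : ℝ) := by
      intro p
      have h := SimpleGraph.adjMatrix_mulVec_const_apply (G := G) (α := ℝ) (a := 1) (v := p)
      simpa [Matrix.mulVec, dotProduct] using h
    simp only [hdeg]
    rw [← Nat.cast_sum]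
    rw [G.sum_degrees_eq_twice_card_edges]
    push_cast
    ring
  have key : (2 * G.edgeFinset.card : ℝ) ≤ specRad G * ∑ i, |hA.1.eigenvalues i| := by
    rw [hm, ← sum_sq_eigenvalues hA.1]
    calc ∑ i, hA.1.eigenvalues i ^ 2 = ∑ i, |hA.1.eigenvalues i| * |hA.1.eigenvalues i| := by
          refine Finset.sum_congr rfl fun i _ => ?_
          rw [← sq_abs, sq]
      _ ≤ ∑ i, specRad G * |hA.1.eigenvalues i| :=
          Finset.sum_le_sum fun i _ =>
            mul_le_mul_of_nonneg_right (abs_eigenvalue_le G hA i) (abs_nonneg _)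
      _ = specRad G * ∑ i, |hA.1.eigenvalues i| := (Finset.mul_sum _ _ _).symm
  rcases eq_or_lt_of_le hρ0 with h0 | hpos
  · have h2m : (2 * G.edgeFinset.card : ℝ) = 0 := by
      refine le_antisymm ?_ (by positivity)
      calc (2 * G.edgeFinset.card : ℝ) ≤ specRad G * ∑ i, |hA.1.eigenvalues i| := key
        _ = 0 := by rw [← h0, zero_mul]
    rw [h2m, zero_div]
    exact Finset.sum_nonneg fun i _ => abs_nonneg _
  · rw [div_le_iff₀ hpos]
    calc (2 * G.edgeFinset.card : ℝ) ≤ specRad G * ∑ i, |hA.1.eigenvalues i| := key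
      _ = (∑ i, |hA.1.eigenvalues i|) * specRad G := mul_comm _ _

theorem energy_ge_two_mul_card_edges_div_specRad {n : ℕ} (G : SimpleGraph (Fin n))
    [DecidableRel G.Adj] (A : Matrix (Fin n) (Fin n) ℂ) (hA : IsGainMatrix G A)
    (hconn : G.Connected) :
    (2 * G.edgeFinset.card : ℝ) / specRad G ≤ energy hA.1 := by
  unfold energy
  exact main_aux G A hA hconn
end

section
/- Let Φ = (G, φ) be a complex unit gain graph on a connected triangle-free simple graph G with minimum vertex degree δ. Then the energy E(Φ) = Σ|λ_i(A(Φ))| satisfies E(Φ) ≥ 2δ. -/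
set_option maxHeartbeats 1000000

open Matrix BigOperators Finset

/-- Cauchy–Schwarz for real sums, square-root form. -/
lemma my_cs {ι : Type*} (s : Finset ι) (f g : ι → ℝ) :
    ∑ i ∈ s, f i * g i ≤ Real.sqrt (∑ i ∈ s, f i ^ 2) * Real.sqrt (∑ i ∈ s, g i ^ 2) := by
  calc ∑ i ∈ s, f i * g i ≤ |∑ i ∈ s, f i * g i| := le_abs_self _
    _ = Real.sqrt ((∑ i ∈ s, f i * g i) ^ 2) := (Real.sqrt_sq_eq_abs _).symm
    _ ≤ Real.sqrt ((∑ i ∈ s, f i ^ 2) * ∑ i ∈ s, g i ^ 2) :=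
        Real.sqrt_le_sqrt (Finset.sum_mul_sq_le_sq_mul_sq s f g)
    _ = _ := Real.sqrt_mul (Finset.sum_nonneg fun i _ => sq_nonneg _) _

/-- Cauchy–Schwarz for complex sums, norm form. -/
lemma my_cs_complex {ι : Type*} (s : Finset ι) (f g : ι → ℂ) :
    ‖∑ i ∈ s, f i * g i‖ ≤ Real.sqrt (∑ i ∈ s, ‖f i‖ ^ 2) * Real.sqrt (∑ i ∈ s, ‖g i‖ ^ 2) := by
  calc ‖∑ i ∈ s, f i * g i‖ ≤ ∑ i ∈ s, ‖f i‖ * ‖g i‖ :=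
        (norm_sum_le _ _).trans (le_of_eq (Finset.sum_congr rfl fun i _ => norm_mul _ _))
    _ ≤ _ := my_cs s _ _

/-- Bilinear block bound. -/
lemma my_block_bound {n : ℕ} (T1 T2 : Finset (Fin n)) (B : Matrix (Fin n) (Fin n) ℂ)
    (v : Fin n → ℂ) :
    ‖∑ k ∈ T1, ∑ j ∈ T2, (starRingEnd ℂ) (v k) * B k j * v j‖ ≤
      Real.sqrt (∑ k ∈ T1, ∑ j ∈ T2, ‖B k j‖ ^ 2) *
        (Real.sqrt (∑ k ∈ T1, ‖v k‖ ^ 2) * Real.sqrt (∑ j ∈ T2, ‖v j‖ ^ 2)) := by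
  set b := Real.sqrt (∑ j ∈ T2, ‖v j‖ ^ 2) with hbdef
  have hb : 0 ≤ b := Real.sqrt_nonneg _
  calc ‖∑ k ∈ T1, ∑ j ∈ T2, (starRingEnd ℂ) (v k) * B k j * v j‖
      = ‖∑ k ∈ T1, (starRingEnd ℂ) (v k) * ∑ j ∈ T2, B k j * v j‖ := by
        congr 1
        refine Finset.sum_congr rfl fun k _ => ?_
        rw [Finset.mul_sum]
        exact Finset.sum_congr rfl fun j _ => (mul_assoc _ _ _)
    _ ≤ ∑ k ∈ T1, ‖(starRingEnd ℂ) (v k)‖ * ‖∑ j ∈ T2, B k j * v j‖ :=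
        (norm_sum_le _ _).trans (le_of_eq (Finset.sum_congr rfl fun k _ => norm_mul _ _))
    _ ≤ ∑ k ∈ T1, ‖v k‖ * (Real.sqrt (∑ j ∈ T2, ‖B k j‖ ^ 2) * b) := by
        refine Finset.sum_le_sum fun k _ => ?_
        rw [RCLike.norm_conj]
        exact mul_le_mul_of_nonneg_left (my_cs_complex _ _ _) (norm_nonneg _)
    _ = (∑ k ∈ T1, ‖v k‖ * Real.sqrt (∑ j ∈ T2, ‖B k j‖ ^ 2)) * b := by
        rw [Finset.sum_mul]
        exact Finset.sum_congr rfl fun k _ => (mul_assoc _ _ _).symm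
    _ ≤ (Real.sqrt (∑ k ∈ T1, ‖v k‖ ^ 2) *
          Real.sqrt (∑ k ∈ T1, (Real.sqrt (∑ j ∈ T2, ‖B k j‖ ^ 2)) ^ 2)) * b :=
        mul_le_mul_of_nonneg_right (my_cs _ _ _) hb
    _ = _ := by
        rw [show (∑ k ∈ T1, (Real.sqrt (∑ j ∈ T2, ‖B k j‖ ^ 2)) ^ 2)
            = ∑ k ∈ T1, ∑ j ∈ T2, ‖B k j‖ ^ 2 from Finset.sum_congr rfl fun k _ =>
              Real.sq_sqrt (Finset.sum_nonneg fun j _ => sq_nonneg _)]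
        ring

theorem energy_ge_two_minDegree_of_triangleFree {n : ℕ} (G : SimpleGraph (Fin n))
    [DecidableRel G.Adj] (A : Matrix (Fin n) (Fin n) ℂ) (hA : IsGainMatrix G A)
    (hconn : G.Connected) (htf : G.CliqueFree 3) :
    (2 * G.minDegree : ℝ) ≤ energy hA.1 := by
  classical
  have hH : A.IsHermitian := hA.1
  have hadj := hA.2.1
  have hnadj := hA.2.2
  have henergy_nonneg : 0 ≤ energy hA.1 := Finset.sum_nonneg fun i _ => abs_nonneg _
  by_cases hδ0 : G.minDegree = 0
  · rw [hδ0]; simpa using henergy_nonneg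
  haveI : Nonempty (Fin n) := hconn.nonempty
  obtain ⟨u, hu⟩ := G.exists_minimal_degree_vertex
  set S : Finset (Fin n) := G.neighborFinset u with hSdef
  -- no edges inside S
  have hSadj : ∀ s ∈ S, ∀ t, G.Adj s t → t ∉ S := by
    intro s hs t hst ht
    rw [hSdef, SimpleGraph.mem_neighborFinset] at hs ht
    exact htf {u, s, t} (SimpleGraph.is3Clique_triple_iff.2 ⟨hs, ht, hst⟩)
  -- row sums
  have hrow : ∀ s ∈ S, ∑ t ∈ Sᶜ, ‖A s t‖ ^ 2 = (G.degree s : ℝ) := by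
    intro s hs
    have h1 : ∀ t ∈ Sᶜ, ‖A s t‖ ^ 2 = if G.Adj s t then (1 : ℝ) else 0 := by
      intro t _
      by_cases h : G.Adj s t
      · simp [h, hadj s t h]
      · simp [h, hnadj s t h]
    rw [Finset.sum_congr rfl h1, Finset.sum_boole]
    have : Sᶜ.filter (fun t => G.Adj s t) = G.neighborFinset s := by
      ext t
      simp only [Finset.mem_filter, Finset.mem_compl, SimpleGraph.mem_neighborFinset]
      exact ⟨fun h => h.2, fun h => ⟨hSadj s hs t h, h⟩⟩
    rw [this]
    rfl
  -- total cross Frobenius mass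
  set F2 : ℝ := ∑ s ∈ S, ∑ t ∈ Sᶜ, ‖A s t‖ ^ 2 with hF2def
  have hF2nonneg : 0 ≤ F2 :=
    Finset.sum_nonneg fun s _ => Finset.sum_nonneg fun t _ => sq_nonneg _
  have hδpos : 0 < G.minDegree := Nat.pos_of_ne_zero hδ0
  have hF2ge : (G.minDegree : ℝ) ^ 2 ≤ F2 := by
    have h1 : ∀ s ∈ S, (G.minDegree : ℝ) ≤ ∑ t ∈ Sᶜ, ‖A s t‖ ^ 2 := by
      intro s hs
      rw [hrow s hs]
      exact_mod_cast G.minDegree_le_degree s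
    calc (G.minDegree : ℝ) ^ 2 = (G.degree u : ℝ) * G.minDegree := by
          rw [← hu]; ring
      _ = ∑ _s ∈ S, (G.minDegree : ℝ) := by
          rw [Finset.sum_const, nsmul_eq_mul]
          congr 1
      _ ≤ F2 := Finset.sum_le_sum h1
  have hsqrtF2 : (G.minDegree : ℝ) ≤ Real.sqrt F2 := by
    rw [Real.le_sqrt (by positivity) hF2nonneg]
    exact hF2ge
  have hsqrtF2pos : 0 < Real.sqrt F2 :=
    lt_of_lt_of_le (by exact_mod_cast hδpos) hsqrtF2
  -- hermitian symmetry of entries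
  have hherm : ∀ p q : Fin n, A q p = (starRingEnd ℂ) (A p q) := by
    intro p q
    have := hH.apply q p
    rw [← this]
    simp
  have hnormsymm : ∀ p q : Fin n, ‖A p q‖ = ‖A q p‖ := by
    intro p q; rw [hherm p q]; simp
  -- the mask matrix
  set M : Matrix (Fin n) (Fin n) ℂ :=
    Matrix.of (fun p q => if (p ∈ S ∧ q ∈ Sᶜ) ∨ (p ∈ Sᶜ ∧ q ∈ S) then A p q else 0) with hMdef
  have hM_SS : ∀ p ∈ S, ∀ q ∈ S, M p q = 0 := by
    intro p hp q hq
    simp only [hMdef, Matrix.of_apply, Finset.mem_compl, ite_eq_right_iff]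
    intro h
    rcases h with ⟨_, h2⟩ | ⟨h1, _⟩
    · exact absurd hq h2
    · exact absurd hp h1
  have hM_CC : ∀ p ∈ Sᶜ, ∀ q ∈ Sᶜ, M p q = 0 := by
    intro p hp q hq
    rw [Finset.mem_compl] at hp hq
    simp only [hMdef, Matrix.of_apply, Finset.mem_compl, ite_eq_right_iff]
    intro h
    rcases h with ⟨h1, _⟩ | ⟨_, h2⟩
    · exact absurd h1 hp
    · exact absurd h2 hq
  have hM_SC : ∀ p ∈ S, ∀ q ∈ Sᶜ, M p q = A p q := by
    intro p hp q hq
    simp only [hMdef, Matrix.of_apply]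
    rw [if_pos (Or.inl ⟨hp, hq⟩)]
  have hM_CS : ∀ p ∈ Sᶜ, ∀ q ∈ S, M p q = A p q := by
    intro p hp q hq
    simp only [hMdef, Matrix.of_apply]
    rw [if_pos (Or.inr ⟨hp, hq⟩)]
  -- the trace quantity
  set Q : ℂ := ∑ j, ∑ k, A j k * M k j with hQdef
  -- step 1 : Q = 2 * F2
  have habs2 : ∀ p q : Fin n, A p q * A q p = ((‖A p q‖ ^ 2 : ℝ) : ℂ) := by
    intro p q
    rw [hherm p q, Complex.mul_conj]
    norm_cast
    simp [Complex.normSq_eq_norm_sq]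
  have hQval : Q = ((2 * F2 : ℝ) : ℂ) := by
    have key : Q = ∑ j ∈ S, ∑ k ∈ Sᶜ, A j k * M k j + ∑ j ∈ Sᶜ, ∑ k ∈ S, A j k * M k j := by
      rw [hQdef, ← Finset.sum_add_sum_compl S (fun j => ∑ k, A j k * M k j)]
      congr 1
      · refine Finset.sum_congr rfl fun j hj => ?_
        rw [← Finset.sum_add_sum_compl S (fun k => A j k * M k j)]
        rw [Finset.sum_eq_zero fun k hk => by rw [hM_SS k hk j hj, mul_zero], zero_add]
      · refine Finset.sum_congr rfl fun j hj => ?_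
        rw [← Finset.sum_add_sum_compl S (fun k => A j k * M k j)]
        rw [show ∑ k ∈ Sᶜ, A j k * M k j = 0 from
          Finset.sum_eq_zero fun k hk => by rw [hM_CC k hk j hj, mul_zero], add_zero]
    have hblock1 : ∑ j ∈ S, ∑ k ∈ Sᶜ, A j k * M k j = ((F2 : ℝ) : ℂ) := by
      have : ∑ j ∈ S, ∑ k ∈ Sᶜ, A j k * M k j
          = ∑ j ∈ S, ∑ k ∈ Sᶜ, ((‖A j k‖ ^ 2 : ℝ) : ℂ) :=
        Finset.sum_congr rfl fun j hj => Finset.sum_congr rfl fun k hk => by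
          rw [hM_CS k hk j hj, habs2 j k]
      rw [this, hF2def]
      norm_cast
    have hblock2 : ∑ j ∈ Sᶜ, ∑ k ∈ S, A j k * M k j = ((F2 : ℝ) : ℂ) := by
      have : ∑ j ∈ Sᶜ, ∑ k ∈ S, A j k * M k j
          = ∑ j ∈ Sᶜ, ∑ k ∈ S, ((‖A k j‖ ^ 2 : ℝ) : ℂ) :=
        Finset.sum_congr rfl fun j hj => Finset.sum_congr rfl fun k hk => by
          rw [hM_SC k hk j hj, habs2 j k, hnormsymm j k]
      rw [this, Finset.sum_comm, hF2def]
      norm_cast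
    rw [key, hblock1, hblock2]
    push_cast
    ring
  -- spectral decomposition
  set V : Matrix (Fin n) (Fin n) ℂ := (hH.eigenvectorUnitary : Matrix (Fin n) (Fin n) ℂ)
    with hVdef
  set lam : Fin n → ℝ := hH.eigenvalues with hlamdef
  have hspec : ∀ j k, A j k = ∑ i, V j i * ((lam i : ℝ) : ℂ) * (starRingEnd ℂ) (V k i) := by
    intro j k
    conv_lhs => rw [hH.spectral_theorem, Unitary.conjStarAlgAut_apply]
    rw [Matrix.mul_apply]
    refine Finset.sum_congr rfl fun i _ => ?_
    rw [Matrix.mul_diagonal, Matrix.star_apply]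
    simp [hVdef, hlamdef, Function.comp]
  have hcol : ∀ i, ∑ k, ‖V k i‖ ^ 2 = 1 := by
    intro i
    have h1 : (star V * V) i i = 1 := by
      rw [hVdef, Matrix.mem_unitaryGroup_iff'.mp hH.eigenvectorUnitary.2]
      simp [Matrix.one_apply_eq]
    rw [Matrix.mul_apply] at h1
    have h2 : ∑ k, ((‖V k i‖ ^ 2 : ℝ) : ℂ) = 1 := by
      rw [← h1]
      refine Finset.sum_congr rfl fun k _ => ?_
      rw [Matrix.star_apply, Complex.star_def, mul_comm, Complex.mul_conj]
      norm_cast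
      simp [Complex.normSq_eq_norm_sq]
    exact_mod_cast h2
  have henergy : energy hA.1 = ∑ i, |lam i| := rfl
  clear_value S F2 M Q V lam
  -- Q as a weighted sum over eigenvalues
  have hQw : Q = ∑ i, ((lam i : ℝ) : ℂ) *
      (∑ k, ∑ j, (starRingEnd ℂ) (V k i) * M k j * V j i) := by
    calc Q = ∑ j, ∑ k, (∑ i, V j i * ((lam i : ℝ) : ℂ) * (starRingEnd ℂ) (V k i)) * M k j := by
          rw [hQdef]
          exact Finset.sum_congr rfl fun j _ => Finset.sum_congr rfl fun k _ => by
            rw [hspec j k]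
      _ = ∑ j, ∑ k, ∑ i, V j i * ((lam i : ℝ) : ℂ) * (starRingEnd ℂ) (V k i) * M k j := by
          simp_rw [Finset.sum_mul]
      _ = ∑ j, ∑ i, ∑ k, V j i * ((lam i : ℝ) : ℂ) * (starRingEnd ℂ) (V k i) * M k j :=
          Finset.sum_congr rfl fun j _ => Finset.sum_comm
      _ = ∑ i, ∑ j, ∑ k, V j i * ((lam i : ℝ) : ℂ) * (starRingEnd ℂ) (V k i) * M k j :=
          Finset.sum_comm
      _ = _ := by
          refine Finset.sum_congr rfl fun i _ => ?_
          rw [Finset.mul_sum]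
          rw [Finset.sum_comm]
          refine Finset.sum_congr rfl fun j _ => ?_
          rw [Finset.mul_sum]
          refine Finset.sum_congr rfl fun k _ => ?_
          ring
  -- bound each eigenvector contribution
  have hwbound : ∀ i, ‖∑ k, ∑ j, (starRingEnd ℂ) (V k i) * M k j * V j i‖ ≤ Real.sqrt F2 := by
    intro i
    have hsplit : ∑ k, ∑ j, (starRingEnd ℂ) (V k i) * M k j * V j i
        = (∑ k ∈ S, ∑ j ∈ Sᶜ, (starRingEnd ℂ) (V k i) * A k j * V j i)
          + ∑ k ∈ Sᶜ, ∑ j ∈ S, (starRingEnd ℂ) (V k i) * A k j * V j i := by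
      rw [← Finset.sum_add_sum_compl S
        (fun k => ∑ j, (starRingEnd ℂ) (V k i) * M k j * V j i)]
      congr 1
      · refine Finset.sum_congr rfl fun k hk => ?_
        rw [← Finset.sum_add_sum_compl S
          (fun j => (starRingEnd ℂ) (V k i) * M k j * V j i)]
        rw [show ∑ j ∈ S, (starRingEnd ℂ) (V k i) * M k j * V j i = 0 from
          Finset.sum_eq_zero fun j hj => by rw [hM_SS k hk j hj, mul_zero, zero_mul], zero_add]
        exact Finset.sum_congr rfl fun j hj => by rw [hM_SC k hk j hj]
      · refine Finset.sum_congr rfl fun k hk => ?_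
        rw [← Finset.sum_add_sum_compl S
          (fun j => (starRingEnd ℂ) (V k i) * M k j * V j i)]
        rw [show ∑ j ∈ Sᶜ, (starRingEnd ℂ) (V k i) * M k j * V j i = 0 from
          Finset.sum_eq_zero fun j hj => by rw [hM_CC k hk j hj, mul_zero, zero_mul], add_zero]
        exact Finset.sum_congr rfl fun j hj => by rw [hM_CS k hk j hj]
    set a : ℝ := Real.sqrt (∑ k ∈ S, ‖V k i‖ ^ 2) with hadef
    set b : ℝ := Real.sqrt (∑ k ∈ Sᶜ, ‖V k i‖ ^ 2) with hbdef
    have ha0 : 0 ≤ a := Real.sqrt_nonneg _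
    have hb0 : 0 ≤ b := Real.sqrt_nonneg _
    have hab : a ^ 2 + b ^ 2 = 1 := by
      rw [hadef, hbdef, Real.sq_sqrt (Finset.sum_nonneg fun k _ => sq_nonneg _),
        Real.sq_sqrt (Finset.sum_nonneg fun k _ => sq_nonneg _),
        Finset.sum_add_sum_compl S (fun k => ‖V k i‖ ^ 2), hcol i]
    have hbound1 : ‖∑ k ∈ S, ∑ j ∈ Sᶜ, (starRingEnd ℂ) (V k i) * A k j * V j i‖
        ≤ Real.sqrt F2 * (a * b) := by
      have := my_block_bound S Sᶜ A (fun k => V k i)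
      rw [← hF2def] at this
      exact this
    have hbound2 : ‖∑ k ∈ Sᶜ, ∑ j ∈ S, (starRingEnd ℂ) (V k i) * A k j * V j i‖
        ≤ Real.sqrt F2 * (b * a) := by
      have h := my_block_bound Sᶜ S A (fun k => V k i)
      have heq : ∑ k ∈ Sᶜ, ∑ j ∈ S, ‖A k j‖ ^ 2 = F2 := by
        rw [Finset.sum_comm, hF2def]
        exact Finset.sum_congr rfl fun s _ => Finset.sum_congr rfl fun t _ => by
          rw [hnormsymm]
      rw [heq] at h
      exact h
    calc ‖∑ k, ∑ j, (starRingEnd ℂ) (V k i) * M k j * V j i‖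
        ≤ Real.sqrt F2 * (a * b) + Real.sqrt F2 * (b * a) := by
          rw [hsplit]
          exact (norm_add_le _ _).trans (add_le_add hbound1 hbound2)
      _ = Real.sqrt F2 * (2 * a * b) := by ring
      _ ≤ Real.sqrt F2 * (a ^ 2 + b ^ 2) :=
          mul_le_mul_of_nonneg_left (two_mul_le_add_sq a b) (Real.sqrt_nonneg _)
      _ = Real.sqrt F2 := by rw [hab, mul_one]
  -- put everything together
  have hfinal : 2 * F2 ≤ energy hA.1 * Real.sqrt F2 := by
    calc 2 * F2 = ‖Q‖ := by
          rw [hQval, Complex.norm_real, Real.norm_eq_abs,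
            abs_of_nonneg (by linarith : (0:ℝ) ≤ 2 * F2)]
      _ ≤ ∑ i, ‖((lam i : ℝ) : ℂ) * (∑ k, ∑ j, (starRingEnd ℂ) (V k i) * M k j * V j i)‖ := by
          rw [hQw]; exact norm_sum_le _ _
      _ ≤ ∑ i, |lam i| * Real.sqrt F2 := by
          refine Finset.sum_le_sum fun i _ => ?_
          rw [norm_mul, Complex.norm_real, Real.norm_eq_abs]
          exact mul_le_mul_of_nonneg_left (hwbound i) (abs_nonneg _)
      _ = energy hA.1 * Real.sqrt F2 := by
          rw [henergy, Finset.sum_mul]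
  have h2 : 2 * Real.sqrt F2 ≤ energy hA.1 := by
    have h3 : (2 * Real.sqrt F2) * Real.sqrt F2 ≤ energy hA.1 * Real.sqrt F2 := by
      calc (2 * Real.sqrt F2) * Real.sqrt F2 = 2 * F2 := by
            rw [mul_assoc, Real.mul_self_sqrt hF2nonneg]
        _ ≤ energy hA.1 * Real.sqrt F2 := hfinal
    exact le_of_mul_le_mul_right h3 hsqrtF2pos
  calc (2 * G.minDegree : ℝ) ≤ 2 * Real.sqrt F2 := by linarith
    _ ≤ energy hA.1 := h2
end

section
/- Let Φ = (G, φ) be a complex unit gain graph such that Re(φ(C)) = 0 for every cycle C in G. Then the characteristic polynomial of A(Φ) equals the matching polynomial of G: det(xI − A(Φ)) = Σ_{j=0}^{⌊n/2⌋} (−1)^j m(G, j) x^{n−2j}, where m(G, j) is the number of matchings of size j in G. -/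
open Matrix Polynomial BigOperators

/-- The gain of a walk: the product of the gains along its darts. -/
def walkGain {n : ℕ} {G : SimpleGraph (Fin n)} (A : Matrix (Fin n) (Fin n) ℂ)
    {u v : Fin n} (w : G.Walk u v) : ℂ :=
  (w.darts.map fun d => A d.fst d.snd).prod

/-- The number of matchings of size `j` in `G` (sets of `j` pairwise
non-adjacent edges); `matchCount G 0 = 1`. -/
noncomputable def matchCount {n : ℕ} (G : SimpleGraph (Fin n)) (j : ℕ) : ℕ :=
  {M : Finset (Sym2 (Fin n)) | ↑M ⊆ G.edgeSet ∧
    (∀ e ∈ M, ∀ f ∈ M, e ≠ f → ∀ v : Fin n, ¬(v ∈ e ∧ v ∈ f)) ∧ M.card = j}.ncard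

open Equiv Equiv.Perm

theorem perm_apply_inv_self {n : ℕ} (c : Perm (Fin n)) (x : Fin n) : c (c⁻¹ x) = x :=
  (Equiv.eq_symm_apply c).mp rfl

theorem perm_inv_apply_self {n : ℕ} (c : Perm (Fin n)) (x : Fin n) : c⁻¹ (c x) = x :=
  Equiv.Perm.inv_eq_iff_eq.mpr rfl



section OrbitWalk

variable {n : ℕ} {G : SimpleGraph (Fin n)}

/-- Walk along an orbit. -/
def orbitWalk (V : ℕ → Fin n) (hadj : ∀ k, G.Adj (V k) (V (k+1))) :
    (j : ℕ) → (e : ℕ) → G.Walk (V e) (V (e + j))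
  | 0, e => (SimpleGraph.Walk.nil : G.Walk (V e) (V e)).copy rfl (congrArg V (by omega))
  | (j+1), e =>
      (SimpleGraph.Walk.cons (hadj e) (orbitWalk V hadj j (e+1))).copy rfl
        (congrArg V (by omega))

lemma orbitWalk_support (V : ℕ → Fin n) (hadj : ∀ k, G.Adj (V k) (V (k+1))) :
    ∀ (j e : ℕ), (orbitWalk V hadj j e).support = (List.range' e (j+1)).map V
  | 0, e => by
      simp [orbitWalk, List.range']
  | (j+1), e => by
      rw [orbitWalk]
      simp only [SimpleGraph.Walk.support_copy, SimpleGraph.Walk.support_cons,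
        orbitWalk_support V hadj j (e+1)]
      simp [List.range'_succ]

lemma orbitWalk_darts (A : Matrix (Fin n) (Fin n) ℂ) (V : ℕ → Fin n)
    (hadj : ∀ k, G.Adj (V k) (V (k+1))) :
    ∀ (j e : ℕ), ((orbitWalk V hadj j e).darts.map fun d => A d.fst d.snd).prod
      = ∏ t ∈ Finset.range j, A (V (e+t)) (V (e+t+1))
  | 0, e => by simp [orbitWalk]
  | (j+1), e => by
      rw [orbitWalk]
      simp only [SimpleGraph.Walk.darts_copy, SimpleGraph.Walk.darts_cons, List.map_cons,
        List.prod_cons, orbitWalk_darts A V hadj j (e+1)]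
      rw [Finset.prod_range_succ', mul_comm]
      congr 1
      exact Finset.prod_congr rfl fun t _ => by rw [show e+1+t = e+(t+1) from by omega]

lemma orbitWalk_edges (V : ℕ → Fin n) (hadj : ∀ k, G.Adj (V k) (V (k+1))) :
    ∀ (j e : ℕ), (orbitWalk V hadj j e).edges
      = (List.range' e j).map (fun t => s(V t, V (t+1)))
  | 0, e => by simp [orbitWalk]
  | (j+1), e => by
      rw [orbitWalk]
      simp only [SimpleGraph.Walk.edges_copy, SimpleGraph.Walk.edges_cons,
        orbitWalk_edges V hadj j (e+1)]
      rw [List.range'_succ]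
      simp

end OrbitWalk

section Key
variable {n : ℕ} {G : SimpleGraph (Fin n)} {A : Matrix (Fin n) (Fin n) ℂ}

lemma key_cycle_re (hA : A.IsHermitian ∧ (∀ i j, G.Adj i j → ‖A i j‖ = 1) ∧
      ∀ i j, ¬ G.Adj i j → A i j = 0)
    (hcyc : ∀ (v : Fin n) (c : G.Walk v v), c.IsCycle →
      (((c.darts.map fun d => A d.fst d.snd).prod)).re = 0)
    (c : Equiv.Perm (Fin n)) (hc : c.IsCycle) (h3 : 3 ≤ c.support.card) :
    (∏ i ∈ c.support, A (c i) i).re = 0 := by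
  by_cases hadj : ∀ i ∈ c.support, G.Adj (c i) i
  · -- all edges present: build the cycle walk
    obtain ⟨m, hm⟩ := hc.nonempty_support
    have hK : orderOf c = c.support.card := hc.orderOf
    set V : ℕ → Fin n := fun k => (c ^ k) m with hV
    have hVmem : ∀ k, V k ∈ c.support := by
      intro k
      show (c ^ k) m ∈ c.support
      exact Equiv.Perm.pow_apply_mem_support.mpr hm
    have hVsucc : ∀ k, V (k+1) = c (V k) := by
      intro k
      show (c ^ (k+1)) m = c ((c ^ k) m)
      rw [pow_succ']
      rfl
    have hadj' : ∀ k, G.Adj (V k) (V (k+1)) := fun k => by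
      rw [hVsucc]; exact (hadj _ (hVmem k)).symm
    have hV0 : V 0 = m := by simp [hV]
    have hVK : V c.support.card = m := by
      show (c ^ c.support.card) m = m
      rw [← hK, pow_orderOf_eq_one]
      rfl
    have hVinj : ∀ a b, a ≤ c.support.card → b ≤ c.support.card → a < b → V a = V b →
        a = 0 ∧ b = c.support.card := by
      intro a b ha hb hab hV'
      have h1 : (c ^ a) ((c ^ (b - a)) m) = (c ^ a) m := by
        rw [← Equiv.Perm.mul_apply, ← pow_add]
        rw [show a + (b - a) = b from by omega]
        exact hV'.symm
      have h2 : (c ^ (b - a)) m = m := (c ^ a).injective h1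
      have h3' : c ^ (b - a) = 1 := (hc.pow_eq_one_iff' (Equiv.Perm.mem_support.mp hm)).mpr h2
      have h4 : c.support.card ∣ b - a := hK ▸ orderOf_dvd_of_pow_eq_one h3'
      have : b - a = c.support.card := Nat.eq_of_dvd_of_lt_two_mul (by omega) h4 (by omega)
      omega
    obtain ⟨K', hK'⟩ : ∃ K', c.support.card = K' + 1 := ⟨c.support.card - 1, by omega⟩
    let p : G.Walk (V 1) (V 0) :=
      (orbitWalk V hadj' K' 1).copy rfl
        (by rw [show 1+K' = c.support.card from by omega, hVK, hV0])
    let w : G.Walk (V 0) (V 0) := SimpleGraph.Walk.cons (hadj' 0) p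
    have hpath : p.IsPath := by
      rw [SimpleGraph.Walk.isPath_copy, SimpleGraph.Walk.isPath_def]
      rw [orbitWalk_support]
      refine List.Nodup.map_on ?_ (List.nodup_range' (s := _) (n := _))
      intro x hx y hy hxy
      rw [List.mem_range'_1] at hx hy
      by_contra hne
      rcases Nat.lt_or_ge x y with h | h
      · have := hVinj x y (by omega) (by omega) h hxy; omega
      · have := hVinj y x (by omega) (by omega) (by omega) hxy.symm; omega
    have hw : w.IsCycle := by
      rw [show w = SimpleGraph.Walk.cons (hadj' 0) p from rfl,
        SimpleGraph.Walk.cons_isCycle_iff]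
      refine ⟨hpath, ?_⟩
      show s(V 0, V 1) ∉ p.edges
      rw [show p.edges = (orbitWalk V hadj' K' 1).edges from
        SimpleGraph.Walk.edges_copy _ rfl _, orbitWalk_edges]
      intro hmem
      rw [List.mem_map] at hmem
      obtain ⟨t, ht, hts⟩ := hmem
      rw [List.mem_range'_1] at ht
      rw [Sym2.eq_iff] at hts
      rcases hts with ⟨h1, h2⟩ | ⟨h1, h2⟩
      · have := hVinj 0 t (by omega) (by omega) (by omega) h1.symm; omega
      · -- V t = V 1 and V (t+1) = V 0
        have h1' := hVinj 0 (t+1) (by omega) (by omega) (by omega) h2.symm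
        rcases Nat.lt_or_ge 1 t with h | h
        · have := hVinj 1 t (by omega) (by omega) h h1.symm; omega
        · have ht1 : t = 1 := by omega
          omega
    have hgain : ((w.darts.map fun d => A d.fst d.snd).prod)
        = ∏ t ∈ Finset.range c.support.card, A (V t) (V (t+1)) := by
      show (((SimpleGraph.Walk.cons (hadj' 0) p).darts.map
        fun d => A d.fst d.snd).prod) = _
      rw [SimpleGraph.Walk.darts_cons, List.map_cons, List.prod_cons]
      show A (V 0) (V 1) * ((((orbitWalk V hadj' K' 1).copy rfl _).darts.map
        fun d => A d.fst d.snd).prod) = _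
      rw [SimpleGraph.Walk.darts_copy, orbitWalk_darts]
      rw [hK', Finset.prod_range_succ', mul_comm]
      congr 1
      exact Finset.prod_congr rfl fun t _ => by rw [show 1+t = t+1 from by omega]
    have hre : (∏ t ∈ Finset.range c.support.card, A (V t) (V (t+1))).re = 0 := by
      rw [← hgain]; exact hcyc (V 0) w hw
    have hprod : (∏ i ∈ c.support, A i (c i))
        = ∏ t ∈ Finset.range c.support.card, A (V t) (V (t+1)) := by
      refine (Finset.prod_bij (fun t _ => V t) (fun t _ => hVmem t) ?_ ?_ ?_).symm
      · intro t1 h1 t2 h2 heq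
        rw [Finset.mem_range] at h1 h2
        by_contra hne
        rcases Nat.lt_or_ge t1 t2 with h | h
        · have := hVinj t1 t2 (by omega) (by omega) h heq; omega
        · have := hVinj t2 t1 (by omega) (by omega) (by omega) heq.symm; omega
      · intro i hi
        have hsc : c.SameCycle m i := hc.sameCycle (Equiv.Perm.mem_support.mp hm)
          (Equiv.Perm.mem_support.mp hi)
        obtain ⟨k, hk, hki⟩ := hsc.exists_pow_eq'
        exact ⟨k, Finset.mem_range.mpr (hK ▸ hk), hki⟩
      · intro t _
        rw [hVsucc]
    have hconj : (∏ i ∈ c.support, A (c i) i)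
        = (starRingEnd ℂ) (∏ i ∈ c.support, A i (c i)) := by
      rw [map_prod]
      refine Finset.prod_congr rfl fun i _ => ?_
      exact (hA.1.apply (c i) i).symm
    rw [hconj, Complex.conj_re, hprod, hre]
  · push_neg at hadj
    obtain ⟨i, hi, hnadj⟩ := hadj
    have hz : (∏ i ∈ c.support, A (c i) i) = 0 :=
      Finset.prod_eq_zero hi (hA.2.2 _ _ hnadj)
    rw [hz]
    simp

end Key


section Flip
variable {n : ℕ}

/-- points where `σ` is not locally an involution -/
def sqSet (σ : Equiv.Perm (Fin n)) : Finset (Fin n) :=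
  Finset.univ.filter fun i => σ (σ i) ≠ i

/-- reverse the cycle of the least point whose square moves -/
noncomputable def flipCycle (σ : Equiv.Perm (Fin n)) : Equiv.Perm (Fin n) :=
  if h : (sqSet σ).Nonempty then σ * ((σ.cycleOf ((sqSet σ).min' h))⁻¹)^2 else σ

lemma sqSet_nonempty_iff (σ : Equiv.Perm (Fin n)) : (sqSet σ).Nonempty ↔ σ * σ ≠ 1 := by
  constructor
  · rintro ⟨i, hi⟩ h1
    simp only [sqSet, Finset.mem_filter] at hi
    exact hi.2 (by rw [← Equiv.Perm.mul_apply, h1]; rfl)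
  · intro h1
    rw [Finset.nonempty_iff_ne_empty]
    intro he
    apply h1
    ext i
    have : i ∉ sqSet σ := he ▸ Finset.notMem_empty i
    simp only [sqSet, Finset.mem_filter, Finset.mem_univ, true_and, not_not] at this
    simp [Equiv.Perm.mul_apply, this]

lemma flipCycle_spec (σ : Equiv.Perm (Fin n)) (h : (sqSet σ).Nonempty) :
    ∃ c d : Equiv.Perm (Fin n), c.IsCycle ∧ 3 ≤ c.support.card ∧ d.Disjoint c ∧
      σ = d * c ∧ flipCycle σ = d * c⁻¹ ∧ flipCycle (flipCycle σ) = σ ∧ flipCycle σ ≠ σ := by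
  set m := (sqSet σ).min' h with hmdef
  have hm2 : σ (σ m) ≠ m := by
    have := (sqSet σ).min'_mem h
    simp only [sqSet, Finset.mem_filter] at this
    exact this.2
  have hm : σ m ≠ m := fun e => hm2 (by rw [e, e])
  have hms : m ∈ σ.support := Equiv.Perm.mem_support.mpr hm
  set c := σ.cycleOf m with hcdef
  have hc : c.IsCycle := Equiv.Perm.isCycle_cycleOf σ hm
  have hcf : c ∈ σ.cycleFactorsFinset := Equiv.Perm.cycleOf_mem_cycleFactorsFinset_iff.mpr hms
  have hdisj : (σ * c⁻¹).Disjoint c :=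
    Equiv.Perm.disjoint_mul_inv_of_mem_cycleFactorsFinset hcf
  set d := σ * c⁻¹ with hddef
  have hσ : σ = d * c := by rw [hddef]; group
  have hcm : c m = σ m := Equiv.Perm.cycleOf_apply_self σ m
  have hcm2 : c (σ m) = σ (σ m) := Equiv.Perm.cycleOf_apply_apply_self σ m
  have hc2 : c (c m) ≠ m := by rw [hcm, hcm2]; exact hm2
  have h3 : 3 ≤ c.support.card := by
    rcases Nat.lt_or_ge c.support.card 3 with hlt | hge
    · exfalso
      have h2le := hc.two_le_card_support
      have : c.support.card = 2 := by omega
      obtain ⟨x, y, hxy, hxy2⟩ := Equiv.Perm.card_support_eq_two.mp this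
      rw [hxy2] at hc2
      exact hc2 (Equiv.swap_apply_self _ _ _)
    · exact hge
  have hflip : flipCycle σ = d * c⁻¹ := by
    simp only [flipCycle]
    rw [dif_pos h, ← hmdef, ← hcdef, hσ]
    group
  set τ := d * c⁻¹ with hτdef
  have hds := hdisj.disjoint_support
  have hdc' : d.Disjoint c⁻¹ := hdisj.inv_right
  have hmc : m ∈ c.support := Equiv.Perm.mem_support.mpr (by rw [hcm]; exact hm)
  have happc : ∀ i ∈ c.support, σ i = c i := by
    intro i hi
    rw [hσ, Equiv.Perm.mul_apply]
    exact Equiv.Perm.notMem_support.mp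
      (Finset.disjoint_right.mp hds (Equiv.Perm.apply_mem_support.mpr hi))
  have happd : ∀ i, i ∉ c.support → σ i = d i := by
    intro i hi
    rw [hσ, Equiv.Perm.mul_apply, Equiv.Perm.notMem_support.mp hi]
  have happc' : ∀ i ∈ c.support, τ i = c⁻¹ i := by
    intro i hi
    rw [hτdef, Equiv.Perm.mul_apply]
    have : c⁻¹ i ∈ c.support := by
      rw [← Equiv.Perm.support_inv] at hi ⊢
      exact Equiv.Perm.apply_mem_support.mpr hi
    exact Equiv.Perm.notMem_support.mp (Finset.disjoint_right.mp hds this)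
  have happd' : ∀ i, i ∉ c.support → τ i = d i := by
    intro i hi
    rw [hτdef, Equiv.Perm.mul_apply]
    have : c⁻¹ i = i := by
      rw [← Equiv.Perm.support_inv] at hi
      exact Equiv.Perm.notMem_support.mp hi
    rw [this]
  have hsq : sqSet τ = sqSet σ := by
    ext i
    simp only [sqSet, Finset.mem_filter, Finset.mem_univ, true_and]
    rw [not_iff_not]
    by_cases hi : i ∈ c.support
    · rw [happc' i hi, happc i hi]
      have hci : c i ∈ c.support := Equiv.Perm.apply_mem_support.mpr hi
      have hci' : c⁻¹ i ∈ c.support := by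
        rw [← Equiv.Perm.support_inv] at hi ⊢
        exact Equiv.Perm.apply_mem_support.mpr hi
      rw [happc' _ hci', happc _ hci]
      constructor
      · intro e
        have e1 := congrArg (⇑c) e
        rw [perm_apply_inv_self] at e1
        have e2 := congrArg (⇑c) e1
        rw [perm_apply_inv_self] at e2
        exact e2.symm
      · intro e
        have e1 := congrArg (⇑c⁻¹) e
        rw [perm_inv_apply_self] at e1
        have e2 := congrArg (⇑c⁻¹) e1
        rw [perm_inv_apply_self] at e2
        exact e2.symm
    · have hdi : d i ∉ c.support := by
        by_cases hd : i ∈ d.support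
        · exact Finset.disjoint_left.mp hds (Equiv.Perm.apply_mem_support.mpr hd)
        · rw [Equiv.Perm.notMem_support.mp hd]; exact hi
      rw [happd' i hi, happd i hi, happd' _ hdi, happd _ hdi]
  have hmin : ∀ h' : (sqSet τ).Nonempty, (sqSet τ).min' h' = m := by
    rw [hsq]
    intro h'
    rw [hmdef]
  have hcycτ : τ.cycleOf m = c⁻¹ := by
    have hfac : c⁻¹ ∈ τ.cycleFactorsFinset := by
      rw [Equiv.Perm.mem_cycleFactorsFinset_iff]
      refine ⟨hc.inv, fun a ha => ?_⟩
      rw [Equiv.Perm.support_inv] at ha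
      exact (happc' a ha).symm
    exact (Equiv.Perm.cycle_is_cycleOf (by rw [Equiv.Perm.support_inv]; exact hmc) hfac).symm
  have hτn : (sqSet τ).Nonempty := by rw [hsq]; exact h
  have hflip2 : flipCycle τ = σ := by
    simp only [flipCycle]
    rw [dif_pos hτn, hmin, hcycτ, hτdef, hσ]
    group
  have hne : τ ≠ σ := by
    rw [hτdef, hσ]
    intro e
    have e1 : c⁻¹ = c := mul_left_cancel e
    have e2 := congrArg (fun p : Equiv.Perm (Fin n) => p (c m)) e1
    simp only [perm_inv_apply_self] at e2
    exact hc2 e2.symm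
  exact ⟨c, d, hc, h3, hdisj, hσ, hflip.trans hτdef,
    by rw [hflip]; exact hflip2, by rw [hflip]; exact hne⟩

end Flip


section Invol
variable {n : ℕ}

lemma invol_sign_card_aux : ∀ (N : ℕ) (σ : Equiv.Perm (Fin n)), σ.support.card ≤ N →
    σ * σ = 1 → ∃ j, σ.support.card = 2 * j ∧ Equiv.Perm.sign σ = (-1)^j := by
  intro N
  induction N with
  | zero =>
    intro σ hcard hσ
    have : σ.support = ∅ := Finset.card_eq_zero.mp (by omega)
    refine ⟨0, by simp [this], ?_⟩
    rw [Equiv.Perm.support_eq_empty_iff.mp this]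
    simp
  | succ N ih =>
    intro σ hcard hσ
    by_cases h1 : σ = 1
    · exact ⟨0, by simp [h1], by simp [h1]⟩
    · obtain ⟨a, ha⟩ : σ.support.Nonempty := by
        rw [Finset.nonempty_iff_ne_empty]
        exact fun he => h1 (Equiv.Perm.support_eq_empty_iff.mp he)
      have hab : σ a ≠ a := Equiv.Perm.mem_support.mp ha
      have hba : σ (σ a) = a := by
        have := congrArg (fun p : Equiv.Perm (Fin n) => p a) hσ
        simpa [Equiv.Perm.mul_apply] using this
      set σ' := σ * Equiv.swap a (σ a) with hσ'def
      have hcomm : Equiv.swap a (σ a) * σ = σ' := by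
        rw [hσ'def, Equiv.mul_swap_eq_swap_mul, hba, Equiv.swap_comm]
      have hσ' : σ' * σ' = 1 := by
        calc σ' * σ' = σ * (Equiv.swap a (σ a) * σ) * Equiv.swap a (σ a) := by
              rw [hσ'def]; group
          _ = σ * σ' * Equiv.swap a (σ a) := by rw [hcomm]
          _ = (σ * σ) * (Equiv.swap a (σ a) * Equiv.swap a (σ a)) := by
              rw [hσ'def]; group
          _ = 1 := by rw [hσ, Equiv.swap_mul_self, mul_one]
      have happ : ∀ x, x ≠ a → x ≠ σ a → σ' x = σ x := by
        intro x hx1 hx2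
        rw [hσ'def, Equiv.Perm.mul_apply, Equiv.swap_apply_of_ne_of_ne hx1 hx2]
      have happa : σ' a = a := by
        rw [hσ'def, Equiv.Perm.mul_apply, Equiv.swap_apply_left, hba]
      have happb : σ' (σ a) = σ a := by
        rw [hσ'def, Equiv.Perm.mul_apply, Equiv.swap_apply_right]
      have hsupp : σ'.support = σ.support \ {a, σ a} := by
        ext x
        simp only [Equiv.Perm.mem_support, Finset.mem_sdiff, Finset.mem_insert,
          Finset.mem_singleton, not_or]
        by_cases hx1 : x = a
        · subst hx1; simp [happa]
        · by_cases hx2 : x = σ a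
          · subst hx2; simp [happb]
          · rw [happ x hx1 hx2]
            tauto
      have hsub : {a, σ a} ⊆ σ.support := by
        intro x hx
        simp only [Finset.mem_insert, Finset.mem_singleton] at hx
        rcases hx with rfl | rfl
        · exact ha
        · rw [Equiv.Perm.mem_support, hba]; exact fun e => hab e.symm
      have hcard2 : ({a, σ a} : Finset (Fin n)).card = 2 := by
        rw [Finset.card_insert_of_notMem (by simp [hab]; exact fun e => hab e.symm),
          Finset.card_singleton]
      have hcards : σ'.support.card = σ.support.card - 2 := by
        rw [hsupp, Finset.card_sdiff_of_subset hsub, hcard2]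
      have hge2 : 2 ≤ σ.support.card := by
        calc 2 = ({a, σ a} : Finset (Fin n)).card := hcard2.symm
          _ ≤ σ.support.card := Finset.card_le_card hsub
      obtain ⟨j, hj1, hj2⟩ := ih σ' (by omega) hσ'
      refine ⟨j + 1, by omega, ?_⟩
      have hsign : Equiv.Perm.sign σ' = Equiv.Perm.sign σ * (-1) := by
        rw [hσ'def, Equiv.Perm.sign_mul, Equiv.Perm.sign_swap (fun e => hab e.symm)]
      have : Equiv.Perm.sign σ = Equiv.Perm.sign σ' * (-1) := by
        rw [hsign, mul_assoc]; norm_num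
      rw [this, hj2, pow_succ]

lemma invol_sign_card (σ : Equiv.Perm (Fin n)) (hσ : σ * σ = 1) :
    ∃ j, σ.support.card = 2 * j ∧ Equiv.Perm.sign σ = (-1)^j :=
  invol_sign_card_aux σ.support.card σ le_rfl hσ

end Invol


section Match
open scoped Classical
variable {n : ℕ} {G : SimpleGraph (Fin n)}

lemma other'_congr {α : Type*} [DecidableEq α] {v : α} {e f : Sym2 α} (hef : e = f)
    (h1 : v ∈ e) (h2 : v ∈ f) : Sym2.Mem.other' h1 = Sym2.Mem.other' h2 := by
  subst hef; rfl

/-- the matching associated to an involution -/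
def matchOf (σ : Equiv.Perm (Fin n)) : Finset (Sym2 (Fin n)) :=
  σ.support.image fun i => s(i, σ i)

lemma card_two_of_not_isDiag (e : Sym2 (Fin n)) (hnd : ¬ e.IsDiag) :
    (Finset.univ.filter fun v => v ∈ e).card = 2 := by
  induction e with
  | _ a b =>
    rw [Sym2.mk_isDiag_iff] at hnd
    have : (Finset.univ.filter fun v => v ∈ s(a, b)) = {a, b} := by
      ext v
      simp [Sym2.mem_iff]
    rw [this, Finset.card_insert_of_notMem (by simpa using hnd), Finset.card_singleton]

lemma card_filter_mem_sym2 {M : Finset (Sym2 (Fin n))} (hnd : ∀ e ∈ M, ¬ e.IsDiag)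
    (hdisj : ∀ e ∈ M, ∀ f ∈ M, e ≠ f → ∀ v : Fin n, ¬(v ∈ e ∧ v ∈ f)) :
    (Finset.univ.filter fun v => ∃ e ∈ M, v ∈ e).card = 2 * M.card := by
  have hb : (Finset.univ.filter fun v => ∃ e ∈ M, v ∈ e)
      = M.biUnion (fun e => Finset.univ.filter fun v => v ∈ e) := by
    ext v; simp
  rw [hb, Finset.card_biUnion]
  · rw [Finset.sum_congr rfl (fun e he => card_two_of_not_isDiag e (hnd e he)),
      Finset.sum_const, smul_eq_mul, mul_comm]
  · intro e he f hf hef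
    rw [Function.onFun, Finset.disjoint_left]
    intro v hv hv2
    simp only [Finset.mem_filter] at hv hv2
    exact hdisj e he f hf hef v ⟨hv.2, hv2.2⟩

lemma matchOf_image_eq (j : ℕ) :
    {M : Finset (Sym2 (Fin n)) | ↑M ⊆ G.edgeSet ∧
      (∀ e ∈ M, ∀ f ∈ M, e ≠ f → ∀ v : Fin n, ¬(v ∈ e ∧ v ∈ f)) ∧ M.card = j}
    = matchOf '' ↑(Finset.univ.filter fun σ : Equiv.Perm (Fin n) =>
        σ * σ = 1 ∧ σ.support.card = 2 * j ∧ ∀ i ∈ σ.support, G.Adj (σ i) i) := by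
  apply Set.Subset.antisymm
  · -- surjectivity part
    rintro M ⟨hsub, hdisj, hcard⟩
    have huniq : ∀ (v : Fin n) (e f : Sym2 (Fin n)), e ∈ M → f ∈ M → v ∈ e → v ∈ f →
        e = f := by
      intro v e f he hf hv1 hv2
      by_contra hne
      exact hdisj e he f hf hne v ⟨hv1, hv2⟩
    classical
    set fM : Fin n → Fin n := fun v =>
      if h : ∃ e ∈ M, v ∈ e then Sym2.Mem.other' h.choose_spec.2 else v with hfMdef
    have hfM : ∀ (v : Fin n) (e : Sym2 (Fin n)) (he : e ∈ M) (hv : v ∈ e),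
        fM v = Sym2.Mem.other' hv := by
      intro v e he hv
      have hex : ∃ e ∈ M, v ∈ e := ⟨e, he, hv⟩
      simp only [hfMdef]
      rw [dif_pos hex]
      exact other'_congr (huniq v _ _ hex.choose_spec.1 he hex.choose_spec.2 hv) _ _
    have hfM0 : ∀ v : Fin n, (¬ ∃ e ∈ M, v ∈ e) → fM v = v := by
      intro v h
      simp only [hfMdef]
      rw [dif_neg h]
    have hinv : Function.Involutive fM := by
      intro v
      by_cases h : ∃ e ∈ M, v ∈ e
      · obtain ⟨e, he, hv⟩ := h
        rw [hfM v e he hv, hfM _ e he (Sym2.other_mem' hv)]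
        exact Sym2.other_invol' hv (Sym2.other_mem' hv)
      · rw [hfM0 v h, hfM0 v h]
    set σ := hinv.toPerm with hσdef
    have hσapp : ∀ v, σ v = fM v := fun v => rfl
    have hσ1 : σ * σ = 1 := by
      apply Equiv.ext
      intro v
      simp only [Equiv.Perm.mul_apply, hσapp, Equiv.Perm.one_apply]
      exact hinv v
    have hndM : ∀ e ∈ M, ¬ e.IsDiag := fun e he => G.not_isDiag_of_mem_edgeSet (hsub he)
    have hsupp : ∀ v, v ∈ σ.support ↔ ∃ e ∈ M, v ∈ e := by
      intro v
      rw [Equiv.Perm.mem_support]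
      constructor
      · intro hv
        by_contra h
        exact hv ((hσapp v).trans (hfM0 v h))
      · rintro ⟨e, he, hv⟩
        rw [hσapp, hfM v e he hv]
        rw [← Sym2.other_eq_other']
        exact Sym2.other_ne (hndM e he) hv
    have hadj : ∀ i ∈ σ.support, G.Adj (σ i) i := by
      intro i hi
      obtain ⟨e, he, hv⟩ := (hsupp i).mp hi
      rw [hσapp, hfM i e he hv]
      have hspec : s(i, Sym2.Mem.other' hv) = e := Sym2.other_spec' hv
      have : G.Adj i (Sym2.Mem.other' hv) := by
        rw [← SimpleGraph.mem_edgeSet, hspec]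
        exact hsub he
      exact this.symm
    have hsuppeq : σ.support = Finset.univ.filter fun v => ∃ e ∈ M, v ∈ e := by
      ext v; simp [hsupp v]
    have hcard2 : σ.support.card = 2 * j := by
      rw [hsuppeq, card_filter_mem_sym2 hndM hdisj, hcard]
    have hmatch : matchOf σ = M := by
      apply Finset.Subset.antisymm
      · intro x hx
        rw [matchOf, Finset.mem_image] at hx
        obtain ⟨i, hi, rfl⟩ := hx
        obtain ⟨e, he, hv⟩ := (hsupp i).mp hi
        rw [hσapp, hfM i e he hv, Sym2.other_spec' hv]
        exact he
      · intro e he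
        rw [matchOf, Finset.mem_image]
        have hv : e.out.1 ∈ e := Sym2.out_fst_mem e
        refine ⟨e.out.1, (hsupp _).mpr ⟨e, he, hv⟩, ?_⟩
        rw [hσapp, hfM _ e he hv, Sym2.other_spec' hv]
    refine ⟨σ, ?_, hmatch⟩
    simp only [Finset.coe_filter, Set.mem_setOf_eq]
    exact ⟨Finset.mem_univ σ, hσ1, hcard2, hadj⟩
  · -- image is contained in the matching set
    rintro M ⟨σ, hσm, rfl⟩
    simp only [Finset.coe_filter, Set.mem_setOf_eq] at hσm
    obtain ⟨-, hσ1, hcard, hadj⟩ := hσm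
    have hσ2 : ∀ x, σ (σ x) = x := by
      intro x
      have := congrArg (fun p : Equiv.Perm (Fin n) => p x) hσ1
      simpa [Equiv.Perm.mul_apply] using this
    have hsub : ↑(matchOf σ) ⊆ G.edgeSet := by
      intro e he
      simp only [Finset.mem_coe, matchOf, Finset.mem_image] at he
      obtain ⟨i, hi, rfl⟩ := he
      exact (hadj i hi).symm
    have hpair : ∀ (v : Fin n) (e : Sym2 (Fin n)), e ∈ matchOf σ → v ∈ e →
        e = s(v, σ v) := by
      intro v e he hv
      simp only [matchOf, Finset.mem_image] at he
      obtain ⟨i, hi, rfl⟩ := he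
      rw [Sym2.mem_iff] at hv
      rcases hv with rfl | rfl
      · rfl
      · rw [hσ2 i, Sym2.eq_swap]
    have hdisj : ∀ e ∈ matchOf σ, ∀ f ∈ matchOf σ, e ≠ f →
        ∀ v : Fin n, ¬(v ∈ e ∧ v ∈ f) := by
      rintro e he f hf hef v ⟨hv1, hv2⟩
      exact hef ((hpair v e he hv1).trans (hpair v f hf hv2).symm)
    refine ⟨hsub, hdisj, ?_⟩
    have hndM : ∀ e ∈ matchOf σ, ¬ e.IsDiag := fun e he =>
      G.not_isDiag_of_mem_edgeSet (hsub he)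
    have hsuppeq : σ.support = Finset.univ.filter fun v => ∃ e ∈ matchOf σ, v ∈ e := by
      ext v
      simp only [Finset.mem_filter, Finset.mem_univ, true_and]
      constructor
      · intro hv
        exact ⟨s(v, σ v), Finset.mem_image_of_mem _ hv, Sym2.mem_mk_left _ _⟩
      · rintro ⟨e, he, hv⟩
        simp only [matchOf, Finset.mem_image] at he
        obtain ⟨i, hi, rfl⟩ := he
        rw [Sym2.mem_iff] at hv
        rcases hv with rfl | rfl
        · exact hi
        · exact Equiv.Perm.apply_mem_support.mpr hi
    have := card_filter_mem_sym2 hndM hdisj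
    rw [← hsuppeq, hcard] at this
    omega

lemma matchCount_eq_card (j : ℕ) :
    {M : Finset (Sym2 (Fin n)) | ↑M ⊆ G.edgeSet ∧
      (∀ e ∈ M, ∀ f ∈ M, e ≠ f → ∀ v : Fin n, ¬(v ∈ e ∧ v ∈ f)) ∧ M.card = j}.ncard
    = (Finset.univ.filter fun σ : Equiv.Perm (Fin n) =>
        σ * σ = 1 ∧ σ.support.card = 2 * j ∧ ∀ i ∈ σ.support, G.Adj (σ i) i).card := by
  rw [matchOf_image_eq (G := G) j]
  have hinj : Set.InjOn matchOf ((Finset.univ.filter fun σ : Equiv.Perm (Fin n) =>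
      σ * σ = 1 ∧ σ.support.card = 2 * j ∧ ∀ i ∈ σ.support, G.Adj (σ i) i) :
      Set (Equiv.Perm (Fin n))) := ?_
  · rw [Set.ncard_image_of_injOn hinj, Set.ncard_coe_finset]
  intro σ hσm τ hτm heq
  simp only [Finset.coe_filter, Set.mem_setOf_eq] at hσm hτm
  obtain ⟨-, hσ1, -, -⟩ := hσm
  obtain ⟨-, hτ1, -, -⟩ := hτm
  have hσ2 : ∀ x, σ (σ x) = x := by
    intro x
    have := congrArg (fun p : Equiv.Perm (Fin n) => p x) hσ1
    simpa [Equiv.Perm.mul_apply] using this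
  have hτ2 : ∀ x, τ (τ x) = x := by
    intro x
    have := congrArg (fun p : Equiv.Perm (Fin n) => p x) hτ1
    simpa [Equiv.Perm.mul_apply] using this
  apply Equiv.ext
  intro i
  by_cases hi : i ∈ σ.support
  · have hmem : s(i, σ i) ∈ matchOf τ := by
      rw [← heq]
      exact Finset.mem_image_of_mem _ hi
    simp only [matchOf, Finset.mem_image] at hmem
    obtain ⟨k, hk, he⟩ := hmem
    rw [Sym2.eq_iff] at he
    rcases he with ⟨rfl, h2⟩ | ⟨h1, h2⟩
    · exact h2.symm
    · have := congrArg τ h2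
      rw [hτ2 k] at this
      rw [← h1, this]
  · by_cases hiτ : i ∈ τ.support
    · have hmem : s(i, τ i) ∈ matchOf σ := by
        rw [heq]
        exact Finset.mem_image_of_mem _ hiτ
      simp only [matchOf, Finset.mem_image] at hmem
      obtain ⟨k, hk, he⟩ := hmem
      rw [Sym2.eq_iff] at he
      exfalso
      rcases he with ⟨rfl, h2⟩ | ⟨h1, h2⟩
      · exact hi hk
      · rw [← h2] at hi
        exact hi (Equiv.Perm.apply_mem_support.mpr hk)
    · rw [Equiv.Perm.notMem_support.mp hi, Equiv.Perm.notMem_support.mp hiτ]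

end Match


section FinalHelpers
variable {n : ℕ} {G : SimpleGraph (Fin n)} (A : Matrix (Fin n) (Fin n) ℂ)

lemma wt_mul_disjoint (d c : Equiv.Perm (Fin n)) (hdc : d.Disjoint c) :
    ∏ i ∈ (d * c).support, A ((d * c) i) i
      = (∏ i ∈ d.support, A (d i) i) * (∏ i ∈ c.support, A (c i) i) := by
  rw [hdc.support_mul, Finset.prod_union hdc.disjoint_support]
  congr 1
  · refine Finset.prod_congr rfl fun i hi => ?_
    have hci : c i = i := Equiv.Perm.notMem_support.mp
      (Finset.disjoint_left.mp hdc.disjoint_support hi)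
    rw [Equiv.Perm.mul_apply, hci]
  · refine Finset.prod_congr rfl fun i hi => ?_
    have hdi : d (c i) = c i := Equiv.Perm.notMem_support.mp
      (Finset.disjoint_right.mp hdc.disjoint_support (Equiv.Perm.apply_mem_support.mpr hi))
    rw [Equiv.Perm.mul_apply, hdi]

lemma wt_inv_cycle (hA1 : A.IsHermitian) (c : Equiv.Perm (Fin n)) :
    ∏ i ∈ c.support, A (c⁻¹ i) i
      = (starRingEnd ℂ) (∏ i ∈ c.support, A (c i) i) := by
  have h1 : (∏ x ∈ c.support, A (c⁻¹ (c x)) (c x)) = ∏ x ∈ c.support, A (c⁻¹ x) x :=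
    Equiv.Perm.prod_comp c c.support (fun i => A (c⁻¹ i) i)
      (fun a ha => Equiv.Perm.mem_support.mpr ha)
  rw [← h1, map_prod]
  refine Finset.prod_congr rfl fun i _ => ?_
  rw [perm_inv_apply_self]
  exact (hA1.apply i (c i)).symm

/-- the term of a permutation in the charpoly expansion -/
noncomputable def permTerm (σ : Equiv.Perm (Fin n)) : Polynomial ℂ :=
  Polynomial.C (((Equiv.Perm.sign σ : ℤ) : ℂ) * (-1)^σ.support.card *
    ∏ i ∈ σ.support, A (σ i) i) * Polynomial.X ^ (n - σ.support.card)

lemma charpoly_eq_sum_permTerm (hA0 : ∀ i, A i i = 0) :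
    A.charpoly = ∑ σ : Equiv.Perm (Fin n), permTerm A σ := by
  rw [Matrix.charpoly, Matrix.det_apply]
  refine Finset.sum_congr rfl fun σ _ => ?_
  have hprod : (∏ i, (Matrix.charmatrix A) (σ i) i)
      = ((-1 : Polynomial ℂ))^σ.support.card *
        Polynomial.C (∏ i ∈ σ.support, A (σ i) i) *
        Polynomial.X ^ (n - σ.support.card) := by
    rw [← Finset.prod_mul_prod_compl σ.support]
    have h1 : (∏ i ∈ σ.support, (Matrix.charmatrix A) (σ i) i)
        = ∏ i ∈ σ.support, (- Polynomial.C (A (σ i) i)) := by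
      refine Finset.prod_congr rfl fun i hi => ?_
      exact Matrix.charmatrix_apply_ne _ _ _ (Equiv.Perm.mem_support.mp hi)
    have h2 : (∏ i ∈ σ.supportᶜ, (Matrix.charmatrix A) (σ i) i)
        = Polynomial.X ^ (n - σ.support.card) := by
      have h3 : ∀ i ∈ σ.supportᶜ, (Matrix.charmatrix A) (σ i) i = Polynomial.X := by
        intro i hi
        have : σ i = i := Equiv.Perm.notMem_support.mp (Finset.mem_compl.mp hi)
        rw [this, Matrix.charmatrix_apply_eq, hA0, map_zero, sub_zero]
      rw [Finset.prod_congr rfl h3, Finset.prod_const, Finset.card_compl,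
        Fintype.card_fin]
    rw [h1, h2]
    congr 1
    rw [Finset.prod_congr rfl (fun (i : Fin n) _ => neg_eq_neg_one_mul
      (Polynomial.C (A (σ i) i))), Finset.prod_mul_distrib, Finset.prod_const,
      ← _root_.map_prod]
  rw [hprod, permTerm, Units.smul_def, zsmul_eq_mul]
  have hc : ((Equiv.Perm.sign σ : ℤ) : Polynomial ℂ)
      = Polynomial.C ((Equiv.Perm.sign σ : ℤ) : ℂ) := by
    simp
  rw [hc]
  simp only [_root_.map_mul, map_pow, map_neg, _root_.map_one]
  ring

end FinalHelpers

section Final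
open scoped Classical
variable {n : ℕ} {G : SimpleGraph (Fin n)} (A : Matrix (Fin n) (Fin n) ℂ)

lemma flipCycle_fix (σ : Equiv.Perm (Fin n)) (h : ¬ (sqSet σ).Nonempty) :
    flipCycle σ = σ := by
  simp only [flipCycle, dif_neg h]

lemma flip_all (hA1 : A.IsHermitian) (hA2 : ∀ i j, G.Adj i j → ‖A i j‖ = 1)
    (hA3 : ∀ i j, ¬ G.Adj i j → A i j = 0)
    (hcyc : ∀ (v : Fin n) (c : G.Walk v v), c.IsCycle →
      (((c.darts.map fun d => A d.fst d.snd).prod)).re = 0)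
    (σ : Equiv.Perm (Fin n)) (hσ : σ * σ ≠ 1) :
    permTerm A σ + permTerm A (flipCycle σ) = 0 ∧ flipCycle σ ≠ σ ∧
      flipCycle σ * flipCycle σ ≠ 1 ∧ flipCycle (flipCycle σ) = σ := by
  have hne : (sqSet σ).Nonempty := (sqSet_nonempty_iff σ).mpr hσ
  obtain ⟨c, d, hc, h3c, hdc, hσeq, hflip, hinv2, hnef⟩ := flipCycle_spec σ hne
  have hτ2 : flipCycle σ * flipCycle σ ≠ 1 := by
    intro h1
    have h2 : ¬ (sqSet (flipCycle σ)).Nonempty := by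
      rw [sqSet_nonempty_iff]
      exact fun h3 => h3 h1
    rw [flipCycle_fix _ h2] at hinv2
    exact hnef hinv2
  refine ⟨?_, hnef, hτ2, hinv2⟩
  -- the cancellation
  have hsupτ : (flipCycle σ).support = σ.support := by
    rw [hflip, (hdc.inv_right).support_mul, Equiv.Perm.support_inv, hσeq,
      hdc.support_mul]
  have hsignτ : Equiv.Perm.sign (flipCycle σ) = Equiv.Perm.sign σ := by
    rw [hflip, hσeq, Equiv.Perm.sign_mul, Equiv.Perm.sign_mul, Equiv.Perm.sign_inv]
  have hwtσ : (∏ i ∈ σ.support, A (σ i) i)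
      = (∏ i ∈ d.support, A (d i) i) * (∏ i ∈ c.support, A (c i) i) := by
    conv_lhs => rw [hσeq]
    exact wt_mul_disjoint A d c hdc
  have hwtτ : (∏ i ∈ (flipCycle σ).support, A ((flipCycle σ) i) i)
      = (∏ i ∈ d.support, A (d i) i) *
        (starRingEnd ℂ) (∏ i ∈ c.support, A (c i) i) := by
    conv_lhs => rw [hflip]
    rw [wt_mul_disjoint A d c⁻¹ hdc.inv_right]
    congr 1
    rw [Equiv.Perm.support_inv]
    exact wt_inv_cycle A hA1 c
  have hre : (∏ i ∈ c.support, A (c i) i).re = 0 :=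
    key_cycle_re ⟨hA1, hA2, hA3⟩ hcyc c hc h3c
  have h2 : (∏ i ∈ c.support, A (c i) i)
      + (starRingEnd ℂ) (∏ i ∈ c.support, A (c i) i) = 0 := by
    rw [Complex.add_conj, hre]
    simp
  rw [permTerm, permTerm, hwtσ, hwtτ, hsignτ, hsupτ]
  have step : (Polynomial.C (((Equiv.Perm.sign σ : ℤ) : ℂ) * (-1)^σ.support.card *
        ((∏ i ∈ d.support, A (d i) i) * (∏ i ∈ c.support, A (c i) i))) *
      Polynomial.X ^ (n - σ.support.card)) +
      (Polynomial.C (((Equiv.Perm.sign σ : ℤ) : ℂ) * (-1)^σ.support.card *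
        ((∏ i ∈ d.support, A (d i) i) *
          (starRingEnd ℂ) (∏ i ∈ c.support, A (c i) i))) *
      Polynomial.X ^ (n - σ.support.card))
      = (Polynomial.C (((Equiv.Perm.sign σ : ℤ) : ℂ) * (-1)^σ.support.card *
          (∏ i ∈ d.support, A (d i) i)) *
        Polynomial.C ((∏ i ∈ c.support, A (c i) i) +
          (starRingEnd ℂ) (∏ i ∈ c.support, A (c i) i))) *
        Polynomial.X ^ (n - σ.support.card) := by
    simp only [_root_.map_add, _root_.map_mul, map_pow, map_neg, _root_.map_one]
    ring
  rw [step, h2, map_zero, mul_zero, zero_mul]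

lemma sum_permTerm_eq_sum_invol (hA1 : A.IsHermitian)
    (hA2 : ∀ i j, G.Adj i j → ‖A i j‖ = 1)
    (hA3 : ∀ i j, ¬ G.Adj i j → A i j = 0)
    (hcyc : ∀ (v : Fin n) (c : G.Walk v v), c.IsCycle →
      (((c.darts.map fun d => A d.fst d.snd).prod)).re = 0) :
    ∑ σ : Equiv.Perm (Fin n), permTerm A σ
      = ∑ σ ∈ Finset.univ.filter (fun σ : Equiv.Perm (Fin n) => σ * σ = 1),
          permTerm A σ := by
  rw [← Finset.sum_filter_add_sum_filter_not Finset.univ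
    (fun σ : Equiv.Perm (Fin n) => σ * σ = 1) (permTerm A)]
  have hzero : ∑ σ ∈ Finset.univ.filter
      (fun σ : Equiv.Perm (Fin n) => ¬ σ * σ = 1), permTerm A σ = 0 := by
    refine Finset.sum_involution (fun σ _ => flipCycle σ) ?_ ?_ ?_ ?_
    · intro σ hσ
      exact (flip_all A hA1 hA2 hA3 hcyc σ (Finset.mem_filter.mp hσ).2).1
    · intro σ hσ _
      exact (flip_all A hA1 hA2 hA3 hcyc σ (Finset.mem_filter.mp hσ).2).2.1
    · intro σ hσ
      simp only [Finset.mem_filter, Finset.mem_univ, true_and]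
      exact (flip_all A hA1 hA2 hA3 hcyc σ (Finset.mem_filter.mp hσ).2).2.2.1
    · intro σ hσ
      exact (flip_all A hA1 hA2 hA3 hcyc σ (Finset.mem_filter.mp hσ).2).2.2.2
  rw [hzero, add_zero]

lemma permTerm_invol (hA1 : A.IsHermitian)
    (hA2 : ∀ i j, G.Adj i j → ‖A i j‖ = 1)
    (hA3 : ∀ i j, ¬ G.Adj i j → A i j = 0)
    (σ : Equiv.Perm (Fin n)) (hσ1 : σ * σ = 1) (j : ℕ) (hj : σ.support.card = 2 * j) :
    permTerm A σ = if (∀ i ∈ σ.support, G.Adj (σ i) i) then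
      Polynomial.C ((-1 : ℂ)^j) * Polynomial.X ^ (n - 2*j) else 0 := by
  have hσ2 : ∀ x, σ (σ x) = x := by
    intro x
    have := congrArg (fun p : Equiv.Perm (Fin n) => p x) hσ1
    simpa [Equiv.Perm.mul_apply] using this
  obtain ⟨j', hj', hsign⟩ := invol_sign_card σ hσ1
  have hjj : j' = j := by omega
  subst hjj
  split_ifs with hadj
  · have hwt : (∏ i ∈ σ.support, A (σ i) i) = 1 := by
      refine Finset.prod_involution (fun a _ => σ a) ?_ ?_ ?_ ?_
      · intro a ha
        show A (σ a) a * A (σ (σ a)) (σ a) = 1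
        rw [hσ2 a]
        rw [show A a (σ a) = (starRingEnd ℂ) (A (σ a) a) from (hA1.apply a (σ a)).symm]
        rw [Complex.mul_conj, ← Complex.sq_norm, hA2 _ _ (hadj a ha)]
        norm_num
      · intro a ha _
        exact Equiv.Perm.mem_support.mp ha
      · intro a ha
        exact Equiv.Perm.apply_mem_support.mpr ha
      · intro a ha
        exact hσ2 a
    rw [permTerm, hwt, hj, hsign, mul_one]
    congr 2
    · push_cast
      rw [pow_mul]
      norm_num
  · push_neg at hadj
    obtain ⟨i, hi, hni⟩ := hadj
    have hz : (∏ i ∈ σ.support, A (σ i) i) = 0 :=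
      Finset.prod_eq_zero hi (hA3 _ _ hni)
    rw [permTerm, hz, mul_zero, map_zero, zero_mul]

end Final

/-- If all cycles of `G` have gain with zero real part, the characteristic
polynomial of the gain adjacency matrix equals the matching polynomial of `G`. -/
theorem charpoly_eq_matchingPolynomial {n : ℕ} (G : SimpleGraph (Fin n))
    (A : Matrix (Fin n) (Fin n) ℂ) (hA : IsGainMatrix G A)
    (hcyc : ∀ (v : Fin n) (c : G.Walk v v), c.IsCycle → (walkGain A c).re = 0) :
    A.charpoly = ∑ j ∈ Finset.range (n / 2 + 1),
      Polynomial.C ((-1 : ℂ) ^ j * (matchCount G j : ℂ)) * Polynomial.X ^ (n - 2 * j) := by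
  classical
  unfold IsGainMatrix at hA
  unfold walkGain at hcyc
  obtain ⟨hA1, hA2, hA3⟩ := hA
  have hA0 : ∀ i, A i i = 0 := fun i => hA3 i i (G.irrefl)
  rw [charpoly_eq_sum_permTerm A hA0, sum_permTerm_eq_sum_invol A hA1 hA2 hA3 hcyc]
  rw [← Finset.sum_fiberwise_of_maps_to (g := fun σ : Equiv.Perm (Fin n) =>
    σ.support.card / 2) (t := Finset.range (n / 2 + 1)) ?_ (permTerm A)]
  · refine Finset.sum_congr rfl fun j hj => ?_
    have hsum : ∀ σ ∈ (Finset.univ.filter fun σ : Equiv.Perm (Fin n) => σ * σ = 1).filter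
        (fun σ => σ.support.card / 2 = j), permTerm A σ
          = if (∀ i ∈ σ.support, G.Adj (σ i) i) then
              Polynomial.C ((-1:ℂ)^j) * Polynomial.X ^ (n - 2*j) else 0 := by
      intro σ hσ
      simp only [Finset.mem_filter] at hσ
      obtain ⟨⟨-, h1⟩, h2⟩ := hσ
      obtain ⟨j', hj', -⟩ := invol_sign_card σ h1
      exact permTerm_invol A hA1 hA2 hA3 σ h1 j (by omega)
    rw [Finset.sum_congr rfl hsum, Finset.sum_ite, Finset.sum_const_zero, add_zero,
      Finset.sum_const]
    have hfeq : (((Finset.univ.filter fun σ : Equiv.Perm (Fin n) => σ * σ = 1).filter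
        (fun σ => σ.support.card / 2 = j)).filter
          (fun σ => ∀ i ∈ σ.support, G.Adj (σ i) i))
        = Finset.univ.filter (fun σ : Equiv.Perm (Fin n) => σ * σ = 1 ∧
            σ.support.card = 2*j ∧ ∀ i ∈ σ.support, G.Adj (σ i) i) := by
      ext σ
      simp only [Finset.mem_filter, Finset.mem_univ, true_and]
      constructor
      · rintro ⟨⟨h1, h2⟩, h3⟩
        obtain ⟨j', hj', -⟩ := invol_sign_card σ h1
        exact ⟨h1, by omega, h3⟩
      · rintro ⟨h1, h2, h3⟩
        exact ⟨⟨h1, by omega⟩, h3⟩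
    rw [hfeq]
    have hcount : (Finset.univ.filter (fun σ : Equiv.Perm (Fin n) => σ * σ = 1 ∧
        σ.support.card = 2*j ∧ ∀ i ∈ σ.support, G.Adj (σ i) i)).card
        = matchCount G j := by
      rw [matchCount]
      exact (matchCount_eq_card j).symm
    rw [hcount, nsmul_eq_mul]
    have hnat : ((matchCount G j : ℕ) : Polynomial ℂ)
        = Polynomial.C ((matchCount G j : ℕ) : ℂ) := by
      simp
    rw [hnat]
    rw [← mul_assoc, ← _root_.map_mul, mul_comm ((matchCount G j : ℕ) : ℂ)]
  · intro σ hσ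
    rw [Finset.mem_range]
    show σ.support.card / 2 < n / 2 + 1
    have h1 : σ.support.card ≤ n := by
      have := Finset.card_le_univ σ.support
      simpa using this
    have h2 : σ.support.card / 2 ≤ n / 2 := Nat.div_le_div_right h1
    omega
end

section
/- Let X = [[Y, A],[B, Z]] be a complex block matrix where Y and Z are square blocks. Then the sum of singular values of X is at least the sum of singular values of Y, with equality if and only if A, B, and Z are all zero matrices. -/
open Matrix
open scoped ComplexOrder

/-- The trace norm (sum of singular values) of a complex square matrix:
the trace of `(M Mᴴ)^(1/2)`. -/
noncomputable def traceNorm {ι : Type*} [Fintype ι] [DecidableEq ι]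
    (M : Matrix ι ι ℂ) : ℝ :=
  (((Matrix.posSemidef_self_mul_conjTranspose M).1.eigenvectorUnitary.1 *
      diagonal (((↑) : ℝ → ℂ) ∘ (√·) ∘ (Matrix.posSemidef_self_mul_conjTranspose M).1.eigenvalues) *
      (star (Matrix.posSemidef_self_mul_conjTranspose M).1.eigenvectorUnitary :
        Matrix ι ι ℂ)).trace).re

namespace TN

variable {ι κ ι₁ ι₂ κ₁ κ₂ : Type*} [Fintype ι] [Fintype κ]
  [Fintype ι₁] [Fintype ι₂] [Fintype κ₁] [Fintype κ₂]

noncomputable def nrm (v : ι → ℂ) : ℝ := ‖(WithLp.equiv 2 (ι → ℂ)).symm v‖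

lemma nrm_nonneg (v : ι → ℂ) : 0 ≤ nrm v := norm_nonneg _

lemma nrm_sq (v : ι → ℂ) : nrm v ^ 2 = (star v ⬝ᵥ v).re := by
  have := inner_self_eq_norm_sq (𝕜 := ℂ) ((WithLp.equiv 2 (ι → ℂ)).symm v)
  rw [EuclideanSpace.inner_eq_star_dotProduct, dotProduct_comm] at this
  simpa [nrm] using this.symm

lemma abs_dot_le (v w : ι → ℂ) : ‖star v ⬝ᵥ w‖ ≤ nrm v * nrm w := by
  have := norm_inner_le_norm (𝕜 := ℂ)
    ((WithLp.equiv 2 (ι → ℂ)).symm v) ((WithLp.equiv 2 (ι → ℂ)).symm w)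
  rw [EuclideanSpace.inner_eq_star_dotProduct, dotProduct_comm] at this
  simpa [nrm] using this

lemma nrm_le_of_sq_le_sq {v : ι → ℂ} {w : κ → ℂ} (h : nrm v ^ 2 ≤ nrm w ^ 2) :
    nrm v ≤ nrm w := by
  nlinarith [nrm_nonneg v, nrm_nonneg w]

lemma nrm_sq_eq_sum (v : ι → ℂ) : nrm v ^ 2 = ∑ i, Complex.normSq (v i) := by
  rw [nrm_sq, dotProduct, Complex.re_sum]
  refine Finset.sum_congr rfl fun i _ => ?_
  simp [Complex.normSq_apply, Complex.mul_re, mul_comm]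

lemma nrm_smul (c : ℂ) (v : ι → ℂ) : nrm (c • v) = ‖c‖ * nrm v := by
  have h : (WithLp.equiv 2 (ι → ℂ)).symm (c • v) =
      c • (WithLp.equiv 2 (ι → ℂ)).symm v := rfl
  rw [nrm, h, norm_smul]; rfl

lemma nrm_elim_sq (u : ι → ℂ) (v : κ → ℂ) :
    nrm (Sum.elim u v) ^ 2 = nrm u ^ 2 + nrm v ^ 2 := by
  simp [nrm_sq_eq_sum, Fintype.sum_sum_type]

/-- `star v ⬝ᵥ N *ᵥ w = star (Nᴴ *ᵥ v) ⬝ᵥ w` -/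
lemma dot_step (N : Matrix ι κ ℂ) (v : ι → ℂ) (w : κ → ℂ) :
    star v ⬝ᵥ (N *ᵥ w) = star (Nᴴ *ᵥ v) ⬝ᵥ w := by
  rw [Matrix.dotProduct_mulVec, Matrix.star_mulVec, conjTranspose_conjTranspose]

lemma nrm_mulVec_le (N : Matrix κ ι ℂ) (x : ι → ℂ) :
    nrm (N *ᵥ x) ≤ Real.sqrt (∑ i, ∑ j, Complex.normSq (N i j)) * nrm x := by
  set S : ℝ := ∑ i, ∑ j, Complex.normSq (N i j) with hSdef
  have hS : (0:ℝ) ≤ S :=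
    Finset.sum_nonneg fun i _ => Finset.sum_nonneg fun j _ => Complex.normSq_nonneg _
  have h2 : nrm (N *ᵥ x) ^ 2 ≤ S * nrm x ^ 2 := by
    rw [nrm_sq_eq_sum, hSdef, Finset.sum_mul]
    refine Finset.sum_le_sum fun i _ => ?_
    have hrow : (N *ᵥ x) i = star (star (N i)) ⬝ᵥ x := by
      simp [Matrix.mulVec, dotProduct]
    have hcs := abs_dot_le (star (N i)) x
    have hrs : nrm (star (N i)) ^ 2 = ∑ j, Complex.normSq (N i j) := by
      rw [nrm_sq_eq_sum]
      simp [Complex.normSq_conj]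
    have h0 : Complex.normSq ((N *ᵥ x) i) = ‖star (star (N i)) ⬝ᵥ x‖ ^ 2 := by
      rw [hrow, Complex.sq_norm]
    rw [h0]
    calc ‖star (star (N i)) ⬝ᵥ x‖ ^ 2 ≤ (nrm (star (N i)) * nrm x) ^ 2 := by
          have := norm_nonneg (star (star (N i)) ⬝ᵥ x)
          nlinarith [nrm_nonneg (star (N i)), nrm_nonneg x]
      _ = (∑ j, Complex.normSq (N i j)) * nrm x ^ 2 := by rw [mul_pow, hrs]
  have := Real.sqrt_le_sqrt h2
  rw [Real.sqrt_sq (nrm_nonneg _), Real.sqrt_mul hS, Real.sqrt_sq (nrm_nonneg x)] at this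
  exact this


lemma nrm_zero : nrm (0 : ι → ℂ) = 0 := by
  have h := nrm_sq_eq_sum (0 : ι → ℂ)
  simp at h
  have := nrm_nonneg (0 : ι → ℂ)
  nlinarith

/-- `C` is a contraction. -/
def IsContr (C : Matrix κ ι ℂ) : Prop := ∀ x : ι → ℂ, nrm (C *ᵥ x) ≤ nrm x

lemma isContr_zero : IsContr (0 : Matrix κ ι ℂ) := fun x => by
  rw [Matrix.zero_mulVec, nrm_zero]; exact nrm_nonneg x

lemma isContr_conjTranspose {C : Matrix κ ι ℂ} (h : IsContr C) : IsContr Cᴴ := by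
  intro x
  set w := Cᴴ *ᵥ x with hw
  have key : nrm w ^ 2 ≤ nrm x * nrm (C *ᵥ w) := by
    have e1 : star x ⬝ᵥ (C *ᵥ w) = star w ⬝ᵥ w := by rw [dot_step]
    have e2 : nrm w ^ 2 = (star x ⬝ᵥ (C *ᵥ w)).re := by rw [e1, nrm_sq]
    calc nrm w ^ 2 = (star x ⬝ᵥ (C *ᵥ w)).re := e2
      _ ≤ ‖star x ⬝ᵥ (C *ᵥ w)‖ := Complex.re_le_norm _
      _ ≤ nrm x * nrm (C *ᵥ w) := abs_dot_le _ _
  have h2 : nrm (C *ᵥ w) ≤ nrm w := h w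
  by_cases hw0 : nrm w = 0
  · rw [hw0]; exact nrm_nonneg x
  · have hwpos : 0 < nrm w := lt_of_le_of_ne (nrm_nonneg w) (Ne.symm hw0)
    nlinarith [nrm_nonneg x]

lemma isContr_blockdiag {P : Matrix κ₁ ι₁ ℂ} {Q : Matrix κ₂ ι₂ ℂ}
    (hP : IsContr P) (hQ : IsContr Q) : IsContr (fromBlocks P 0 0 Q) := by
  intro x
  have hx : nrm x ^ 2 = nrm (x ∘ Sum.inl) ^ 2 + nrm (x ∘ Sum.inr) ^ 2 := by
    conv_lhs => rw [← Sum.elim_comp_inl_inr x]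
    rw [nrm_elim_sq]
  rw [fromBlocks_mulVec]
  apply nrm_le_of_sq_le_sq
  rw [nrm_elim_sq, hx]
  simp only [Matrix.zero_mulVec, add_zero, zero_add]
  have h1 := hP (x ∘ Sum.inl); have h2 := hQ (x ∘ Sum.inr)
  have := nrm_nonneg (P *ᵥ (x ∘ Sum.inl)); have := nrm_nonneg (Q *ᵥ (x ∘ Sum.inr))
  have := nrm_nonneg (x ∘ Sum.inl); have := nrm_nonneg (x ∘ Sum.inr)
  nlinarith

lemma isContr_col {s t : ℝ} (hs : 0 ≤ s) (ht : 0 ≤ t) (hst : s^2 + t^2 ≤ 1)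
    {P : Matrix κ₁ ι₁ ℂ} {E : Matrix κ₂ ι₁ ℂ} (hP : IsContr P) (hE : IsContr E) :
    IsContr (fromBlocks ((s:ℂ) • P) 0 ((t:ℂ) • E) (0 : Matrix κ₂ ι₂ ℂ)) := by
  intro x
  have hx : nrm x ^ 2 = nrm (x ∘ Sum.inl) ^ 2 + nrm (x ∘ Sum.inr) ^ 2 := by
    conv_lhs => rw [← Sum.elim_comp_inl_inr x]
    rw [nrm_elim_sq]
  rw [fromBlocks_mulVec]
  apply nrm_le_of_sq_le_sq
  rw [nrm_elim_sq, hx]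
  simp only [Matrix.zero_mulVec, add_zero, Matrix.smul_mulVec]
  rw [nrm_smul, nrm_smul]
  have has : ‖(s:ℂ)‖ = s := by rw [Complex.norm_of_nonneg hs]
  have hat : ‖(t:ℂ)‖ = t := by rw [Complex.norm_of_nonneg ht]
  rw [has, hat]
  have h1 := hP (x ∘ Sum.inl); have h2 := hE (x ∘ Sum.inl)
  have ha2 : nrm (P *ᵥ (x ∘ Sum.inl)) ^ 2 ≤ nrm (x ∘ Sum.inl) ^ 2 := by
    nlinarith [nrm_nonneg (P *ᵥ (x ∘ Sum.inl)), nrm_nonneg (x ∘ Sum.inl)]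
  have hb2 : nrm (E *ᵥ (x ∘ Sum.inl)) ^ 2 ≤ nrm (x ∘ Sum.inl) ^ 2 := by
    nlinarith [nrm_nonneg (E *ᵥ (x ∘ Sum.inl)), nrm_nonneg (x ∘ Sum.inl)]
  nlinarith [mul_le_mul_of_nonneg_left ha2 (sq_nonneg s),
    mul_le_mul_of_nonneg_left hb2 (sq_nonneg t),
    mul_le_mul_of_nonneg_right hst (sq_nonneg (nrm (x ∘ Sum.inl))),
    sq_nonneg (nrm (x ∘ Sum.inr))]

lemma isContr_row {s t : ℝ} (hs : 0 ≤ s) (ht : 0 ≤ t) (hst : s^2 + t^2 ≤ 1)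
    {P : Matrix κ₁ ι₁ ℂ} {F : Matrix κ₁ ι₂ ℂ} (hP : IsContr P) (hF : IsContr F) :
    IsContr (fromBlocks ((s:ℂ) • P) ((t:ℂ) • F) 0 (0 : Matrix κ₂ ι₂ ℂ)) := by
  have h := isContr_conjTranspose
    (isContr_col (ι₂ := κ₂) hs ht hst (isContr_conjTranspose hP) (isContr_conjTranspose hF))
  have e : (fromBlocks ((s:ℂ) • Pᴴ) 0 ((t:ℂ) • Fᴴ) (0 : Matrix ι₂ κ₂ ℂ))ᴴ
      = fromBlocks ((s:ℂ) • P) ((t:ℂ) • F) 0 (0 : Matrix κ₂ ι₂ ℂ) := by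
    rw [fromBlocks_conjTranspose]
    simp [Matrix.conjTranspose_smul, Complex.conj_ofReal]
  rwa [e] at h

lemma isContr_block11 {C : Matrix (κ₁ ⊕ κ₂) (ι₁ ⊕ ι₂) ℂ} (h : IsContr C) :
    IsContr C.toBlocks₁₁ := by
  intro x
  have h1 := h (Sum.elim x 0)
  rw [← fromBlocks_toBlocks C, fromBlocks_mulVec] at h1
  have h1' := pow_le_pow_left₀ (nrm_nonneg _) h1 2
  rw [nrm_elim_sq, nrm_elim_sq] at h1'
  simp only [Sum.elim_comp_inl, Sum.elim_comp_inr, Matrix.mulVec_zero, add_zero,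
    nrm_zero] at h1'
  apply nrm_le_of_sq_le_sq
  nlinarith [sq_nonneg (nrm (C.toBlocks₂₁ *ᵥ x))]

lemma exists_contr_smul (N : Matrix κ ι ℂ) :
    ∃ ε : ℝ, 0 < ε ∧ IsContr ((ε:ℂ) • N) := by
  set S : ℝ := ∑ i, ∑ j, Complex.normSq (N i j) with hSdef
  have hS : (0:ℝ) ≤ S :=
    Finset.sum_nonneg fun i _ => Finset.sum_nonneg fun j _ => Complex.normSq_nonneg _
  refine ⟨(Real.sqrt S + 1)⁻¹, by positivity, fun x => ?_⟩
  rw [Matrix.smul_mulVec, nrm_smul,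
    Complex.norm_of_nonneg (by positivity)]
  have h1 := nrm_mulVec_le N x
  have h2 : Real.sqrt S ≤ Real.sqrt S + 1 := by linarith
  have h3 : (0:ℝ) ≤ Real.sqrt S := Real.sqrt_nonneg _
  have h4 : (0:ℝ) < Real.sqrt S + 1 := by linarith
  calc (Real.sqrt S + 1)⁻¹ * nrm (N *ᵥ x) ≤ (Real.sqrt S + 1)⁻¹ * (Real.sqrt S * nrm x) := by
        apply mul_le_mul_of_nonneg_left h1 (by positivity)
    _ ≤ nrm x := by
        rw [inv_mul_le_iff₀ h4]
        have := nrm_nonneg x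
        nlinarith


section Spectral

variable {ι : Type*} [Fintype ι] [DecidableEq ι]

/-- Column entry formula. -/
lemma entry_eq (U N : Matrix ι ι ℂ) (i : ι) :
    (star U * N * U) i i = star (fun j => U j i) ⬝ᵥ (N *ᵥ (fun j => U j i)) := by
  simp only [Matrix.mul_apply, Matrix.mulVec, dotProduct, Matrix.star_apply,
    Pi.star_apply, Finset.sum_mul, Finset.mul_sum, mul_assoc]
  rw [Finset.sum_comm]

lemma traceNorm_eq_sum (M : Matrix ι ι ℂ) :
    traceNorm M = ∑ i, Real.sqrt ((posSemidef_self_mul_conjTranspose M).1.eigenvalues i) := by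
  set h := posSemidef_self_mul_conjTranspose M
  have hU : (star (h.1.eigenvectorUnitary : Matrix ι ι ℂ)) *
      (h.1.eigenvectorUnitary : Matrix ι ι ℂ) = 1 :=
    Unitary.coe_star_mul_self h.1.eigenvectorUnitary
  unfold traceNorm
  rw [Matrix.trace_mul_cycle, hU, Matrix.one_mul, Matrix.trace_diagonal]
  rw [Complex.re_sum]
  simp

lemma traceNorm_nonneg (M : Matrix ι ι ℂ) : 0 ≤ traceNorm M := by
  rw [traceNorm_eq_sum]
  exact Finset.sum_nonneg fun i _ => Real.sqrt_nonneg _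

lemma eq_zero_of_traceNorm_eq_zero {M : Matrix ι ι ℂ} (hM : traceNorm M = 0) : M = 0 := by
  set h := posSemidef_self_mul_conjTranspose M
  rw [traceNorm_eq_sum] at hM
  have hz : ∀ i, h.1.eigenvalues i = 0 := by
    intro i
    have h0 := (Finset.sum_eq_zero_iff_of_nonneg
      (fun i _ => Real.sqrt_nonneg (h.1.eigenvalues i))).mp hM i (Finset.mem_univ i)
    have := h.eigenvalues_nonneg i
    nlinarith [Real.sq_sqrt this, h0]
  have hMM : M * Mᴴ = 0 := by
    have hst := h.1.spectral_theorem
    have hfz : (RCLike.ofReal ∘ h.1.eigenvalues : ι → ℂ) = fun _ => 0 := by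
      funext i
      simp [hz i]
    rw [hfz, Matrix.diagonal_zero] at hst
    simpa using hst
  exact Matrix.self_mul_conjTranspose_eq_zero.mp hMM

lemma dual_le (M : Matrix ι ι ℂ) {C : Matrix ι ι ℂ} (hC : IsContr C) :
    (Matrix.trace (C * M)).re ≤ traceNorm M := by
  set h := posSemidef_self_mul_conjTranspose M
  set U : Matrix ι ι ℂ := (h.1.eigenvectorUnitary : Matrix ι ι ℂ) with hUdef
  have hU1 : star U * U = 1 := Unitary.coe_star_mul_self h.1.eigenvectorUnitary
  have hU2 : U * star U = 1 := Unitary.coe_mul_star_self h.1.eigenvectorUnitary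
  have hdiag : star U * (M * Mᴴ) * U = Matrix.diagonal (RCLike.ofReal ∘ h.1.eigenvalues) :=
    by have := h.1.conjStarAlgAut_star_eigenvectorUnitary; rwa [Unitary.conjStarAlgAut_star_apply] at this
  -- Step A
  have hA : Matrix.trace (C * M) = ∑ i, star (fun j => U j i) ⬝ᵥ ((M * C) *ᵥ (fun j => U j i)) := by
    rw [Matrix.trace_mul_comm]
    have : Matrix.trace (M * C) = Matrix.trace (star U * (M * C) * U) := by
      rw [Matrix.trace_mul_cycle, ← Matrix.mul_assoc, hU2, Matrix.one_mul]
    rw [this]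
    rw [Matrix.trace]
    refine Finset.sum_congr rfl fun i _ => ?_
    exact entry_eq U (M * C) i
  -- norms of columns
  have hvnrm : ∀ i : ι, nrm (fun j => U j i) = 1 := by
    intro i
    have e1 := entry_eq U 1 i
    rw [Matrix.mul_one, hU1, Matrix.one_mulVec] at e1
    have h2 : nrm (fun j => U j i) ^ 2 = 1 := by
      rw [nrm_sq, ← e1, Matrix.one_apply_eq]
      rfl
    nlinarith [nrm_nonneg (fun j => U j i)]
  have hMv : ∀ i : ι, nrm (Mᴴ *ᵥ (fun j => U j i)) = Real.sqrt (h.1.eigenvalues i) := by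
    intro i
    have e1 : star (Mᴴ *ᵥ (fun j => U j i)) ⬝ᵥ (Mᴴ *ᵥ (fun j => U j i))
        = star (fun j => U j i) ⬝ᵥ ((M * Mᴴ) *ᵥ (fun j => U j i)) := by
      rw [← Matrix.mulVec_mulVec]
      exact (dot_step M _ _).symm
    have e2 := (entry_eq U (M * Mᴴ) i).symm
    have e3 : nrm (Mᴴ *ᵥ (fun j => U j i)) ^ 2 = h.1.eigenvalues i := by
      rw [nrm_sq, e1, e2, hdiag, Matrix.diagonal_apply_eq]
      rfl
    rw [← e3, Real.sqrt_sq (nrm_nonneg _)]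
  -- Step B
  have hB : ∀ i : ι, (star (fun j => U j i) ⬝ᵥ ((M * C) *ᵥ (fun j => U j i))).re
      ≤ Real.sqrt (h.1.eigenvalues i) := by
    intro i
    have e1 : (M * C) *ᵥ (fun j => U j i) = M *ᵥ (C *ᵥ (fun j => U j i)) :=
      (Matrix.mulVec_mulVec _ _ _).symm
    rw [e1, dot_step]
    calc (star (Mᴴ *ᵥ (fun j => U j i)) ⬝ᵥ (C *ᵥ (fun j => U j i))).re
        ≤ ‖star (Mᴴ *ᵥ (fun j => U j i)) ⬝ᵥ (C *ᵥ (fun j => U j i))‖ :=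
          Complex.re_le_norm _
      _ ≤ nrm (Mᴴ *ᵥ (fun j => U j i)) * nrm (C *ᵥ (fun j => U j i)) := abs_dot_le _ _
      _ ≤ Real.sqrt (h.1.eigenvalues i) * 1 := by
          refine mul_le_mul (le_of_eq (hMv i)) ?_ (nrm_nonneg _) (Real.sqrt_nonneg _)
          calc nrm (C *ᵥ (fun j => U j i)) ≤ nrm (fun j => U j i) := hC _
            _ = 1 := hvnrm i
      _ = Real.sqrt (h.1.eigenvalues i) := mul_one _
  rw [hA, Complex.re_sum, traceNorm_eq_sum]
  exact Finset.sum_le_sum fun i _ => hB i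


lemma dot_CtC {κ : Type*} [Fintype κ] (C : Matrix κ ι ℂ) (x : ι → ℂ) :
    star (C *ᵥ x) ⬝ᵥ (C *ᵥ x) = star x ⬝ᵥ ((Cᴴ * C) *ᵥ x) := by
  have h1 := dot_step Cᴴ x (C *ᵥ x)
  rw [conjTranspose_conjTranspose] at h1
  rw [← Matrix.mulVec_mulVec]
  exact h1.symm

lemma conj_diag_mul {U : Matrix ι ι ℂ} (hU1 : star U * U = 1) (d e : ι → ℂ) :
    (U * Matrix.diagonal d * star U) * (U * Matrix.diagonal e * star U)
      = U * Matrix.diagonal (d * e) * star U := by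
  have h1 : star U * (U * (Matrix.diagonal e * star U)) = Matrix.diagonal e * star U := by
    rw [← Matrix.mul_assoc, hU1, Matrix.one_mul]
  calc (U * Matrix.diagonal d * star U) * (U * Matrix.diagonal e * star U)
      = U * (Matrix.diagonal d * (star U * (U * (Matrix.diagonal e * star U)))) := by
        simp only [Matrix.mul_assoc]
    _ = U * (Matrix.diagonal d * (Matrix.diagonal e * star U)) := by rw [h1]
    _ = U * (Matrix.diagonal d * Matrix.diagonal e * star U) := by
        rw [Matrix.mul_assoc (Matrix.diagonal d)]
    _ = U * Matrix.diagonal (d * e) * star U := by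
        rw [Matrix.diagonal_mul_diagonal, Matrix.mul_assoc]
        rfl

lemma quad_le {U : Matrix ι ι ℂ} (hU2 : U * star U = 1) {d : ι → ℂ}
    (hd : ∀ i, ∃ r : ℝ, 0 ≤ r ∧ r ≤ 1 ∧ d i = (r : ℂ)) (x : ι → ℂ) :
    (star x ⬝ᵥ ((U * Matrix.diagonal d * star U) *ᵥ x)).re ≤ nrm x ^ 2 := by
  set y := star U *ᵥ x with hy
  have h1 : (U * Matrix.diagonal d * star U) *ᵥ x = U *ᵥ (Matrix.diagonal d *ᵥ y) := by
    rw [← Matrix.mulVec_mulVec, ← Matrix.mulVec_mulVec]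
  have h2 : star x ⬝ᵥ (U *ᵥ (Matrix.diagonal d *ᵥ y)) =
      star y ⬝ᵥ (Matrix.diagonal d *ᵥ y) := by
    have := dot_step U x (Matrix.diagonal d *ᵥ y)
    rw [this, ← Matrix.star_eq_conjTranspose]
  have hynrm : nrm y ^ 2 = nrm x ^ 2 := by
    rw [nrm_sq, nrm_sq, hy, dot_CtC]
    have hUU : (star U)ᴴ * star U = 1 := by
      rw [← Matrix.star_eq_conjTranspose, star_star, hU2]
    rw [hUU, Matrix.one_mulVec]
  rw [h1, h2]
  have h3 : (star y ⬝ᵥ (Matrix.diagonal d *ᵥ y)).re = ∑ i, (d i).re * Complex.normSq (y i) := by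
    rw [dotProduct, Complex.re_sum]
    refine Finset.sum_congr rfl fun i _ => ?_
    obtain ⟨r, _, _, hr⟩ := hd i
    rw [Matrix.mulVec_diagonal]
    simp [hr, Complex.normSq_apply, Complex.mul_re, Complex.mul_im]
    ring
  rw [h3, ← hynrm, nrm_sq_eq_sum]
  refine Finset.sum_le_sum fun i _ => ?_
  obtain ⟨r, hr0, hr1, hr⟩ := hd i
  rw [hr]
  have := Complex.normSq_nonneg (y i)
  simp only [Complex.ofReal_re]
  nlinarith

lemma attain (M : Matrix ι ι ℂ) :
    ∃ C : Matrix ι ι ℂ, IsContr C ∧ (Matrix.trace (C * M)).re = traceNorm M := by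
  set h := posSemidef_self_mul_conjTranspose M
  set U : Matrix ι ι ℂ := (h.1.eigenvectorUnitary : Matrix ι ι ℂ) with hUdef
  have hU1 : star U * U = 1 := Unitary.coe_star_mul_self h.1.eigenvectorUnitary
  have hU2 : U * star U = 1 := Unitary.coe_mul_star_self h.1.eigenvectorUnitary
  have hlnn : ∀ i, 0 ≤ h.1.eigenvalues i := fun i => h.eigenvalues_nonneg i
  set lam : ι → ℝ := h.1.eigenvalues with hlam
  set hfun : ι → ℂ := fun i => ((Real.sqrt (lam i))⁻¹ : ℝ) with hhfun
  set G : Matrix ι ι ℂ := U * Matrix.diagonal hfun * star U with hG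
  have hspec : M * Mᴴ = U * Matrix.diagonal ((RCLike.ofReal (K := ℂ)) ∘ lam) * star U := h.1.spectral_theorem
  have htrU : ∀ d : ι → ℂ, Matrix.trace (U * Matrix.diagonal d * star U) = ∑ i, d i := by
    intro d
    rw [Matrix.trace_mul_cycle, hU1, Matrix.one_mul, Matrix.trace_diagonal]
  refine ⟨Mᴴ * G, ?_, ?_⟩
  · -- contraction
    intro x
    apply nrm_le_of_sq_le_sq
    have hGH : Gᴴ = G := by
      rw [hG]
      rw [Matrix.conjTranspose_mul, Matrix.conjTranspose_mul, Matrix.diagonal_conjTranspose]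
      rw [← Matrix.star_eq_conjTranspose, star_star]
      have : star hfun = hfun := by
        funext i
        simp [hhfun, Complex.star_def, Complex.conj_ofReal]
      rw [this, ← Matrix.star_eq_conjTranspose, Matrix.mul_assoc]
    have hCtC : (Mᴴ * G)ᴴ * (Mᴴ * G) =
        U * Matrix.diagonal ((hfun * ((RCLike.ofReal (K := ℂ)) ∘ lam)) * hfun) * star U := by
      rw [Matrix.conjTranspose_mul, hGH, conjTranspose_conjTranspose]
      have e1 : G * M * (Mᴴ * G) = G * (M * Mᴴ) * G := by
        simp only [Matrix.mul_assoc]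
      rw [e1, hspec, hG, conj_diag_mul hU1, conj_diag_mul hU1]
    rw [nrm_sq, nrm_sq, dot_CtC, hCtC]
    have hd : ∀ i, ∃ r : ℝ, 0 ≤ r ∧ r ≤ 1 ∧ ((hfun * ((RCLike.ofReal (K := ℂ)) ∘ lam)) * hfun) i = (r : ℂ) := by
      intro i
      refine ⟨(Real.sqrt (lam i))⁻¹ * lam i * (Real.sqrt (lam i))⁻¹, ?_, ?_, ?_⟩
      · have := Real.sqrt_nonneg (lam i)
        have := hlnn i
        positivity
      · rcases eq_or_lt_of_le (hlnn i) with hz | hp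
        · rw [← hz]
          simp
        · have hs : 0 < Real.sqrt (lam i) := Real.sqrt_pos.mpr hp
          have hss : Real.sqrt (lam i) * Real.sqrt (lam i) = lam i := Real.mul_self_sqrt (hlnn i)
          have : (Real.sqrt (lam i))⁻¹ * lam i * (Real.sqrt (lam i))⁻¹ = 1 := by
            field_simp
            rw [Real.sq_sqrt (hlnn i)]
          rw [this]
      · simp [hhfun, Pi.mul_apply]
    have := quad_le hU2 hd x
    rw [nrm_sq] at this
    exact this
  · -- trace value
    have htr : Matrix.trace ((Mᴴ * G) * M) = Matrix.trace ((M * Mᴴ) * G) := by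
      rw [Matrix.trace_mul_comm, ← Matrix.mul_assoc]
    rw [htr, hspec, hG, conj_diag_mul hU1, htrU, traceNorm_eq_sum, Complex.re_sum]
    refine Finset.sum_congr rfl fun i _ => ?_
    have e1 : (((RCLike.ofReal (K := ℂ)) ∘ lam) * hfun) i = ((lam i * (Real.sqrt (lam i))⁻¹ : ℝ) : ℂ) := by
      simp [hhfun, Pi.mul_apply]
    rw [e1, Complex.ofReal_re, ← div_eq_mul_inv, Real.div_sqrt]

end Spectral

section TraceBits

variable {ι κ ι₁ ι₂ : Type*} [Fintype ι] [Fintype κ] [Fintype ι₁] [Fintype ι₂]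

lemma trace_fromBlocks' (P : Matrix ι₁ ι₁ ℂ) (Q : Matrix ι₁ ι₂ ℂ)
    (R : Matrix ι₂ ι₁ ℂ) (S : Matrix ι₂ ι₂ ℂ) :
    Matrix.trace (Matrix.fromBlocks P Q R S) = Matrix.trace P + Matrix.trace S := by
  simp [Matrix.trace, Fintype.sum_sum_type, Matrix.fromBlocks, Matrix.diag]

lemma trace_conjTranspose_mul_self_re (N : Matrix κ ι ℂ) :
    (Matrix.trace (Nᴴ * N)).re = ∑ i, ∑ j, Complex.normSq (N j i) := by
  have hdiag : ∀ i, ((Nᴴ * N) i i).re = ∑ j, Complex.normSq (N j i) := by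
    intro i
    rw [Matrix.mul_apply, Complex.re_sum]
    refine Finset.sum_congr rfl fun j _ => ?_
    simp [Matrix.conjTranspose_apply, Complex.normSq_apply, Complex.mul_re, mul_comm]
  rw [Matrix.trace, Complex.re_sum]
  exact Finset.sum_congr rfl fun i _ => hdiag i

lemma sum_normSq_pos {N : Matrix κ ι ℂ} (hN : N ≠ 0) :
    0 < ∑ i, ∑ j, Complex.normSq (N j i) := by
  by_contra hle
  push_neg at hle
  have hz : ∀ i ∈ (Finset.univ : Finset ι), ∑ j, Complex.normSq (N j i) = 0 := by
    have h0 : ∑ i, ∑ j, Complex.normSq (N j i) = 0 := le_antisymm hle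
      (Finset.sum_nonneg fun i _ => Finset.sum_nonneg fun j _ => Complex.normSq_nonneg _)
    exact (Finset.sum_eq_zero_iff_of_nonneg
      (fun i _ => Finset.sum_nonneg fun j _ => Complex.normSq_nonneg _)).mp h0
  apply hN
  ext j i
  have h1 := (Finset.sum_eq_zero_iff_of_nonneg
    (fun j _ => Complex.normSq_nonneg (N j i))).mp (hz i (Finset.mem_univ i)) j
    (Finset.mem_univ j)
  simpa [Complex.normSq_eq_zero] using h1

lemma re_ofReal_smul (s : ℝ) (z : ℂ) : ((s : ℂ) • z).re = s * z.re := by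
  rw [smul_eq_mul, Complex.re_ofReal_mul]

end TraceBits

end TN

set_option maxHeartbeats 1000000 in
open TN in
/-- For a block matrix `X = [[Y, A], [B, Z]]` with square diagonal blocks, the sum
of singular values of `X` is at least that of `Y`, with equality iff `A`, `B`, `Z`
are all zero. -/
theorem traceNorm_fromBlocks_ge {m k : ℕ}
    (Y : Matrix (Fin m) (Fin m) ℂ) (A : Matrix (Fin m) (Fin k) ℂ)
    (B : Matrix (Fin k) (Fin m) ℂ) (Z : Matrix (Fin k) (Fin k) ℂ) :
    traceNorm Y ≤ traceNorm (Matrix.fromBlocks Y A B Z) ∧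
      (traceNorm (Matrix.fromBlocks Y A B Z) = traceNorm Y ↔
        A = 0 ∧ B = 0 ∧ Z = 0) := by
  classical
  obtain ⟨C₀, hC₀, hC₀e⟩ := attain Y
  set X := Matrix.fromBlocks Y A B Z with hX
  -- Part 1 : the inequality
  have hmain : traceNorm Y ≤ traceNorm X := by
    have hcontr : IsContr (Matrix.fromBlocks C₀ 0 0 (0 : Matrix (Fin k) (Fin k) ℂ)) :=
      isContr_blockdiag hC₀ isContr_zero
    have hle := dual_le X hcontr
    have htr : Matrix.fromBlocks C₀ 0 0 (0 : Matrix (Fin k) (Fin k) ℂ) * X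
        = Matrix.fromBlocks (C₀ * Y) (C₀ * A) 0 0 := by
      rw [hX, Matrix.fromBlocks_multiply]
      simp
    rw [htr, trace_fromBlocks', Matrix.trace_zero, add_zero, hC₀e] at hle
    exact hle
  refine ⟨hmain, ?_, ?_⟩
  · intro heq
    have ha : 0 ≤ traceNorm Y := traceNorm_nonneg Y
    -- Z = 0
    have hZ : Z = 0 := by
      obtain ⟨W, hW, hWe⟩ := attain Z
      have hle := dual_le X (isContr_blockdiag hC₀ hW)
      have htr : Matrix.fromBlocks C₀ 0 0 W * X
          = Matrix.fromBlocks (C₀ * Y) (C₀ * A) (W * B) (W * Z) := by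
        rw [hX, Matrix.fromBlocks_multiply]
        simp
      rw [htr, trace_fromBlocks', Complex.add_re, hC₀e, hWe, heq] at hle
      have : traceNorm Z = 0 :=
        le_antisymm (by linarith) (traceNorm_nonneg Z)
      exact eq_zero_of_traceNorm_eq_zero this
    -- A = 0
    have hA : A = 0 := by
      by_contra hA0
      obtain ⟨ε, hε, hεc⟩ := exists_contr_smul (Aᴴ)
      set b : ℝ := ε * (Matrix.trace (Aᴴ * A)).re with hb
      have hbpos : 0 < b := by
        rw [hb, trace_conjTranspose_mul_self_re]
        exact mul_pos hε (sum_normSq_pos hA0)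
      set a : ℝ := traceNorm Y with haa
      set t : ℝ := min (1/2 : ℝ) (b / (2*(a+1))) with htdef
      have ht0 : 0 < t := lt_min (by norm_num) (by positivity)
      have ht1 : t ≤ 1/2 := min_le_left _ _
      have ht2 : t ≤ b / (2*(a+1)) := min_le_right _ _
      have htsq : (0:ℝ) ≤ 1 - t^2 := by nlinarith
      set s : ℝ := Real.sqrt (1 - t^2) with hsdef
      have hs0 : 0 ≤ s := Real.sqrt_nonneg _
      have hssq : s^2 = 1 - t^2 := Real.sq_sqrt htsq
      have hst : s^2 + t^2 ≤ 1 := by rw [hssq]; ring_nf; linarith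
      have hcontr := isContr_col (ι₂ := Fin k) hs0 ht0.le hst hC₀ hεc
      have hle := dual_le X hcontr
      have htr : Matrix.fromBlocks ((s:ℂ) • C₀) 0 ((t:ℂ) • ((ε:ℂ) • Aᴴ))
            (0 : Matrix (Fin k) (Fin k) ℂ) * X
          = Matrix.fromBlocks ((s:ℂ) • (C₀ * Y)) ((s:ℂ) • (C₀ * A))
            ((t:ℂ) • (((ε:ℂ) • Aᴴ) * Y)) ((t:ℂ) • (((ε:ℂ) • Aᴴ) * A)) := by
        rw [hX, Matrix.fromBlocks_multiply]
        simp [Matrix.smul_mul]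
      rw [htr, trace_fromBlocks', Complex.add_re, Matrix.trace_smul, Matrix.trace_smul,
        re_ofReal_smul, re_ofReal_smul, hC₀e, heq] at hle
      have hre2 : (Matrix.trace (((ε:ℂ) • Aᴴ) * A)).re = ε * (Matrix.trace (Aᴴ * A)).re := by
        rw [Matrix.smul_mul, Matrix.trace_smul, re_ofReal_smul]
      rw [hre2] at hle
      -- hle : s * a + t * (ε * tr) ≤ a
      have hle' : s * a + t * b ≤ a := by rw [hb]; exact hle
      have hsge : 1 - t^2 ≤ s := by nlinarith
      have h2 : t * b ≤ a * t^2 := by nlinarith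
      have h3 : b ≤ a * t := by nlinarith
      have h4 : a * t ≤ b / 2 := by
        calc a * t ≤ a * (b / (2*(a+1))) := mul_le_mul_of_nonneg_left ht2 ha
          _ = (a * b) / (2*(a+1)) := by ring
          _ ≤ b / 2 := by
            rw [div_le_div_iff₀ (by positivity) (by norm_num)]
            nlinarith
      linarith
    -- B = 0
    have hB : B = 0 := by
      by_contra hB0
      obtain ⟨ε, hε, hεc⟩ := exists_contr_smul (Bᴴ)
      set b : ℝ := ε * (Matrix.trace (Bᴴ * B)).re with hb
      have hbpos : 0 < b := by
        rw [hb, trace_conjTranspose_mul_self_re]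
        exact mul_pos hε (sum_normSq_pos hB0)
      set a : ℝ := traceNorm Y with haa
      set t : ℝ := min (1/2 : ℝ) (b / (2*(a+1))) with htdef
      have ht0 : 0 < t := lt_min (by norm_num) (by positivity)
      have ht1 : t ≤ 1/2 := min_le_left _ _
      have ht2 : t ≤ b / (2*(a+1)) := min_le_right _ _
      have htsq : (0:ℝ) ≤ 1 - t^2 := by nlinarith
      set s : ℝ := Real.sqrt (1 - t^2) with hsdef
      have hs0 : 0 ≤ s := Real.sqrt_nonneg _
      have hssq : s^2 = 1 - t^2 := Real.sq_sqrt htsq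
      have hst : s^2 + t^2 ≤ 1 := by rw [hssq]; ring_nf; linarith
      have hcontr := isContr_row (κ₂ := Fin k) hs0 ht0.le hst hC₀ hεc
      have hle := dual_le X hcontr
      have htr : Matrix.fromBlocks ((s:ℂ) • C₀) ((t:ℂ) • ((ε:ℂ) • Bᴴ)) 0
            (0 : Matrix (Fin k) (Fin k) ℂ) * X
          = Matrix.fromBlocks ((s:ℂ) • (C₀ * Y) + (t:ℂ) • (((ε:ℂ) • Bᴴ) * B))
            ((s:ℂ) • (C₀ * A) + (t:ℂ) • (((ε:ℂ) • Bᴴ) * Z)) 0 0 := by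
        rw [hX, Matrix.fromBlocks_multiply]
        simp [Matrix.smul_mul]
      rw [htr, trace_fromBlocks', Matrix.trace_zero, add_zero, Matrix.trace_add,
        Complex.add_re, Matrix.trace_smul, Matrix.trace_smul,
        re_ofReal_smul, re_ofReal_smul, hC₀e, heq] at hle
      have hre2 : (Matrix.trace (((ε:ℂ) • Bᴴ) * B)).re = ε * (Matrix.trace (Bᴴ * B)).re := by
        rw [Matrix.smul_mul, Matrix.trace_smul, re_ofReal_smul]
      rw [hre2] at hle
      have hle' : s * a + t * b ≤ a := by rw [hb]; exact hle
      have hsge : 1 - t^2 ≤ s := by nlinarith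
      have h2 : t * b ≤ a * t^2 := by nlinarith
      have h3 : b ≤ a * t := by nlinarith
      have h4 : a * t ≤ b / 2 := by
        calc a * t ≤ a * (b / (2*(a+1))) := mul_le_mul_of_nonneg_left ht2 ha
          _ = (a * b) / (2*(a+1)) := by ring
          _ ≤ b / 2 := by
            rw [div_le_div_iff₀ (by positivity) (by norm_num)]
            nlinarith
      linarith
    exact ⟨hA, hB, hZ⟩
  · rintro ⟨rfl, rfl, rfl⟩
    refine le_antisymm ?_ hmain
    obtain ⟨C, hC, hCe⟩ := attain X
    rw [← hCe]
    have hle := dual_le Y (isContr_block11 hC)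
    have htr : C * X = Matrix.fromBlocks (C.toBlocks₁₁ * Y) 0 (C.toBlocks₂₁ * Y) 0 := by
      conv_lhs => rw [← Matrix.fromBlocks_toBlocks C]
      rw [hX, Matrix.fromBlocks_multiply]
      simp
    rw [htr, trace_fromBlocks', Matrix.trace_zero, add_zero]
    exact hle
end

section
/- Every finite simple graph G with matching number μ can be edge-decomposed into μ edge-disjoint subgraphs L_1, …, L_μ whose union is G, such that each L_j is isomorphic either to a double star T_{p,q} (an edge uv with p pendant vertices attached to u and q pendant vertices attached to v) or to a graph G_{p,q,1} (a triangle on a base edge uv with one extra common apex, plus p pendant vertices at u and q pendant vertices at v). -/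
open BigOperators

/-- The matching number of `G`. -/
noncomputable def matchingNumber {n : ℕ} (G : SimpleGraph (Fin n)) : ℕ :=
  sSup {k | ∃ M : Finset (Sym2 (Fin n)), ↑M ⊆ G.edgeSet ∧
    (∀ e ∈ M, ∀ f ∈ M, e ≠ f → ∀ v : Fin n, ¬(v ∈ e ∧ v ∈ f)) ∧ M.card = k}

/-- `H` is (up to isolated vertices) a double star `T_{p,q}`: an edge `uv`, all
edges incident to `u` or `v`, and `u, v` have no common neighbour. -/
def IsDoubleStar {n : ℕ} (H : SimpleGraph (Fin n)) : Prop :=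
  ∃ u v : Fin n, H.Adj u v ∧ (∀ e ∈ H.edgeSet, u ∈ e ∨ v ∈ e) ∧
    ¬ ∃ w : Fin n, H.Adj u w ∧ H.Adj v w

/-- `H` is (up to isolated vertices) a graph `G_{p,q,1}`: a triangle `u v w` on the
base edge `uv`, all edges incident to `u` or `v`, and `w` is the unique common
neighbour of `u` and `v`. -/
def IsTriangleStar {n : ℕ} (H : SimpleGraph (Fin n)) : Prop :=
  ∃ u v w : Fin n, H.Adj u v ∧ H.Adj u w ∧ H.Adj v w ∧
    (∀ e ∈ H.edgeSet, u ∈ e ∨ v ∈ e) ∧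
    ∀ x : Fin n, H.Adj u x → H.Adj v x → x = w

open Classical in
/-- edge-assignment rule -/
noncomputable def gfun {n μ : ℕ} (uu vv : Fin μ → Fin n) (m : Fin n → Fin μ)
    (Mt : Fin n → Prop) (d : Fin μ) (x y : Fin n) : Fin μ :=
  if Mt x ∧ Mt y then
    if m x = m y then m x
    else if (x = uu (m x) ∧ y = uu (m y)) ∨ (x = vv (m x) ∧ y = vv (m y))
      then max (m x) (m y) else min (m x) (m y)
  else if Mt x then m x
  else if Mt y then m y
  else d

lemma gfun_symm {n μ : ℕ} (uu vv : Fin μ → Fin n) (m : Fin n → Fin μ)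
    (Mt : Fin n → Prop) (d : Fin μ) (x y : Fin n) :
    gfun uu vv m Mt d x y = gfun uu vv m Mt d y x := by
  classical
  unfold gfun
  by_cases hx : Mt x <;> by_cases hy : Mt y <;>
    simp only [hx, hy, true_and, false_and, and_true, and_false, if_true, if_false,
      if_pos, if_neg, not_false_iff]
  by_cases h : m x = m y
  · rw [if_pos h, if_pos h.symm, h]
  · rw [if_neg h, if_neg (Ne.symm h)]
    have hc : ((x = uu (m x) ∧ y = uu (m y)) ∨ (x = vv (m x) ∧ y = vv (m y))) ↔
        ((y = uu (m y) ∧ x = uu (m x)) ∨ (y = vv (m y) ∧ x = vv (m x))) := by tauto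
    by_cases hcc : (x = uu (m x) ∧ y = uu (m y)) ∨ (x = vv (m x) ∧ y = vv (m y))
    · rw [if_pos hcc, if_pos (hc.mp hcc), max_comm]
    · rw [if_neg hcc, if_neg (fun h' => hcc (hc.mpr h')), min_comm]

lemma aux_decomp {n μ : ℕ} (G : SimpleGraph (Fin n)) (uu vv : Fin μ → Fin n)
    (huv : ∀ j, G.Adj (uu j) (vv j))
    (hdist : ∀ j k x, (x = uu j ∨ x = vv j) → (x = uu k ∨ x = vv k) → j = k)
    (hcover : ∀ x y, G.Adj x y → (∃ j, x = uu j ∨ x = vv j) ∨ (∃ j, y = uu j ∨ y = vv j))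
    (huniq : ∀ j w w', (∀ k, ¬(w = uu k ∨ w = vv k)) → (∀ k, ¬(w' = uu k ∨ w' = vv k)) →
      G.Adj (uu j) w → G.Adj (vv j) w → G.Adj (uu j) w' → G.Adj (vv j) w' → w = w') :
    ∃ L : Fin μ → SimpleGraph (Fin n),
      (∀ j, L j ≤ G) ∧
      (∀ i j, i ≠ j → Disjoint ((L i).edgeSet) ((L j).edgeSet)) ∧
      (⋃ j, (L j).edgeSet) = G.edgeSet ∧
      ∀ j, IsDoubleStar (L j) ∨ IsTriangleStar (L j) := by
  classical
  rcases Nat.eq_zero_or_pos μ with hμ0 | hμpos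
  · -- no matching edges: G must be edgeless
    have hF : ∀ j : Fin μ, False := fun j => absurd j.2 (by omega)
    have hE : G.edgeSet = ∅ := by
      ext e
      simp only [Set.mem_empty_iff_false, iff_false]
      intro he
      induction e using Sym2.inductionOn with
      | _ x y =>
        rcases hcover x y ((SimpleGraph.mem_edgeSet G).mp he) with ⟨j, _⟩ | ⟨j, _⟩ <;>
          exact hF j
    refine ⟨fun _ => ⊥, fun j => bot_le, fun i j _ => by simp, ?_, fun j => (hF j).elim⟩
    simp [hE]
  · haveI : Nonempty (Fin μ) := ⟨⟨0, hμpos⟩⟩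
    obtain ⟨m, hmspec⟩ : ∃ m : Fin n → Fin μ,
        ∀ x, (∃ j, x = uu j ∨ x = vv j) → (x = uu (m x) ∨ x = vv (m x)) := by
      refine ⟨fun x => if h : ∃ j, x = uu j ∨ x = vv j then h.choose else Classical.arbitrary _, ?_⟩
      intro x hx
      dsimp only
      rw [dif_pos hx]
      exact hx.choose_spec
    have hmj : ∀ x j, (x = uu j ∨ x = vv j) → m x = j := by
      intro x j h
      exact hdist (m x) j x (hmspec x ⟨j, h⟩) h
    obtain ⟨a, ha⟩ : ∃ a : Sym2 (Fin n) → Fin μ, ∀ x y,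
        a s(x, y) = gfun uu vv m (fun z => ∃ j, z = uu j ∨ z = vv j) (Classical.arbitrary _) x y :=
      ⟨Sym2.lift ⟨gfun uu vv m (fun z => ∃ j, z = uu j ∨ z = vv j) (Classical.arbitrary _),
        gfun_symm uu vv m _ (Classical.arbitrary _)⟩, fun _ _ => rfl⟩
    have hne : ∀ j, uu j ≠ vv j := fun j => (huv j).ne
    -- evaluation lemmas
    have haE : ∀ j, a s(uu j, vv j) = j := by
      intro j
      rw [ha]
      have h1 : ∃ k, uu j = uu k ∨ uu j = vv k := ⟨j, Or.inl rfl⟩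
      have h2 : ∃ k, vv j = uu k ∨ vv j = vv k := ⟨j, Or.inr rfl⟩
      have e1 : m (uu j) = j := hmj _ _ (Or.inl rfl)
      have e2 : m (vv j) = j := hmj _ _ (Or.inr rfl)
      simp only [gfun]
      rw [if_pos ⟨h1, h2⟩, if_pos (e1.trans e2.symm), e1]
    -- incidence: if a f = j then f touches uu j or vv j
    have hinc : ∀ x y, G.Adj x y → ∀ j, a s(x, y) = j →
        (x = uu j ∨ x = vv j) ∨ (y = uu j ∨ y = vv j) := by
      intro x y hxy j hj
      rw [ha] at hj
      unfold gfun at hj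
      by_cases hx : ∃ k, x = uu k ∨ x = vv k <;> by_cases hy : ∃ k, y = uu k ∨ y = vv k
      · rw [if_pos ⟨hx, hy⟩] at hj
        by_cases h : m x = m y
        · rw [if_pos h] at hj; exact Or.inl (hj ▸ hmspec x hx)
        · rw [if_neg h] at hj
          split_ifs at hj with hc
          · rcases max_choice (m x) (m y) with hmax | hmax <;> rw [hmax] at hj
            · exact Or.inl (hj ▸ hmspec x hx)
            · exact Or.inr (hj ▸ hmspec y hy)
          · rcases min_choice (m x) (m y) with hmin | hmin <;> rw [hmin] at hj
            · exact Or.inl (hj ▸ hmspec x hx)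
            · exact Or.inr (hj ▸ hmspec y hy)
      · rw [if_neg (fun h => hy h.2), if_pos hx] at hj
        exact Or.inl (hj ▸ hmspec x hx)
      · rw [if_neg (fun h => hx h.1), if_neg hx, if_pos hy] at hj
        exact Or.inr (hj ▸ hmspec y hy)
      · rcases hcover x y hxy with h | h <;> [exact absurd h hx; exact absurd h hy]
    -- key: a common neighbour (both edges assigned to j) must be unmatched
    have hkey : ∀ j x, G.Adj (uu j) x → G.Adj (vv j) x →
        a s(uu j, x) = j → a s(vv j, x) = j → ¬ (∃ k, x = uu k ∨ x = vv k) := by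
      intro j x hadj1 hadj2 h1 h2 hx
      have hxj : m x ≠ j := by
        intro h
        rcases hmspec x hx with h' | h' <;> rw [h] at h'
        · exact hadj1.ne h'.symm
        · exact hadj2.ne h'.symm
      have hu : ∃ k, uu j = uu k ∨ uu j = vv k := ⟨j, Or.inl rfl⟩
      have hv : ∃ k, vv j = uu k ∨ vv j = vv k := ⟨j, Or.inr rfl⟩
      have e1 : m (uu j) = j := hmj _ _ (Or.inl rfl)
      have e2 : m (vv j) = j := hmj _ _ (Or.inr rfl)
      rw [ha] at h1 h2
      unfold gfun at h1 h2
      rw [if_pos ⟨hu, hx⟩, e1, if_neg (fun h => hxj h.symm)] at h1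
      rw [if_pos ⟨hv, hx⟩, e2, if_neg (fun h => hxj h.symm)] at h2
      rcases hmspec x hx with hxu | hxv
      · rw [if_pos (Or.inl ⟨rfl, hxu⟩)] at h1
        have hnc : ¬ ((vv j = uu j ∧ x = uu (m x)) ∨ (vv j = vv j ∧ x = vv (m x))) := by
          rintro (⟨h', _⟩ | ⟨_, h'⟩)
          · exact hne j h'.symm
          · exact hne (m x) ((h' ▸ hxu : vv (m x) = uu (m x)).symm)
        rw [if_neg hnc] at h2
        have : j = m x := le_antisymm (h2 ▸ min_le_right j (m x)) (h1 ▸ le_max_right j (m x))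
        exact hxj this.symm
      · have hnc : ¬ ((uu j = uu j ∧ x = uu (m x)) ∨ (uu j = vv j ∧ x = vv (m x))) := by
          rintro (⟨_, h'⟩ | ⟨h', _⟩)
          · exact hne (m x) (h' ▸ hxv : uu (m x) = vv (m x))
          · exact hne j h'
        rw [if_neg hnc] at h1
        rw [if_pos (Or.inr ⟨rfl, hxv⟩)] at h2
        have : j = m x := le_antisymm (h1 ▸ min_le_right j (m x)) (h2 ▸ le_max_right j (m x))
        exact hxj this.symm
    -- the decomposition
    refine ⟨fun j => SimpleGraph.fromEdgeSet {f | f ∈ G.edgeSet ∧ a f = j}, ?_, ?_, ?_, ?_⟩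
    all_goals {
      have hLadj : ∀ j x y, (SimpleGraph.fromEdgeSet {f | f ∈ G.edgeSet ∧ a f = j}).Adj x y ↔
          (G.Adj x y ∧ a s(x, y) = j) := by
        intro j x y
        simp only [SimpleGraph.fromEdgeSet_adj, Set.mem_setOf_eq, SimpleGraph.mem_edgeSet]
        constructor
        · rintro ⟨⟨p1, p2⟩, _⟩; exact ⟨p1, p2⟩
        · rintro ⟨p1, p2⟩; exact ⟨⟨p1, p2⟩, p1.ne⟩
      have hLedge : ∀ j, (SimpleGraph.fromEdgeSet {f | f ∈ G.edgeSet ∧ a f = j}).edgeSet =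
          {f | f ∈ G.edgeSet ∧ a f = j} := by
        intro j
        rw [SimpleGraph.edgeSet_fromEdgeSet]
        ext e
        simp only [Set.mem_diff, Set.mem_setOf_eq, and_iff_left_iff_imp]
        rintro ⟨he, _⟩
        exact G.not_isDiag_of_mem_edgeSet he
      first
      | -- L j ≤ G
        exact fun j x y hxy => ((hLadj j x y).mp hxy).1
      | -- disjointness
        (intro i j hij
         rw [Set.disjoint_left]
         intro e hei hej
         rw [hLedge] at hei hej
         exact hij (hei.2 ▸ hej.2 ▸ rfl))
      | -- union
        (ext e
         simp only [Set.mem_iUnion, hLedge, Set.mem_setOf_eq]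
         exact ⟨fun ⟨j, h, _⟩ => h, fun h => ⟨a e, h, rfl⟩⟩)
      | -- structure
        (intro j
         have hadjL := (hLadj j _ _).mpr ⟨huv j, haE j⟩
         have hincL : ∀ e ∈ (SimpleGraph.fromEdgeSet {f | f ∈ G.edgeSet ∧ a f = j}).edgeSet,
             uu j ∈ e ∨ vv j ∈ e := by
           intro e he
           rw [hLedge] at he
           induction e using Sym2.inductionOn with
           | _ x y =>
             rcases hinc x y ((SimpleGraph.mem_edgeSet G).mp he.1) j he.2 with (h | h) | (h | h) <;>
               simp [Sym2.mem_iff, h]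
         by_cases hw : ∃ w, (SimpleGraph.fromEdgeSet {f | f ∈ G.edgeSet ∧ a f = j}).Adj (uu j) w ∧
             (SimpleGraph.fromEdgeSet {f | f ∈ G.edgeSet ∧ a f = j}).Adj (vv j) w
         · obtain ⟨w, hw1, hw2⟩ := hw
           refine Or.inr ⟨uu j, vv j, w, hadjL, hw1, hw2, hincL, ?_⟩
           intro x hx1 hx2
           obtain ⟨hgx1, hax1⟩ := (hLadj j _ _).mp hx1
           obtain ⟨hgx2, hax2⟩ := (hLadj j _ _).mp hx2
           obtain ⟨hgw1, haw1⟩ := (hLadj j _ _).mp hw1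
           obtain ⟨hgw2, haw2⟩ := (hLadj j _ _).mp hw2
           have humx := hkey j x hgx1 hgx2 hax1 hax2
           have humw := hkey j w hgw1 hgw2 haw1 haw2
           exact huniq j x w (by push_neg at humx ⊢; exact humx)
             (by push_neg at humw ⊢; exact humw) hgx1 hgx2 hgw1 hgw2
         · exact Or.inl ⟨uu j, vv j, hadjL, hincL, hw⟩)
    }

/-- Every graph with matching number `μ` decomposes into `μ` edge-disjoint
subgraphs, each of which is a double star `T_{p,q}` or a triangle star `G_{p,q,1}`. -/
theorem graph_decomposition {n : ℕ} (G : SimpleGraph (Fin n)) :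
    ∃ L : Fin (matchingNumber G) → SimpleGraph (Fin n),
      (∀ j, L j ≤ G) ∧
      (∀ i j, i ≠ j → Disjoint ((L i).edgeSet) ((L j).edgeSet)) ∧
      (⋃ j, (L j).edgeSet) = G.edgeSet ∧
      ∀ j, IsDoubleStar (L j) ∨ IsTriangleStar (L j) := by
  classical
  set S : Set ℕ := {k | ∃ M : Finset (Sym2 (Fin n)), ↑M ⊆ G.edgeSet ∧
    (∀ e ∈ M, ∀ f ∈ M, e ≠ f → ∀ v : Fin n, ¬(v ∈ e ∧ v ∈ f)) ∧ M.card = k} with hS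
  have hμdef : matchingNumber G = sSup S := rfl
  have h0 : (0 : ℕ) ∈ S := ⟨∅, by simp, by simp, rfl⟩
  have hbdd : BddAbove S := by
    refine ⟨Fintype.card (Sym2 (Fin n)), ?_⟩
    rintro k ⟨M, -, -, hc⟩
    rw [← hc, ← Finset.card_univ]
    exact Finset.card_le_univ M
  have hmem : matchingNumber G ∈ S := hμdef ▸ Nat.sSup_mem ⟨0, h0⟩ hbdd
  have hmax : ∀ k ∈ S, k ≤ matchingNumber G := fun k hk => hμdef ▸ le_csSup hbdd hk
  set μ := matchingNumber G with hμ
  obtain ⟨M, hMsub, hMmatch, hMcard⟩ := hmem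
  -- enumerate the matching
  have hEex : ∃ E : Fin μ → Sym2 (Fin n), Function.Injective E ∧ (∀ j, E j ∈ M) ∧
      ∀ e ∈ M, ∃ j, E j = e := by
    refine ⟨fun j => (M.equivFin.symm (Fin.cast hMcard.symm j) : Sym2 (Fin n)), ?_, ?_, ?_⟩
    · intro i j h
      have := M.equivFin.symm.injective (Subtype.ext h)
      simpa [Fin.ext_iff] using congrArg Fin.val this
    · intro j; exact (M.equivFin.symm _).2
    · intro e he
      refine ⟨Fin.cast hMcard (M.equivFin ⟨e, he⟩), ?_⟩
      simp
  obtain ⟨E, hEinj, hEmem, hEsurj⟩ := hEex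
  -- endpoints
  have hrep : ∀ j, ∃ x y, E j = s(x, y) :=
    fun j => Sym2.inductionOn (E j) (fun x y => ⟨x, y, rfl⟩)
  choose uu vv hE using hrep
  have huv : ∀ j, G.Adj (uu j) (vv j) := by
    intro j
    have := hMsub (hEmem j)
    rw [hE j] at this
    exact (SimpleGraph.mem_edgeSet G).mp this
  have hmemE : ∀ j x, (x = uu j ∨ x = vv j) ↔ x ∈ E j := by
    intro j x; rw [hE j, Sym2.mem_iff]
  have hdist : ∀ j k x, (x = uu j ∨ x = vv j) → (x = uu k ∨ x = vv k) → j = k := by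
    intro j k x hj hk
    by_contra hne
    have hEne : E j ≠ E k := fun h => hne (hEinj h)
    exact hMmatch (E j) (hEmem j) (E k) (hEmem k) hEne x
      ⟨(hmemE j x).mp hj, (hmemE k x).mp hk⟩
  -- Matched := fun x => ∃ j, x = uu j ∨ x = vv j
  have hmOfMem : ∀ (x : Fin n) (e : Sym2 (Fin n)), e ∈ M → x ∈ e → ∃ j, x = uu j ∨ x = vv j := by
    intro x e he hx
    obtain ⟨j, rfl⟩ := hEsurj e he
    exact ⟨j, (hmemE j x).mpr hx⟩
  have hcover : ∀ x y, G.Adj x y →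
      (∃ j, x = uu j ∨ x = vv j) ∨ (∃ j, y = uu j ∨ y = vv j) := by
    intro x y hxy
    by_contra hcon
    obtain ⟨hx, hy⟩ := not_or.mp hcon
    have hnm : s(x, y) ∉ M := by
      intro h
      exact hx (hmOfMem x _ h (Sym2.mem_mk_left x y))
    have hprop : (↑(insert s(x, y) M) : Set (Sym2 (Fin n))) ⊆ G.edgeSet ∧
        (∀ e ∈ insert s(x, y) M, ∀ f ∈ insert s(x, y) M, e ≠ f →
          ∀ v : Fin n, ¬(v ∈ e ∧ v ∈ f)) := by
      constructor
      · intro e he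
        rcases Finset.mem_insert.mp he with rfl | he
        · exact (SimpleGraph.mem_edgeSet G).mpr hxy
        · exact hMsub he
      · intro e he f hf hne v hv
        obtain ⟨hv1, hv2⟩ := hv
        rcases Finset.mem_insert.mp he with he' | he
        · rcases Finset.mem_insert.mp hf with hf' | hf
          · exact hne (he'.trans hf'.symm)
          · rw [he'] at hv1
            rcases Sym2.mem_iff.mp hv1 with h | h
            · exact hx (h ▸ hmOfMem v _ hf hv2)
            · exact hy (h ▸ hmOfMem v _ hf hv2)
        · rcases Finset.mem_insert.mp hf with hf' | hf
          · rw [hf'] at hv2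
            rcases Sym2.mem_iff.mp hv2 with h | h
            · exact hx (h ▸ hmOfMem v _ he hv1)
            · exact hy (h ▸ hmOfMem v _ he hv1)
          · exact hMmatch e he f hf hne v ⟨hv1, hv2⟩
    have hcard : (insert s(x, y) M).card = μ + 1 := by
      rw [Finset.card_insert_of_notMem hnm, hMcard]
    have := hmax (μ + 1) ⟨insert s(x, y) M, hprop.1, hprop.2, hcard⟩
    omega
  have huniq : ∀ j w w', (∀ k, ¬(w = uu k ∨ w = vv k)) → (∀ k, ¬(w' = uu k ∨ w' = vv k)) →
      G.Adj (uu j) w → G.Adj (vv j) w → G.Adj (uu j) w' → G.Adj (vv j) w' → w = w' := by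
    intro j w w' hw hw' h1 h2 h3 h4
    by_contra hne
    have hwE : ∀ e ∈ M, w ∉ e := fun e he hmem => hw _ ((hmOfMem w e he hmem).choose_spec)
    have hw'E : ∀ e ∈ M, w' ∉ e := fun e he hmem => hw' _ ((hmOfMem w' e he hmem).choose_spec)
    -- the new matching
    set A : Finset (Sym2 (Fin n)) := M.erase (E j) with hA
    have hAsub : A ⊆ M := Finset.erase_subset _ _
    have hAw : ∀ e ∈ A, w ∉ e := fun e he => hwE e (hAsub he)
    have hAw' : ∀ e ∈ A, w' ∉ e := fun e he => hw'E e (hAsub he)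
    have hnotA2 : s(vv j, w') ∉ A := fun h => hAw' _ h (Sym2.mem_mk_right _ _)
    have hnotA1 : s(uu j, w) ∉ insert s(vv j, w') A := by
      intro h
      rcases Finset.mem_insert.mp h with h | h
      · have : w ∈ s(vv j, w') := h ▸ Sym2.mem_mk_right (uu j) w
        rcases Sym2.mem_iff.mp this with rfl | rfl
        · exact hw j (Or.inr rfl)
        · exact hne rfl
      · exact hAw _ h (Sym2.mem_mk_right _ _)
    set C : Finset (Sym2 (Fin n)) := insert s(uu j, w) (insert s(vv j, w') A) with hC
    have hCcard : C.card = μ + 1 := by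
      rw [hC, Finset.card_insert_of_notMem hnotA1, Finset.card_insert_of_notMem hnotA2,
        hA, Finset.card_erase_of_mem (hEmem j), hMcard]
      have : 0 < μ := j.pos
      omega
    have hCsub : (↑C : Set (Sym2 (Fin n))) ⊆ G.edgeSet := by
      intro e he
      rw [hC] at he
      rcases Finset.mem_insert.mp he with rfl | he
      · exact (SimpleGraph.mem_edgeSet G).mpr h1
      rcases Finset.mem_insert.mp he with rfl | he
      · exact (SimpleGraph.mem_edgeSet G).mpr h4
      · exact hMsub (hAsub he)
    -- helper: vertex of s(uu j, w) is uu j or w, etc.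
    have hEk : ∀ e ∈ A, ∃ k, k ≠ j ∧ e = E k := by
      intro e he
      obtain ⟨hne', heM⟩ := Finset.mem_erase.mp he
      obtain ⟨k, rfl⟩ := hEsurj e heM
      exact ⟨k, fun h => hne' (h ▸ rfl), rfl⟩
    have hd1 : ∀ e ∈ A, ∀ v : Fin n, ¬(v ∈ s(uu j, w) ∧ v ∈ e) := by
      rintro e he v ⟨hv1, hv2⟩
      obtain ⟨k, hkj, rfl⟩ := hEk e he
      rcases Sym2.mem_iff.mp hv1 with h | h
      · exact hkj (hdist k j v ((hmemE k v).mpr hv2) (Or.inl h))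
      · exact hw k ((hmemE k w).mpr (h ▸ hv2))
    have hd2 : ∀ e ∈ A, ∀ v : Fin n, ¬(v ∈ s(vv j, w') ∧ v ∈ e) := by
      rintro e he v ⟨hv1, hv2⟩
      obtain ⟨k, hkj, rfl⟩ := hEk e he
      rcases Sym2.mem_iff.mp hv1 with h | h
      · exact hkj (hdist k j v ((hmemE k v).mpr hv2) (Or.inr h))
      · exact hw' k ((hmemE k w').mpr (h ▸ hv2))
    have hd12 : ∀ v : Fin n, ¬(v ∈ s(uu j, w) ∧ v ∈ s(vv j, w')) := by
      rintro v ⟨hv1, hv2⟩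
      rcases Sym2.mem_iff.mp hv1 with rfl | rfl <;> rcases Sym2.mem_iff.mp hv2 with h | h
      · exact (huv j).ne h
      · exact hw' j (h ▸ Or.inl rfl)
      · exact hw j (h ▸ Or.inr rfl)
      · exact hne h
    have hCmatch : ∀ e ∈ C, ∀ f ∈ C, e ≠ f → ∀ v : Fin n, ¬(v ∈ e ∧ v ∈ f) := by
      intro e he f hf hnef v hv
      rw [hC] at he hf
      rcases Finset.mem_insert.mp he with rfl | he <;> rcases Finset.mem_insert.mp hf with rfl | hf
      · exact hnef rfl
      · rcases Finset.mem_insert.mp hf with rfl | hf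
        · exact hd12 v hv
        · exact hd1 f hf v hv
      · rcases Finset.mem_insert.mp he with rfl | he
        · exact hd12 v ⟨hv.2, hv.1⟩
        · exact hd1 e he v ⟨hv.2, hv.1⟩
      · rcases Finset.mem_insert.mp he with rfl | he <;> rcases Finset.mem_insert.mp hf with rfl | hf
        · exact hnef rfl
        · exact hd2 f hf v hv
        · exact hd2 e he v ⟨hv.2, hv.1⟩
        · exact hMmatch e (hAsub he) f (hAsub hf) hnef v hv
    have := hmax (μ + 1) ⟨C, hCsub, hCmatch, hCcard⟩
    omega
  exact aux_decomp G uu vv huv hdist hcover huniq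
end

section
/- Let Φ = (G, φ) be a complex unit gain graph on a connected bipartite graph G. Then A(Φ) has exactly one positive eigenvalue if and only if Φ is balanced and G is a complete bipartite graph. -/
open Matrix BigOperators

/-- The gain graph is balanced: every cycle has gain `1`. -/
def IsBalanced {n : ℕ} (G : SimpleGraph (Fin n)) (A : Matrix (Fin n) (Fin n) ℂ) : Prop :=
  ∀ (v : Fin n) (c : G.Walk v v), c.IsCycle → walkGain A c = 1

/-- `G` is a complete bipartite graph with (nonempty) parts `s` and `sᶜ`. -/
def IsCompleteBipartite {n : ℕ} (G : SimpleGraph (Fin n)) : Prop :=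
  ∃ s : Set (Fin n), s.Nonempty ∧ sᶜ.Nonempty ∧
    ∀ u v : Fin n, G.Adj u v ↔ (u ∈ s ↔ v ∉ s)

section Auxiliary

open Polynomial

variable {n : ℕ} {G : SimpleGraph (Fin n)} {A : Matrix (Fin n) (Fin n) ℂ}

lemma charpoly_unitary_conj (U : Matrix.unitaryGroup (Fin n) ℂ)
    (M : Matrix (Fin n) (Fin n) ℂ) :
    ((U : Matrix (Fin n) (Fin n) ℂ) * M * star (U : Matrix (Fin n) (Fin n) ℂ)).charpoly
      = M.charpoly := by
  set V : Matrix (Fin n) (Fin n) ℂ := (U : Matrix (Fin n) (Fin n) ℂ) with hV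
  have hUV : V * star V = 1 := Matrix.mem_unitaryGroup_iff.mp U.2
  have hVU : star V * V = 1 := Matrix.mem_unitaryGroup_iff'.mp U.2
  have hmap : (V.map (C : ℂ →+* ℂ[X])) * (star V).map C = 1 := by
    rw [← Matrix.map_mul, hUV]; simp
  have hmap' : ((star V).map (C : ℂ →+* ℂ[X])) * V.map C = 1 := by
    rw [← Matrix.map_mul, hVU]; simp
  have hchar : charmatrix (V * M * star V)
      = V.map C * charmatrix M * (star V).map C := by
    unfold charmatrix
    rw [Matrix.mul_sub, Matrix.sub_mul]
    congr 1
    · have : V.map (C : ℂ →+* ℂ[X]) * scalar (Fin n) X * (star V).map C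
          = scalar (Fin n) X := by
        rw [Matrix.mul_assoc, (scalar_commute (X : ℂ[X]) (Commute.all _)
          ((star V).map C)).eq, ← Matrix.mul_assoc, hmap, Matrix.one_mul]
      exact this.symm
    · simp [RingHom.mapMatrix_apply, Matrix.map_mul]
  unfold Matrix.charpoly
  rw [hchar, det_mul, det_mul, mul_comm, ← mul_assoc, ← det_mul, hmap', det_one, one_mul]

lemma charpoly_diagonal_real (d : Fin n → ℝ) :
    (Matrix.diagonal (fun i => (d i : ℂ))).charpoly
      = ∏ i, (X - C ((d i : ℂ))) := by
  unfold Matrix.charpoly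
  have : charmatrix (Matrix.diagonal (fun i => (d i : ℂ)))
      = Matrix.diagonal (fun i => (X - C ((d i : ℂ)))) := by
    ext i j
    by_cases h : i = j
    · subst h; simp [charmatrix_apply_eq]
    · simp [charmatrix_apply_ne _ _ _ h, Matrix.diagonal_apply_ne _ h]
  rw [this, det_diagonal]

lemma herm_charpoly (hH : A.IsHermitian) :
    A.charpoly = ∏ i, (X - C ((hH.eigenvalues i : ℝ) : ℂ)) := by
  conv_lhs => rw [hH.spectral_theorem]
  have hd : (Matrix.diagonal (RCLike.ofReal ∘ hH.eigenvalues) : Matrix (Fin n) (Fin n) ℂ)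
      = Matrix.diagonal (fun i => ((hH.eigenvalues i : ℝ) : ℂ)) := by
    congr 1
  rw [hd, Unitary.conjStarAlgAut_apply, charpoly_unitary_conj hH.eigenvectorUnitary, charpoly_diagonal_real]

/-- eigenvalue multiset is symmetric under negation, given a signature matrix conjugation -/
lemma eig_multiset_neg (hH : A.IsHermitian) (d : Fin n → ℂ)
    (hd2 : ∀ i, d i * d i = 1) (hdr : ∀ i, (starRingEnd ℂ) (d i) = d i)
    (hDAD : Matrix.diagonal d * A * Matrix.diagonal d = -A) :
    Multiset.map (fun i => -hH.eigenvalues i) Finset.univ.val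
      = Multiset.map hH.eigenvalues Finset.univ.val := by
  have hstar : star (Matrix.diagonal d) = Matrix.diagonal d := by
    rw [Matrix.star_eq_conjTranspose, Matrix.diagonal_conjTranspose,
      show star d = d from funext hdr]
  have hsq : Matrix.diagonal d * Matrix.diagonal d = 1 := by
    rw [Matrix.diagonal_mul_diagonal,
      show (fun i => d i * d i) = fun _ => (1 : ℂ) from funext hd2, Matrix.diagonal_one]
  have hmem : Matrix.diagonal d ∈ Matrix.unitaryGroup (Fin n) ℂ := by
    constructor
    · rw [hstar]; exact hsq
    · rw [hstar]; exact hsq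
  -- charpoly(-A) = charpoly(A)
  have h1 : (-A).charpoly = A.charpoly := by
    rw [← hDAD]
    have := charpoly_unitary_conj ⟨Matrix.diagonal d, hmem⟩ A
    simpa [hstar] using this
  -- -A = V diag(-λ) V*
  have h2 : -A = (hH.eigenvectorUnitary : Matrix (Fin n) (Fin n) ℂ)
      * Matrix.diagonal (fun i => ((-hH.eigenvalues i : ℝ) : ℂ))
      * star (hH.eigenvectorUnitary : Matrix (Fin n) (Fin n) ℂ) := by
    have hneg : Matrix.diagonal (fun i => ((-hH.eigenvalues i : ℝ) : ℂ))
        = -Matrix.diagonal (RCLike.ofReal ∘ hH.eigenvalues) := by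
      ext i j
      by_cases h : i = j
      · subst h; simp [RCLike.ofReal]
      · simp [Matrix.diagonal_apply_ne _ h]
    rw [hneg, Matrix.mul_neg, Matrix.neg_mul]
    conv_lhs => rw [hH.spectral_theorem, Unitary.conjStarAlgAut_apply]
  have h3 : (∏ i, (X - C ((-hH.eigenvalues i : ℝ) : ℂ)))
      = ∏ i, (X - C ((hH.eigenvalues i : ℝ) : ℂ)) := by
    rw [← charpoly_diagonal_real, ← charpoly_unitary_conj hH.eigenvectorUnitary, ← h2, h1,
      herm_charpoly hH]
  -- convert to multiset equality via roots
  have h4 : Multiset.map (fun i => ((-hH.eigenvalues i : ℝ) : ℂ)) Finset.univ.val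
      = Multiset.map (fun i => ((hH.eigenvalues i : ℝ) : ℂ)) Finset.univ.val := by
    have e1 := Polynomial.roots_multiset_prod_X_sub_C
      (Multiset.map (fun i => ((-hH.eigenvalues i : ℝ) : ℂ)) Finset.univ.val)
    have e2 := Polynomial.roots_multiset_prod_X_sub_C
      (Multiset.map (fun i => ((hH.eigenvalues i : ℝ) : ℂ)) Finset.univ.val)
    rw [← e1, ← e2]
    congr 1
    rw [Multiset.map_map, Multiset.map_map]
    simp only [Function.comp]
    rw [show (Multiset.map (fun i => X - C ((-hH.eigenvalues i : ℝ) : ℂ)) Finset.univ.val).prod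
        = ∏ i, (X - C ((-hH.eigenvalues i : ℝ) : ℂ)) from rfl,
      show (Multiset.map (fun i => X - C ((hH.eigenvalues i : ℝ) : ℂ)) Finset.univ.val).prod
        = ∏ i, (X - C ((hH.eigenvalues i : ℝ) : ℂ)) from rfl, h3]
  have hinj : Function.Injective (Complex.ofReal) := Complex.ofReal_injective
  have := Multiset.map_injective hinj
  apply this
  rw [Multiset.map_map, Multiset.map_map]
  exact h4

lemma count_pos_eq_count_neg (hH : A.IsHermitian)
    (hsym : Multiset.map (fun i => -hH.eigenvalues i) Finset.univ.val
      = Multiset.map hH.eigenvalues Finset.univ.val) :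
    (Finset.univ.filter fun i => 0 < hH.eigenvalues i).card
      = (Finset.univ.filter fun i => hH.eigenvalues i < 0).card := by
  classical
  set lam := hH.eigenvalues
  have key : Multiset.card (Multiset.filter (fun x => 0 < x)
        (Multiset.map lam Finset.univ.val))
      = Multiset.card (Multiset.filter (fun x => x < 0)
        (Multiset.map lam Finset.univ.val)) := by
    have h0 : Multiset.map Neg.neg (Multiset.map lam Finset.univ.val)
        = Multiset.map lam Finset.univ.val := by
      rw [Multiset.map_map]
      exact hsym
    calc Multiset.card (Multiset.filter (fun x => 0 < x)
            (Multiset.map lam Finset.univ.val))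
        = Multiset.card (Multiset.filter (fun x => 0 < x)
            (Multiset.map Neg.neg (Multiset.map lam Finset.univ.val))) := by rw [h0]
      _ = Multiset.card (Multiset.map Neg.neg (Multiset.filter
            (fun x => 0 < -x) (Multiset.map lam Finset.univ.val))) := by
          rw [Multiset.filter_map]
          rfl
      _ = Multiset.card (Multiset.filter (fun x => 0 < -x)
            (Multiset.map lam Finset.univ.val)) := by rw [Multiset.card_map]
      _ = Multiset.card (Multiset.filter (fun x => x < 0)
            (Multiset.map lam Finset.univ.val)) := by
          congr 1
          apply Multiset.filter_congr
          intro x _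
          simp [neg_pos]
  rw [Multiset.filter_map, Multiset.card_map, Multiset.filter_map, Multiset.card_map] at key
  simpa [Finset.card, Finset.filter, Function.comp] using key

lemma rank_eq_two_mul_pos (hH : A.IsHermitian)
    (hsym : Multiset.map (fun i => -hH.eigenvalues i) Finset.univ.val
      = Multiset.map hH.eigenvalues Finset.univ.val) :
    A.rank = 2 * (Finset.univ.filter fun i => 0 < hH.eigenvalues i).card := by
  classical
  rw [hH.rank_eq_card_non_zero_eigs, Fintype.card_subtype]
  have hsplit : (Finset.univ.filter fun i => hH.eigenvalues i ≠ 0)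
      = (Finset.univ.filter fun i => 0 < hH.eigenvalues i)
        ∪ (Finset.univ.filter fun i => hH.eigenvalues i < 0) := by
    ext i
    simp only [Finset.mem_filter, Finset.mem_union, Finset.mem_univ, true_and]
    constructor
    · intro h
      rcases lt_or_gt_of_ne h with h' | h'
      · right; exact h'
      · left; exact h'
    · rintro (h | h)
      · exact ne_of_gt h
      · exact ne_of_lt h
  have hdisj : Disjoint (Finset.univ.filter fun i => 0 < hH.eigenvalues i)
      (Finset.univ.filter fun i => hH.eigenvalues i < 0) := by
    rw [Finset.disjoint_filter]
    intro i _ h h'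
    exact absurd h' (not_lt_of_gt h)
  rw [hsplit, Finset.card_union_of_disjoint hdisj, ← count_pos_eq_count_neg hH hsym, two_mul]

lemma herm_eq_zero_of_rank_zero (hH : A.IsHermitian) (h : A.rank = 0) : A = 0 := by
  classical
  rw [hH.rank_eq_card_non_zero_eigs, Fintype.card_eq_zero_iff] at h
  have hz : ∀ i, hH.eigenvalues i = 0 := by
    intro i
    by_contra hne
    exact h.false ⟨i, hne⟩
  have hd : Matrix.diagonal (RCLike.ofReal ∘ hH.eigenvalues) = (0 : Matrix (Fin n) (Fin n) ℂ) := by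
    ext i j
    by_cases hij : i = j
    · subst hij; simp [hz]
    · simp [Matrix.diagonal_apply_ne _ hij]
  rw [hH.spectral_theorem, hd, Unitary.conjStarAlgAut_apply, Matrix.mul_zero, Matrix.zero_mul]

lemma rank_submatrix_le' (f : Fin 4 → Fin n) :
    (A.submatrix f f).rank ≤ A.rank := by
  classical
  have hfac : A.submatrix f f
      = (Matrix.of fun (i : Fin 4) (k : Fin n) => if f i = k then (1 : ℂ) else 0) * A *
        (Matrix.of fun (k : Fin n) (j : Fin 4) => if k = f j then (1 : ℂ) else 0) := by
    ext i j
    simp [Matrix.mul_apply, ite_mul, mul_ite, Finset.sum_ite_eq, Finset.sum_ite_eq']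
  rw [hfac]
  exact le_trans (Matrix.rank_mul_le_left _ _)
    (le_trans (Matrix.rank_mul_le_right _ _) le_rfl)

lemma four_le_rank {x1 x2 y1 y2 : Fin n}
    (hz : A x1 x2 = 0 ∧ A x2 x1 = 0 ∧ A y1 y2 = 0 ∧ A y2 y1 = 0 ∧
      A x1 x1 = 0 ∧ A x2 x2 = 0 ∧ A y1 y1 = 0 ∧ A y2 y2 = 0)
    (hH : A.IsHermitian)
    (hne : A x1 y1 * A x2 y2 - A x1 y2 * A x2 y1 ≠ 0) :
    4 ≤ A.rank := by
  classical
  set f : Fin 4 → Fin n := ![x1, x2, y1, y2] with hf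
  set M := A.submatrix f f with hM
  have hdet : M.det ≠ 0 := by
    have hexp : M.det = (A x1 y1 * A x2 y2 - A x1 y2 * A x2 y1) *
        ((starRingEnd ℂ) (A x1 y1) * (starRingEnd ℂ) (A x2 y2)
          - (starRingEnd ℂ) (A x1 y2) * (starRingEnd ℂ) (A x2 y1)) := by
      have h21 : A y1 x1 = (starRingEnd ℂ) (A x1 y1) := (hH.apply y1 x1).symm
      have h22 : A y1 x2 = (starRingEnd ℂ) (A x2 y1) := (hH.apply y1 x2).symm
      have h23 : A y2 x1 = (starRingEnd ℂ) (A x1 y2) := (hH.apply y2 x1).symm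
      have h24 : A y2 x2 = (starRingEnd ℂ) (A x2 y2) := (hH.apply y2 x2).symm
      obtain ⟨z1, z2, z3, z4, z5, z6, z7, z8⟩ := hz
      have hMeq : M = !![A x1 x1, A x1 x2, A x1 y1, A x1 y2; A x2 x1, A x2 x2, A x2 y1, A x2 y2;
          A y1 x1, A y1 x2, A y1 y1, A y1 y2; A y2 x1, A y2 x2, A y2 y1, A y2 y2] := by
        ext i j; fin_cases i <;> fin_cases j <;> rfl
      rw [hMeq, Matrix.det_succ_row_zero]
      simp [Matrix.det_fin_three, Fin.sum_univ_succ,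
        Matrix.submatrix_apply, z1, z2, z3, z4, z5, z6, z7, z8,
        h21, h22, h23, h24]
      have e1 : (![x1, x2, y1, y2] : Fin 4 → Fin n) (Fin.succAbove 2 2) = y2 := rfl
      have e2 : (![x1, x2, y1, y2] : Fin 4 → Fin n) (Fin.castSucc 2) = y1 := rfl
      have e3 : ∀ a b c d : ℂ, (![a, b, c, d] : Fin 4 → ℂ) (Fin.succAbove 2 2) = d :=
        fun _ _ _ _ => rfl
      have e4 : ∀ a b c d : ℂ, (![a, b, c, d] : Fin 4 → ℂ) (Fin.succAbove 3 2) = c :=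
        fun _ _ _ _ => rfl
      simp only [e3, e4]
      ring
    rw [hexp]
    apply mul_ne_zero hne
    intro hcon
    apply hne
    have := congrArg (starRingEnd ℂ) hcon
    simpa using this
  have hrank4 : M.rank = 4 := by
    have : IsUnit M := by
      rw [Matrix.isUnit_iff_isUnit_det]
      exact isUnit_iff_ne_zero.mpr hdet
    rw [Matrix.rank_of_isUnit M this]
    simp
  rw [← hrank4]
  exact rank_submatrix_le' f

lemma dist_getVert_le (hconn : G.Connected) {u v : Fin n} (w : G.Walk u v) (i : ℕ) :
    G.dist u (w.getVert i) ≤ i := by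
  induction i with
  | zero => simp [SimpleGraph.Walk.getVert_zero]
  | succ i ih =>
    by_cases hi : i < w.length
    · have hadj := w.adj_getVert_succ hi
      calc G.dist u (w.getVert (i + 1))
          ≤ G.dist u (w.getVert i) + G.dist (w.getVert i) (w.getVert (i + 1)) :=
            hconn.dist_triangle
        _ ≤ i + 1 := by
            have : G.dist (w.getVert i) (w.getVert (i + 1)) = 1 :=
              SimpleGraph.dist_eq_one_iff_adj.mpr hadj
            omega
    · push_neg at hi
      rw [w.getVert_of_length_le (by omega : w.length ≤ i + 1)]
      calc G.dist u v = G.dist u (w.getVert i) := by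
            rw [w.getVert_of_length_le hi]
        _ ≤ i := ih
        _ ≤ i + 1 := by omega

lemma dist_getVert_right_le (hconn : G.Connected) {u v : Fin n} (w : G.Walk u v) {i : ℕ}
    (hi : i ≤ w.length) : G.dist (w.getVert i) v ≤ w.length - i := by
  have h1 := dist_getVert_le hconn w.reverse (w.length - i)
  rw [SimpleGraph.Walk.getVert_reverse] at h1
  rw [Nat.sub_sub_self hi] at h1
  rw [SimpleGraph.dist_comm]
  calc G.dist v (w.getVert i) ≤ w.length - i := h1

lemma walk_no_chord (hconn : G.Connected) {u v : Fin n} (w : G.Walk u v)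
    (hlen : w.length = G.dist u v) {i j : ℕ} (hij : i < j) (hjl : j ≤ w.length) :
    w.getVert i ≠ w.getVert j ∧ (i + 1 < j → ¬ G.Adj (w.getVert i) (w.getVert j)) := by
  have h1 : G.dist u (w.getVert i) ≤ i := dist_getVert_le hconn w i
  have h2 : G.dist (w.getVert j) v ≤ w.length - j := dist_getVert_right_le hconn w hjl
  constructor
  · intro he
    have t : G.dist u v ≤ G.dist u (w.getVert j) + G.dist (w.getVert j) v :=
      hconn.dist_triangle
    rw [he] at h1
    omega
  · intro hij2 hadj
    have hd1 : G.dist (w.getVert i) (w.getVert j) = 1 :=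
      SimpleGraph.dist_eq_one_iff_adj.mpr hadj
    have t1 : G.dist u v ≤ G.dist u (w.getVert i) + G.dist (w.getVert i) v :=
      hconn.dist_triangle
    have t2 : G.dist (w.getVert i) v
        ≤ G.dist (w.getVert i) (w.getVert j) + G.dist (w.getVert j) v :=
      hconn.dist_triangle
    omega

@[simp] lemma walkGain_nil {u : Fin n} : walkGain A (SimpleGraph.Walk.nil : G.Walk u u) = 1 := rfl

@[simp] lemma walkGain_cons {u x v : Fin n} (h : G.Adj u x) (p : G.Walk x v) :
    walkGain A (SimpleGraph.Walk.cons h p) = A u x * walkGain A p := by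
  simp [walkGain]

lemma walkGain_eq_potential (g : Fin n → ℂ)
    (hg1 : ∀ i, g i * (starRingEnd ℂ) (g i) = 1)
    (hge : ∀ i j, G.Adj i j → A i j = g i * (starRingEnd ℂ) (g j))
    {u v : Fin n} (w : G.Walk u v) :
    walkGain A w = g u * (starRingEnd ℂ) (g v) := by
  induction w with
  | nil => rw [walkGain_nil, hg1]
  | @cons a b c h' p' ih =>
    rw [walkGain_cons, ih, hge _ _ h']
    calc g a * (starRingEnd ℂ) (g b) * (g b * (starRingEnd ℂ) (g c))
        = g a * (starRingEnd ℂ) (g c) * ((starRingEnd ℂ) (g b) * g b) := by ring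
      _ = g a * (starRingEnd ℂ) (g c) := by rw [mul_comm ((starRingEnd ℂ) (g b)), hg1, mul_one]

/-- the gain of an explicit 4-cycle -/
lemma four_cycle_gain
    (hbal : ∀ (v : Fin n) (c : G.Walk v v), c.IsCycle → walkGain A c = 1)
    {x y x0 y0 : Fin n}
    (hxy : G.Adj x y) (hyx0 : G.Adj y x0) (hx0y0 : G.Adj x0 y0) (hy0x : G.Adj y0 x)
    (hxx0 : x ≠ x0) (hyy0 : y ≠ y0) :
    A x y * A y x0 * A x0 y0 * A y0 x = 1 := by
  classical
  set c : G.Walk x x :=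
    SimpleGraph.Walk.cons hxy (SimpleGraph.Walk.cons hyx0
      (SimpleGraph.Walk.cons hx0y0 (SimpleGraph.Walk.cons hy0x SimpleGraph.Walk.nil))) with hc
  have hxyne : x ≠ y := hxy.ne
  have hx0y0ne : x0 ≠ y0 := hx0y0.ne
  have hxy0 : x ≠ y0 := (hy0x.ne).symm
  have hx0y : x0 ≠ y := (hyx0.ne).symm
  have h1 := hxyne.symm
  have h2 := hx0y0ne.symm
  have h3 := hxy0.symm
  have h4 := hx0y.symm
  have h5 := hxx0.symm
  have h6 := hyy0.symm
  have hcyc : c.IsCycle := by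
    rw [SimpleGraph.Walk.isCycle_def]
    refine ⟨?_, by simp [hc], ?_⟩
    · rw [SimpleGraph.Walk.isTrail_def]
      simp only [hc, SimpleGraph.Walk.edges_cons, SimpleGraph.Walk.edges_nil,
        List.nodup_cons, List.mem_cons, List.mem_singleton, List.not_mem_nil, or_false,
        List.nodup_nil, and_true, Sym2.eq_iff]
      tauto
    · simp only [hc, SimpleGraph.Walk.support_cons, SimpleGraph.Walk.support_nil,
        List.tail_cons, List.nodup_cons, List.mem_cons, List.mem_singleton,
        List.not_mem_nil, or_false, List.nodup_nil, and_true]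
      tauto
  have hgain : walkGain A c = A x y * A y x0 * A x0 y0 * A y0 x := by
    simp [hc]
    ring
  rw [← hgain]
  exact hbal x c hcyc

lemma unit_mul_conj {z : ℂ} (h : ‖z‖ = 1) : z * (starRingEnd ℂ) z = 1 := by
  rw [Complex.mul_conj]
  rw [Complex.normSq_eq_norm_sq, h]
  norm_num

lemma matrix_rank_add_le (B C : Matrix (Fin n) (Fin n) ℂ) :
    (B + C).rank ≤ B.rank + C.rank := by
  classical
  rw [Matrix.rank, Matrix.rank, Matrix.rank, Matrix.mulVecLin_add]
  have hsub : LinearMap.range (B.mulVecLin + C.mulVecLin)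
      ≤ LinearMap.range B.mulVecLin ⊔ LinearMap.range C.mulVecLin := by
    rintro x ⟨y, rfl⟩
    exact Submodule.add_mem_sup (LinearMap.mem_range_self _ y) (LinearMap.mem_range_self _ y)
  calc Module.finrank ℂ (LinearMap.range (B.mulVecLin + C.mulVecLin))
      ≤ Module.finrank ℂ ((LinearMap.range B.mulVecLin) ⊔ (LinearMap.range C.mulVecLin) :
        Submodule ℂ (Fin n → ℂ)) := Submodule.finrank_mono hsub
    _ ≤ _ := Submodule.finrank_add_le_finrank_add_finrank _ _

lemma rank_le_two_of_potential (s : Set (Fin n)) (g : Fin n → ℂ)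
    (hzero : ∀ i j, ¬ G.Adj i j → A i j = 0)
    (hadj : ∀ u v : Fin n, G.Adj u v ↔ (u ∈ s ↔ v ∉ s))
    (hge : ∀ i j, G.Adj i j → A i j = g i * (starRingEnd ℂ) (g j)) :
    A.rank ≤ 2 := by
  classical
  set u' : Fin n → ℂ := fun i => if i ∈ s then g i else 0 with hu'
  set w' : Fin n → ℂ := fun j => if j ∈ s then 0 else (starRingEnd ℂ) (g j) with hw'
  set p' : Fin n → ℂ := fun i => if i ∈ s then 0 else g i with hp'
  set q' : Fin n → ℂ := fun j => if j ∈ s then (starRingEnd ℂ) (g j) else 0 with hq'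
  have hdecomp : A = Matrix.replicateCol (Fin 1) u' * Matrix.replicateRow (Fin 1) w'
      + Matrix.replicateCol (Fin 1) p' * Matrix.replicateRow (Fin 1) q' := by
    ext i j
    have hmul : (Matrix.replicateCol (Fin 1) u' * Matrix.replicateRow (Fin 1) w'
        + Matrix.replicateCol (Fin 1) p' * Matrix.replicateRow (Fin 1) q') i j
        = u' i * w' j + p' i * q' j := by
      simp [Matrix.mul_apply, Matrix.replicateCol, Matrix.replicateRow, Fin.sum_univ_one]
    rw [hmul]
    by_cases hi : i ∈ s <;> by_cases hj : j ∈ s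
    · have hnadj : ¬ G.Adj i j := by
        rw [hadj]
        simp [hi, hj]
      rw [hzero i j hnadj]
      simp [hu', hw', hp', hq', hi, hj]
    · have hadj' : G.Adj i j := by
        rw [hadj]
        simp [hi, hj]
      rw [hge i j hadj']
      simp [hu', hw', hp', hq', hi, hj]
    · have hadj' : G.Adj i j := by
        rw [hadj]
        simp [hi, hj]
      rw [hge i j hadj']
      simp [hu', hw', hp', hq', hi, hj]
      try ring
    · have hnadj : ¬ G.Adj i j := by
        rw [hadj]
        simp [hi, hj]
      rw [hzero i j hnadj]
      simp [hu', hw', hp', hq', hi, hj]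
  rw [hdecomp]
  have h1 : (Matrix.replicateCol (Fin 1) u' * Matrix.replicateRow (Fin 1) w').rank ≤ 1 := by
    calc (Matrix.replicateCol (Fin 1) u' * Matrix.replicateRow (Fin 1) w').rank
        ≤ (Matrix.replicateRow (Fin 1) w').rank := Matrix.rank_mul_le_right _ _
      _ ≤ Fintype.card (Fin 1) := Matrix.rank_le_card_height _
      _ = 1 := by simp
  have h2 : (Matrix.replicateCol (Fin 1) p' * Matrix.replicateRow (Fin 1) q').rank ≤ 1 := by
    calc (Matrix.replicateCol (Fin 1) p' * Matrix.replicateRow (Fin 1) q').rank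
        ≤ (Matrix.replicateRow (Fin 1) q').rank := Matrix.rank_mul_le_right _ _
      _ ≤ Fintype.card (Fin 1) := Matrix.rank_le_card_height _
      _ = 1 := by simp
  calc (Matrix.replicateCol (Fin 1) u' * Matrix.replicateRow (Fin 1) w'
      + Matrix.replicateCol (Fin 1) p' * Matrix.replicateRow (Fin 1) q').rank
      ≤ _ + _ := matrix_rank_add_le _ _
    _ ≤ 1 + 1 := Nat.add_le_add h1 h2
    _ = 2 := rfl

lemma potential_of_minor (hH : A.IsHermitian)
    (habs : ∀ i j, G.Adj i j → ‖A i j‖ = 1)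
    (s : Set (Fin n)) (x0 y0 : Fin n) (hx0 : x0 ∈ s) (hy0 : y0 ∉ s)
    (hadj : ∀ u v : Fin n, G.Adj u v ↔ (u ∈ s ↔ v ∉ s))
    (hminor : ∀ x y, x ∈ s → y ∉ s → A x y * A x0 y0 = A x y0 * A x0 y) :
    ∃ g : Fin n → ℂ, (∀ i, g i * (starRingEnd ℂ) (g i) = 1) ∧
      (∀ i j, G.Adj i j → A i j = g i * (starRingEnd ℂ) (g j)) := by
  classical
  have hadj00 : G.Adj x0 y0 := by rw [hadj]; simp [hx0, hy0]
  have hcross : ∀ x y, x ∈ s → y ∉ s → G.Adj x y := by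
    intro x y hx hy
    rw [hadj]; simp [hx, hy]
  refine ⟨fun i => if i ∈ s then A i y0 * (starRingEnd ℂ) (A x0 y0) else (starRingEnd ℂ) (A x0 i),
    ?_, ?_⟩
  · intro i
    by_cases hi : i ∈ s
    · simp only [hi, if_pos]
      apply unit_mul_conj
      rw [norm_mul, Complex.norm_conj]
      rw [habs _ _ (hcross i y0 hi hy0), habs _ _ hadj00]
      norm_num
    · simp only [hi, if_neg, not_false_iff]
      apply unit_mul_conj
      rw [Complex.norm_conj]
      exact habs _ _ (hcross x0 i hx0 hi)
  · intro i j hij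
    have hcases : (i ∈ s ∧ j ∉ s) ∨ (i ∉ s ∧ j ∈ s) := by
      have := (hadj i j).mp hij
      tauto
    have hkey : ∀ x y, x ∈ s → y ∉ s →
        A x y = (A x y0 * (starRingEnd ℂ) (A x0 y0)) * A x0 y := by
      intro x y hx hy
      have hm := hminor x y hx hy
      have hu : A x0 y0 * (starRingEnd ℂ) (A x0 y0) = 1 := unit_mul_conj (habs _ _ hadj00)
      calc A x y = A x y * (A x0 y0 * (starRingEnd ℂ) (A x0 y0)) := by rw [hu, mul_one]
        _ = (A x y * A x0 y0) * (starRingEnd ℂ) (A x0 y0) := by ring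
        _ = (A x y0 * A x0 y) * (starRingEnd ℂ) (A x0 y0) := by rw [hm]
        _ = (A x y0 * (starRingEnd ℂ) (A x0 y0)) * A x0 y := by ring
    rcases hcases with ⟨hi, hj⟩ | ⟨hi, hj⟩
    · simp only [hi, hj, if_pos, if_neg, not_false_iff]
      rw [hkey i j hi hj]
      rw [RingHomCompTriple.comp_apply]
      simp
    · simp only [hi, hj, if_pos, if_neg, not_false_iff]
      have hji : A j i = (A j y0 * (starRingEnd ℂ) (A x0 y0)) * A x0 i := hkey j i hj hi
      have hsym : A i j = (starRingEnd ℂ) (A j i) := (hH.apply i j).symm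
      rw [hsym, hji]
      simp only [_root_.map_mul, Complex.conj_conj]
      ring


lemma minor_of_rank (hH : A.IsHermitian)
    (hzero : ∀ i j, ¬ G.Adj i j → A i j = 0)
    (s : Set (Fin n)) (x0 y0 : Fin n) (hx0 : x0 ∈ s) (hy0 : y0 ∉ s)
    (hadjIff : ∀ u v : Fin n, G.Adj u v ↔ (u ∈ s ↔ v ∉ s))
    (hrk : A.rank ≤ 2) :
    ∀ x y, x ∈ s → y ∉ s → A x y * A x0 y0 = A x y0 * A x0 y := by
  intro x y hx hy
  by_cases hxx0 : x = x0
  · subst hxx0; ring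
  by_cases hyy0 : y = y0
  · subst hyy0; ring
  by_contra hne
  have hz : A x x0 = 0 ∧ A x0 x = 0 ∧ A y y0 = 0 ∧ A y0 y = 0 ∧
      A x x = 0 ∧ A x0 x0 = 0 ∧ A y y = 0 ∧ A y0 y0 = 0 := by
    refine ⟨?_, ?_, ?_, ?_, ?_, ?_, ?_, ?_⟩ <;> apply hzero <;> rw [hadjIff] <;>
      simp [hx, hy, hx0, hy0]
  have h4 := four_le_rank (x1 := x) (x2 := x0) (y1 := y) (y2 := y0) hz hH
    (sub_ne_zero_of_ne hne)
  omega

lemma minor_of_balance (hH : A.IsHermitian)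
    (habs : ∀ i j, G.Adj i j → ‖A i j‖ = 1)
    (hbal : ∀ (v : Fin n) (c : G.Walk v v), c.IsCycle → walkGain A c = 1)
    (s : Set (Fin n)) (x0 y0 : Fin n) (hx0 : x0 ∈ s) (hy0 : y0 ∉ s)
    (hadjIff : ∀ u v : Fin n, G.Adj u v ↔ (u ∈ s ↔ v ∉ s)) :
    ∀ x y, x ∈ s → y ∉ s → A x y * A x0 y0 = A x y0 * A x0 y := by
  intro x y hx hy
  by_cases hxx0 : x = x0
  · subst hxx0; ring
  by_cases hyy0 : y = y0
  · subst hyy0; ring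
  have hcross : ∀ a b : Fin n, a ∈ s → b ∉ s → G.Adj a b := by
    intro a b ha hb
    rw [hadjIff]; simp [ha, hb]
  have hxy : G.Adj x y := hcross x y hx hy
  have hyx0 : G.Adj y x0 := (hcross x0 y hx0 hy).symm
  have hx0y0 : G.Adj x0 y0 := hcross x0 y0 hx0 hy0
  have hy0x : G.Adj y0 x := (hcross x y0 hx hy0).symm
  have hgain := four_cycle_gain hbal hxy hyx0 hx0y0 hy0x hxx0 hyy0
  have e1 : A y x0 = (starRingEnd ℂ) (A x0 y) := (hH.apply y x0).symm
  have e2 : A y0 x = (starRingEnd ℂ) (A x y0) := (hH.apply y0 x).symm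
  rw [e1, e2] at hgain
  have u1 : A x0 y * (starRingEnd ℂ) (A x0 y) = 1 :=
    unit_mul_conj (habs _ _ (hcross x0 y hx0 hy))
  have u2 : A x y0 * (starRingEnd ℂ) (A x y0) = 1 :=
    unit_mul_conj (habs _ _ (hcross x y0 hx hy0))
  linear_combination (A x0 y * A x y0) * hgain
    - (A x y * A x0 y0 * A x y0 * (starRingEnd ℂ) (A x y0)) * u1
    - (A x y * A x0 y0) * u2

lemma adj_of_color_ne (hconn : G.Connected) (hH : A.IsHermitian)
    (habs : ∀ i j, G.Adj i j → ‖A i j‖ = 1)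
    (hzero : ∀ i j, ¬ G.Adj i j → A i j = 0)
    (C : G.Coloring (Fin 2)) (hrk : A.rank ≤ 2) {u v : Fin n}
    (hne : C u ≠ C v) : G.Adj u v := by
  by_contra hnadj
  have huv : u ≠ v := fun h => hne (by rw [h])
  have hreach : G.Reachable u v := hconn.preconnected u v
  have hd0 : G.dist u v ≠ 0 := (hconn.pos_dist_of_ne huv).ne'
  have hd1 : G.dist u v ≠ 1 := fun h => hnadj (SimpleGraph.dist_eq_one_iff_adj.mp h)
  obtain ⟨w, hw⟩ := hreach.exists_walk_length_eq_dist
  have hd2 : G.dist u v ≠ 2 := by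
    intro h2
    have hlen : w.length = 2 := by rw [hw, h2]
    have ha1 : G.Adj (w.getVert 0) (w.getVert 1) := w.adj_getVert_succ (by omega)
    have ha2 : G.Adj (w.getVert 1) (w.getVert 2) := w.adj_getVert_succ (by omega)
    have e0 : w.getVert 0 = u := w.getVert_zero
    have e2 : w.getVert 2 = v := by rw [← hlen]; exact w.getVert_length
    have f1 : C (w.getVert 0) ≠ C (w.getVert 1) := C.valid ha1
    have f2 : C (w.getVert 1) ≠ C (w.getVert 2) := C.valid ha2
    rw [e0] at f1
    rw [e2] at f2
    have htrans : ∀ x y z : Fin 2, x ≠ y → y ≠ z → x = z := by decide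
    exact hne (htrans _ _ _ f1 f2)
  have hd3 : 3 ≤ w.length := by rw [hw]; omega
  have h01 : G.Adj (w.getVert 0) (w.getVert 1) := w.adj_getVert_succ (by omega)
  have h23 : G.Adj (w.getVert 2) (w.getVert 3) := w.adj_getVert_succ (by omega)
  obtain ⟨ne02, hcd02⟩ := walk_no_chord hconn w hw (by omega : (0:ℕ) < 2) (by omega)
  obtain ⟨ne13, hcd13⟩ := walk_no_chord hconn w hw (by omega : (1:ℕ) < 3) (by omega)
  obtain ⟨ne03, hcd03⟩ := walk_no_chord hconn w hw (by omega : (0:ℕ) < 3) (by omega)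
  have na02 := hcd02 (by omega)
  have na13 := hcd13 (by omega)
  have na03 := hcd03 (by omega)
  have hz : A (w.getVert 0) (w.getVert 2) = 0 ∧ A (w.getVert 2) (w.getVert 0) = 0 ∧
      A (w.getVert 1) (w.getVert 3) = 0 ∧ A (w.getVert 3) (w.getVert 1) = 0 ∧
      A (w.getVert 0) (w.getVert 0) = 0 ∧ A (w.getVert 2) (w.getVert 2) = 0 ∧
      A (w.getVert 1) (w.getVert 1) = 0 ∧ A (w.getVert 3) (w.getVert 3) = 0 :=
    ⟨hzero _ _ na02, hzero _ _ fun h => na02 h.symm,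
     hzero _ _ na13, hzero _ _ fun h => na13 h.symm,
     hzero _ _ (G.irrefl), hzero _ _ (G.irrefl), hzero _ _ (G.irrefl), hzero _ _ (G.irrefl)⟩
  have hA01 : A (w.getVert 0) (w.getVert 1) ≠ 0 := by
    intro h0
    have := habs _ _ h01
    rw [h0] at this
    simp at this
  have hA23 : A (w.getVert 2) (w.getVert 3) ≠ 0 := by
    intro h0
    have := habs _ _ h23
    rw [h0] at this
    simp at this
  have hne4 : A (w.getVert 0) (w.getVert 1) * A (w.getVert 2) (w.getVert 3)
      - A (w.getVert 0) (w.getVert 3) * A (w.getVert 2) (w.getVert 1) ≠ 0 := by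
    rw [hzero _ _ na03, zero_mul, sub_zero]
    exact mul_ne_zero hA01 hA23
  have h4 := four_le_rank (x1 := w.getVert 0) (x2 := w.getVert 2)
    (y1 := w.getVert 1) (y2 := w.getVert 3) hz hH hne4
  omega

end Auxiliary

/-- A gain graph on a connected bipartite graph has exactly one positive
eigenvalue iff it is balanced and the underlying graph is complete bipartite. -/
theorem one_positive_eigenvalue_iff {n : ℕ} (G : SimpleGraph (Fin n))
    (hconn : G.Connected) (hbip : G.Colorable 2)
    (A : Matrix (Fin n) (Fin n) ℂ) (hA : IsGainMatrix G A) :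
    (Finset.univ.filter fun i => 0 < hA.1.eigenvalues i).card = 1 ↔
      IsBalanced G A ∧ IsCompleteBipartite G := by
  classical
  have hH : A.IsHermitian := hA.1
  have habs : ∀ i j, G.Adj i j → ‖A i j‖ = 1 := hA.2.1
  have hzero : ∀ i j, ¬ G.Adj i j → A i j = 0 := hA.2.2
  -- the 2-coloring
  obtain ⟨C⟩ := hbip
  -- the signature matrix
  set d : Fin n → ℂ := fun i => if C i = 0 then 1 else -1 with hd
  have hd2 : ∀ i, d i * d i = 1 := by
    intro i
    by_cases h : C i = 0 <;> simp [hd, h]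
  have hdr : ∀ i, (starRingEnd ℂ) (d i) = d i := by
    intro i
    by_cases h : C i = 0 <;> simp [hd, h]
  have hDAD : Matrix.diagonal d * A * Matrix.diagonal d = -A := by
    ext i j
    have happ : (Matrix.diagonal d * A * Matrix.diagonal d) i j = d i * A i j * d j := by
      simp [Matrix.mul_apply, Matrix.diagonal_apply, ite_mul, mul_ite,
        Finset.sum_ite_eq, Finset.sum_ite_eq']
    rw [happ]
    by_cases hij : G.Adj i j
    · have hcne : C i ≠ C j := C.valid hij
      have hdd : d i * d j = -1 := by
        have hfact : ∀ x y : Fin 2, x ≠ y →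
            ((if x = 0 then (1:ℂ) else -1) * (if y = 0 then (1:ℂ) else -1) = -1) := by
          intro x y hxy
          fin_cases x <;> fin_cases y <;> simp_all
        exact hfact _ _ hcne
      calc d i * A i j * d j = (d i * d j) * A i j := by ring
        _ = -A i j := by rw [hdd]; ring
        _ = (-A) i j := rfl
    · rw [hzero i j hij]
      simp [hzero i j hij]
  have hsym := eig_multiset_neg hA.1 d hd2 hdr hDAD
  have hrank2mul := rank_eq_two_mul_pos hA.1 hsym
  have fin2iff : ∀ x y z : Fin 2, x ≠ y → (x = z ↔ ¬ y = z) := by decide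
  constructor
  · -- exactly one positive eigenvalue → balanced and complete bipartite
    intro hcard
    have hrk : A.rank = 2 := by omega
    have hAne : A ≠ 0 := by
      intro h0
      rw [h0, Matrix.rank_zero] at hrk
      omega
    -- find an edge
    have hedge : ∃ a b, G.Adj a b := by
      by_contra hno
      push_neg at hno
      apply hAne
      ext i j
      exact hzero i j (hno i j)
    obtain ⟨a, b, hab⟩ := hedge
    set s : Set (Fin n) := {i | C i = C a} with hs
    have hmem : ∀ i, i ∈ s ↔ C i = C a := fun i => Iff.rfl
    have hadjIff : ∀ u v : Fin n, G.Adj u v ↔ (u ∈ s ↔ v ∉ s) := by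
      intro u v
      constructor
      · intro huv
        have hne := C.valid huv
        rw [hmem, hmem]
        exact (fin2iff _ _ _ hne)
      · intro hiff
        apply adj_of_color_ne hconn hH habs hzero C (le_of_eq hrk)
        intro hceq
        rw [hmem, hmem, hceq] at hiff
        tauto
    have has : a ∈ s := rfl
    have hbs : b ∉ s := by
      rw [hmem]
      exact fun h => (C.valid hab) h.symm
    have hCB : IsCompleteBipartite G := ⟨s, ⟨a, has⟩, ⟨b, hbs⟩, hadjIff⟩
    have hminor := minor_of_rank hH hzero s a b has hbs hadjIff (le_of_eq hrk)
    obtain ⟨g, hg1, hge⟩ := potential_of_minor hH habs s a b has hbs hadjIff hminor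
    refine ⟨?_, hCB⟩
    intro v c hc
    rw [walkGain_eq_potential g hg1 hge]
    exact hg1 v
  · -- balanced and complete bipartite → exactly one positive eigenvalue
    rintro ⟨hbal, s, ⟨a, has⟩, ⟨b, hbs⟩, hadjIff⟩
    have hminor := minor_of_balance hH habs hbal s a b has hbs hadjIff
    obtain ⟨g, hg1, hge⟩ := potential_of_minor hH habs s a b has hbs hadjIff hminor
    have hrk : A.rank ≤ 2 := rank_le_two_of_potential s g hzero hadjIff hge
    have hab : G.Adj a b := (hadjIff a b).mpr (iff_of_true has hbs)
    have hAne : A ≠ 0 := by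
      intro h0
      have := habs a b hab
      rw [h0] at this
      simp at this
    have hrk0 : A.rank ≠ 0 := by
      intro h0
      exact hAne (herm_eq_zero_of_rank_zero hA.1 h0)
    omega
end
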